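/- arXiv:1509.05957 — 5 statements merged into one kernel-verified Lean document; each statement's English description precedes it below -/
import Mathlib

section
/- In a graph group G(A,I), for irreducible traces s, t ∈ IRR(A^{±1},I) there exist unique factorizations s = up and t = p^{-1}v in the trace monoid M(A^{±1},I) such that uv ∈ IRR(A^{±1},I); consequently uv is the irreducible normal form of st. -/
/-- The commutation relation on words generated by an independence relation. -/
def traceRel (A : Type) (I : A → A → Prop) : FreeMonoid A → FreeMonoid A → Prop :=
  fun x y => ∃ a b, I a b ∧ x = FreeMonoid.of a * FreeMonoid.of b ∧ y = FreeMonoid.of b * FreeMonoid.of a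

/-- The trace congruence ≡_I. -/
def traceCon (A : Type) (I : A → A → Prop) : Con (FreeMonoid A) := conGen (traceRel A I)

/-- The trace monoid M(A,I). -/
abbrev Trace (A : Type) (I : A → A → Prop) := (traceCon A I).Quotient

/-- The trace represented by a word. -/
def trc (A : Type) (I : A → A → Prop) (w : FreeMonoid A) : Trace A I := (traceCon A I).mk' w

/-- s I t: every letter of s is independent of every letter of t. -/
def TraceIndep (A : Type) (I : A → A → Prop) (s t : Trace A I) : Prop :=
  ∀ w w' : FreeMonoid A, s = trc A I w → t = trc A I w' →
    ∀ a ∈ w.toList, ∀ b ∈ w'.toList, I a b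

/-- A trace is connected if it has no nontrivial factorization into independent factors. -/
def TraceConnected (A : Type) (I : A → A → Prop) (t : Trace A I) : Prop :=
  ∀ u v : Trace A I, t = u * v → TraceIndep A I u v → u = 1 ∨ v = 1

/-- The set of prefixes of a trace. -/
def tracePrefixes (A : Type) (I : A → A → Prop) (t : Trace A I) : Set (Trace A I) :=
  {p | ∃ q, t = p * q}

/-- The independence relation extended to letters and their formal inverses:
`Sum.inl a` is the generator a, `Sum.inr a` its inverse a⁻¹. -/
def extI (A : Type) (I : A → A → Prop) : A ⊕ A → A ⊕ A → Prop :=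
  fun x y => I (Sum.elim id id x) (Sum.elim id id y)

/-- Traces over the alphabet A^{±1}. -/
abbrev GTrace (A : Type) (I : A → A → Prop) := Trace (A ⊕ A) (extI A I)

/-- The congruence on words over A^{±1} defining the graph group G(A,I):
commutations of independent letters and free cancellations a a⁻¹ = 1. -/
def ggCon (A : Type) (I : A → A → Prop) : Con (FreeMonoid (A ⊕ A)) :=
  conGen (fun x y => traceRel (A ⊕ A) (extI A I) x y ∨
    ∃ a : A ⊕ A, x = FreeMonoid.of a * FreeMonoid.of (Sum.swap a) ∧ y = 1)

/-- An irreducible trace: one containing no factor a a⁻¹. -/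
def IsIRR (A : Type) (I : A → A → Prop) (t : GTrace A I) : Prop :=
  ¬ ∃ (u v : GTrace A I) (a : A ⊕ A),
      t = u * trc (A ⊕ A) (extI A I)
            (FreeMonoid.of a * FreeMonoid.of (Sum.swap a)) * v

/-- The formal inverse of a word over A^{±1}. -/
def wordInv (A : Type) (w : FreeMonoid (A ⊕ A)) : FreeMonoid (A ⊕ A) :=
  FreeMonoid.ofList ((FreeMonoid.toList w).reverse.map Sum.swap)

namespace IrrNF

variable {S : Type} {J : S → S → Prop}

def T (J : S → S → Prop) (w : List S) : Trace S J := trc S J (FreeMonoid.ofList w)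

def Step (J : S → S → Prop) (w w' : List S) : Prop :=
  ∃ (l₁ l₂ : List S) (a b : S), J a b ∧ w = l₁ ++ a :: b :: l₂ ∧ w' = l₁ ++ b :: a :: l₂

abbrev Chain (J : S → S → Prop) : List S → List S → Prop := Relation.ReflTransGen (Step J)

theorem step_symm (hJ : ∀ a b, J a b → J b a) {w w'} (h : Step J w w') : Step J w' w := by
  obtain ⟨l₁, l₂, a, b, hab, rfl, rfl⟩ := h
  exact ⟨l₁, l₂, b, a, hJ _ _ hab, rfl, rfl⟩

theorem chain_symm (hJ : ∀ a b, J a b → J b a) {w w'} (h : Chain J w w') : Chain J w' w := by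
  induction h with
  | refl => exact .refl
  | tail _ hstep ih => exact .trans (.single (step_symm hJ hstep)) ih

theorem step_append_right {w w'} (h : Step J w w') (v : List S) : Step J (w ++ v) (w' ++ v) := by
  obtain ⟨l₁, l₂, a, b, hab, rfl, rfl⟩ := h
  exact ⟨l₁, l₂ ++ v, a, b, hab, by simp, by simp⟩

theorem step_append_left {w w'} (h : Step J w w') (v : List S) : Step J (v ++ w) (v ++ w') := by
  obtain ⟨l₁, l₂, a, b, hab, rfl, rfl⟩ := h
  exact ⟨v ++ l₁, l₂, a, b, hab, by simp, by simp⟩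

theorem chain_append_right {w w'} (h : Chain J w w') (v : List S) : Chain J (w ++ v) (w' ++ v) :=
  Relation.ReflTransGen.lift (· ++ v) (fun _ _ h => step_append_right h v) _ _ h

theorem chain_append_left {w w'} (h : Chain J w w') (v : List S) : Chain J (v ++ w) (v ++ w') :=
  Relation.ReflTransGen.lift (v ++ ·) (fun _ _ h => step_append_left h v) _ _ h

theorem chain_append {w₁ w₁' w₂ w₂' : List S} (h₁ : Chain J w₁ w₁') (h₂ : Chain J w₂ w₂') :
    Chain J (w₁ ++ w₂) (w₁' ++ w₂') :=
  .trans (chain_append_right h₁ w₂) (chain_append_left h₂ w₁')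

def chainCon (J : S → S → Prop) (hJ : ∀ a b, J a b → J b a) : Con (FreeMonoid S) where
  r x y := Chain J x.toList y.toList
  iseqv := ⟨fun _ => .refl, chain_symm hJ, .trans⟩
  mul' h₁ h₂ := chain_append h₁ h₂

theorem step_traceCon {w w'} (h : Step J w w') :
    traceCon S J (FreeMonoid.ofList w) (FreeMonoid.ofList w') := by
  obtain ⟨l₁, l₂, a, b, hab, rfl, rfl⟩ := h
  have hmid : traceCon S J (FreeMonoid.of a * FreeMonoid.of b) (FreeMonoid.of b * FreeMonoid.of a) :=
    ConGen.Rel.of _ _ ⟨a, b, hab, rfl, rfl⟩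
  have : traceCon S J (FreeMonoid.ofList l₁ * ((FreeMonoid.of a * FreeMonoid.of b) * FreeMonoid.ofList l₂))
      (FreeMonoid.ofList l₁ * ((FreeMonoid.of b * FreeMonoid.of a) * FreeMonoid.ofList l₂)) :=
    (traceCon S J).mul ((traceCon S J).refl _) ((traceCon S J).mul hmid ((traceCon S J).refl _))
  simpa [FreeMonoid.ofList_append, FreeMonoid.ofList_cons, mul_assoc] using this

theorem T_eq_iff (hJ : ∀ a b, J a b → J b a) {w w' : List S} :
    T J w = T J w' ↔ Chain J w w' := by
  have key : traceCon S J (FreeMonoid.ofList w) (FreeMonoid.ofList w') ↔ Chain J w w' := by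
    constructor
    · intro h
      have hle : traceCon S J ≤ chainCon J hJ := by
        apply Con.conGen_le.mpr
        rintro x y ⟨a, b, hab, rfl, rfl⟩
        exact .single ⟨[], [], a, b, hab, rfl, rfl⟩
      exact hle h
    · intro h
      induction h with
      | refl => exact (traceCon S J).refl _
      | tail _ hstep ih => exact (traceCon S J).trans ih (step_traceCon hstep)
  rw [← key]
  constructor
  · intro h
    exact Con.eq _ |>.mp (by simpa [T, trc, Con.coe_mk'] using h)
  · intro h
    simpa [T, trc, Con.coe_mk'] using (Con.eq _).mpr h

theorem T_eq_traceCon {w w' : List S} (h : T J w = T J w') :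
    traceCon S J (FreeMonoid.ofList w) (FreeMonoid.ofList w') :=
  (Con.eq _).mp (by simpa [T, trc, Con.coe_mk'] using h)

variable (hJ : ∀ a b, J a b → J b a)
include hJ

omit hJ in
theorem T_append (u v : List S) : T J (u ++ v) = T J u * T J v := by
  simp [T, FreeMonoid.ofList_append, trc, map_mul]

omit hJ in
theorem step_length {w w' : List S} (h : Step J w w') : w.length = w'.length := by
  obtain ⟨l₁, l₂, a, b, _, rfl, rfl⟩ := h; simp

theorem T_length {w w' : List S} (h : T J w = T J w') : w.length = w'.length := by
  have hc := (T_eq_iff hJ).mp h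
  clear h
  induction hc with
  | refl => rfl
  | tail _ hstep ih => exact ih.trans (step_length hstep)

/-- move a letter across a block it commutes with -/
theorem T_comm_block {a : S} : ∀ {w : List S}, (∀ b ∈ w, J a b) → T J (w ++ [a]) = T J (a :: w) := by
  intro w
  induction w with
  | nil => intro _; rfl
  | cons b w ih =>
    intro h
    rw [T_eq_iff hJ]
    have h1 : Chain J (b :: (w ++ [a])) (b :: a :: w) := by
      have := (T_eq_iff hJ).mp (ih (fun c hc => h c (List.mem_cons_of_mem _ hc)))
      exact chain_append_left this [b]
    have h2 : Chain J (b :: a :: w) (a :: b :: w) :=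
      .single ⟨[], w, b, a, hJ _ _ (h b (by simp)), rfl, rfl⟩
    exact .trans (by simpa using h1) h2

theorem step_reverse {w w' : List S} (h : Step J w w') : Step J w.reverse w'.reverse := by
  obtain ⟨l₁, l₂, a, b, hab, rfl, rfl⟩ := h
  refine ⟨l₂.reverse, l₁.reverse, b, a, hJ _ _ hab, by simp, by simp⟩

theorem T_reverse {w w' : List S} (h : T J w = T J w') : T J w.reverse = T J w'.reverse := by
  rw [T_eq_iff hJ] at h ⊢
  exact Relation.ReflTransGen.lift List.reverse (fun _ _ hs => step_reverse hJ hs) _ _ h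

omit hJ in
/-- splitting `x ++ y = l₁ ++ c :: d :: l₂` -/
theorem append_split₃ {x y l₁ l₂ : List S} {c d : S} (h : x ++ y = l₁ ++ c :: d :: l₂) :
    (∃ m, x = l₁ ++ c :: d :: m ∧ l₂ = m ++ y) ∨
    (x = l₁ ++ [c] ∧ y = d :: l₂) ∨
    (∃ m, l₁ = x ++ m ∧ y = m ++ c :: d :: l₂) := by
  rcases List.append_eq_append_iff.mp h with ⟨m, hm1, hm2⟩ | ⟨m, hm1, hm2⟩
  · exact .inr (.inr ⟨m, hm1, hm2⟩)
  · match m, hm2 with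
    | [], hm2 => exact .inr (.inr ⟨[], by simpa using hm1.symm, by simpa using hm2.symm⟩)
    | [e], hm2 =>
      obtain ⟨rfl, rfl⟩ : e = c ∧ y = d :: l₂ := by simpa using hm2.symm
      exact .inr (.inl ⟨hm1, rfl⟩)
    | e :: f :: m', hm2 =>
      have h3 : e = c ∧ f = d ∧ m' ++ y = l₂ := by simpa using hm2.symm
      obtain ⟨rfl, rfl, h3⟩ := h3
      exact .inl ⟨m', hm1, h3.symm⟩

omit hJ in
/-- splitting `W₁ ++ a :: W₂ = l₁ ++ c :: d :: l₂` -/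
theorem append_split₁₂ {W₁ W₂ l₁ l₂ : List S} {a c d : S}
    (h : W₁ ++ a :: W₂ = l₁ ++ c :: d :: l₂) :
    (W₁ = l₁ ∧ a = c ∧ W₂ = d :: l₂) ∨
    (∃ m, W₂ = m ++ c :: d :: l₂ ∧ l₁ = W₁ ++ a :: m) ∨
    (W₁ = l₁ ++ [c] ∧ a = d ∧ l₂ = W₂) ∨
    (∃ m, W₁ = l₁ ++ c :: d :: m ∧ l₂ = m ++ a :: W₂) := by
  rcases append_split₃ (x := W₁) (y := a :: W₂) h with ⟨m, hm1, hm2⟩ | ⟨h1, h2⟩ | ⟨m, hm1, hm2⟩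
  · exact .inr (.inr (.inr ⟨m, hm1, hm2⟩))
  · obtain ⟨rfl, rfl⟩ : a = d ∧ W₂ = l₂ := by simpa using h2
    exact .inr (.inr (.inl ⟨h1, rfl, rfl⟩))
  · match m, hm2 with
    | [], hm2 =>
      obtain ⟨rfl, rfl⟩ : a = c ∧ W₂ = d :: l₂ := by simpa using hm2
      exact .inl ⟨by simpa using hm1.symm, rfl, rfl⟩
    | e :: m', hm2 =>
      obtain ⟨rfl, rfl⟩ : a = e ∧ W₂ = m' ++ c :: d :: l₂ := by simpa using hm2
      exact .inr (.inl ⟨m', rfl, by simpa using hm1⟩)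

/-- extraction of the first letter -/
theorem extract_left {W u : List S} {a : S} (h : T J W = T J (a :: u)) :
    ∃ W₁ W₂, W = W₁ ++ a :: W₂ ∧ (∀ b ∈ W₁, J b a) ∧ T J (W₁ ++ W₂) = T J u := by
  have hch : Chain J (a :: u) W := chain_symm hJ ((T_eq_iff hJ).mp h)
  clear h
  induction hch with
  | refl => exact ⟨[], u, rfl, by simp, rfl⟩
  | @tail w' W _ hstep ih =>
    obtain ⟨W₁, W₂, rfl, hind, hT⟩ := ih
    obtain ⟨l₁, l₂, c, d, hcd, heq, rfl⟩ := hstep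
    rcases append_split₁₂ heq with ⟨rfl, rfl, rfl⟩ | ⟨m, rfl, rfl⟩ | ⟨rfl, rfl, rfl⟩ | ⟨m, rfl, rfl⟩
    · -- a = c at the swap position: a moves right
      refine ⟨W₁ ++ [d], l₂, by simp, ?_, by simpa using hT⟩
      intro b hb
      rcases List.mem_append.mp hb with hb | hb
      · exact hind b hb
      · simp at hb; subst hb; exact hJ _ _ hcd
    · -- swap inside W₂
      refine ⟨W₁, m ++ d :: c :: l₂, by simp, hind, ?_⟩
      rw [T_eq_iff hJ] at hT ⊢
      exact .trans (chain_symm hJ (.single ⟨W₁ ++ m, l₂, c, d, hcd, by simp, by simp⟩)) hT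
    · -- a = d: a moves left past c
      refine ⟨l₁, c :: l₂, by simp, ?_, by simpa using hT⟩
      intro b hb; exact hind b (List.mem_append.mpr (.inl hb))
    · -- swap inside W₁
      refine ⟨l₁ ++ d :: c :: m, W₂, by simp, ?_, ?_⟩
      · intro b hb
        apply hind
        simp only [List.mem_append, List.mem_cons] at hb ⊢
        tauto
      · rw [T_eq_iff hJ] at hT ⊢
        exact .trans (chain_symm hJ (.single ⟨l₁, m ++ W₂, c, d, hcd, by simp, by simp⟩)) hT



theorem T_congr {x y u v : List S} (h : T J u = T J v) : T J (x ++ u ++ y) = T J (x ++ v ++ y) := by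
  rw [T_eq_iff hJ] at h ⊢
  exact chain_append (chain_append (.refl) h) (.refl)

theorem extract_right {W u : List S} {a : S} (h : T J W = T J (u ++ [a])) :
    ∃ W₁ W₂, W = W₁ ++ a :: W₂ ∧ (∀ b ∈ W₂, J b a) ∧ T J (W₁ ++ W₂) = T J u := by
  have h' : T J W.reverse = T J (a :: u.reverse) := by
    have := T_reverse hJ h; simpa using this
  obtain ⟨V₁, V₂, hW, hind, hT⟩ := extract_left hJ h'
  have hW' : W = V₂.reverse ++ a :: V₁.reverse := by
    have := congrArg List.reverse hW; simpa using this
  refine ⟨V₂.reverse, V₁.reverse, hW', ?_, ?_⟩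
  · intro b hb; exact hind b (by simpa using hb)
  · have := T_reverse hJ hT; simpa using this

theorem T_cancel_cons (hJi : ∀ a, ¬ J a a) {a : S} {u v : List S}
    (h : T J (a :: u) = T J (a :: v)) : T J u = T J v := by
  obtain ⟨W₁, W₂, hW, hind, hT⟩ := extract_left hJ h.symm
  match W₁, hW with
  | [], hW =>
    obtain rfl : v = W₂ := by simpa using hW
    exact hT.symm
  | b :: W₁', hW =>
    obtain ⟨rfl, -⟩ : a = b ∧ v = W₁' ++ a :: W₂ := by simpa using hW
    exact absurd (hind a (by simp)) (hJi a)

theorem T_cancel_concat (hJi : ∀ a, ¬ J a a) {a : S} {u v : List S}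
    (h : T J (u ++ [a]) = T J (v ++ [a])) : T J u = T J v := by
  have h' : T J (a :: u.reverse) = T J (a :: v.reverse) := by
    have := T_reverse hJ h; simpa using this
  have := T_reverse hJ (T_cancel_cons hJ hJi h')
  simpa using this

theorem T_cancel_left (hJi : ∀ a, ¬ J a a) {w u v : List S}
    (h : T J (w ++ u) = T J (w ++ v)) : T J u = T J v := by
  induction w with
  | nil => simpa using h
  | cons a w ih => exact ih (T_cancel_cons hJ hJi (by simpa using h))

theorem T_cancel_right (hJi : ∀ a, ¬ J a a) {w u v : List S}
    (h : T J (u ++ w) = T J (v ++ w)) : T J u = T J v := by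
  have h' : T J (w.reverse ++ u.reverse) = T J (w.reverse ++ v.reverse) := by
    have := T_reverse hJ h; simpa using this
  have := T_reverse hJ (T_cancel_left hJ hJi h')
  simpa using this

omit hJ in
theorem append_split₁ {u v W₁ W₂ : List S} {a : S} (h : u ++ v = W₁ ++ a :: W₂) :
    (∃ m, u = W₁ ++ [a] ++ m ∧ W₂ = m ++ v) ∨ (∃ m, W₁ = u ++ m ∧ v = m ++ [a] ++ W₂) := by
  rcases List.append_eq_append_iff.mp h with ⟨m, hm1, hm2⟩ | ⟨m, hm1, hm2⟩
  · exact .inr ⟨m, hm1, by simpa using hm2⟩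
  · match m, hm2 with
    | [], hm2 => exact .inr ⟨[], by simpa using hm1.symm, by simpa using hm2.symm⟩
    | e :: m', hm2 =>
      obtain ⟨rfl, rfl⟩ : e = a ∧ m' ++ v = W₂ := by simpa using hm2.symm
      exact .inl ⟨m', by simpa using hm1, rfl⟩

theorem T_swap₂ {a b : S} (hab : J a b) (x y : List S) :
    T J (x ++ (a :: b :: y)) = T J (x ++ (b :: a :: y)) :=
  (T_eq_iff hJ).mpr (.single ⟨x, y, a, b, hab, rfl, rfl⟩)

theorem comm_TB {d : S} {blk : List S} (hd : ∀ e ∈ blk, J d e) :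
    Commute (T J [d]) (T J blk) := by
  show T J [d] * T J blk = T J blk * T J [d]
  rw [← T_append, ← T_append]
  exact (T_comm_block hJ hd).symm

theorem comm_letters {a b : S} (hab : J a b) : Commute (T J [a]) (T J [b]) :=
  comm_TB hJ (blk := [b]) (fun e he => by simp at he; subst he; exact hab)

theorem levi {u v x y : List S} (h : T J (u ++ v) = T J (x ++ y)) :
    ∃ z₁ z₂ z₃ z₄ : List S,
      T J u = T J (z₁ ++ z₂) ∧ T J v = T J (z₃ ++ z₄) ∧
      T J x = T J (z₁ ++ z₃) ∧ T J y = T J (z₂ ++ z₄) ∧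
      ∀ e ∈ z₂, ∀ f ∈ z₃, J e f := by
  have hch : Chain J (u ++ v) (x ++ y) := (T_eq_iff hJ).mp h
  clear h
  set W := x ++ y with hW
  clear_value W
  induction hch generalizing x y with
  | refl =>
    rcases List.append_eq_append_iff.mp hW.symm with ⟨m, hm1, hm2⟩ | ⟨m, hm1, hm2⟩
    · exact ⟨x, m, [], v, by rw [hm1], by simp, by simp, by rw [hm2], by simp⟩
    · exact ⟨u, [], m, y, by simp, by rw [hm2], by rw [hm1], by simp, by simp⟩
  | @tail W' Wf hch hstep ih =>
    obtain ⟨l₁, l₂, a, b, hab, rfl, hWf⟩ := hstep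
    rcases append_split₃ (l₁ := l₁) (l₂ := l₂) (c := b) (d := a)
        (by rw [← hW, hWf]) with ⟨m, hxm, hlm⟩ | ⟨hx, hy⟩ | ⟨m, hlm, hym⟩
    · -- swap inside x
      obtain ⟨z₁, z₂, z₃, z₄, hu, hv, hx', hy', hzi⟩ :=
        ih (x := l₁ ++ a :: b :: m) (y := y) (by rw [hlm]; simp)
      refine ⟨z₁, z₂, z₃, z₄, hu, hv, ?_, hy', hzi⟩
      rw [hxm, ← hx']
      exact (T_swap₂ hJ hab l₁ m).symm
    · -- boundary
      obtain ⟨z₁, z₂, z₃, z₄, hu, hv, hx', hy', hzi⟩ :=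
        ih (x := l₁ ++ [a]) (y := b :: l₂) (by simp)
      obtain ⟨P₁, P₂, hPeq, hPind, hTP⟩ := extract_right hJ hx'.symm
      obtain ⟨Q₁, Q₂, hQeq, hQind, hTQ⟩ := extract_left hJ hy'.symm
      subst hx hy
      have hAB : Commute (T J [a]) (T J [b]) := comm_letters hJ hab
      have hya : T J (a :: l₂) = T J ([a] ++ l₂) := rfl
      rcases append_split₁ hPeq with ⟨m, hz₁, hP₂⟩ | ⟨m, hP₁, hz₃⟩ <;>
        rcases append_split₁ hQeq with ⟨m₂, hz₂, hQ₂⟩ | ⟨m₂, hQ₁, hz₄⟩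
      · -- a ∈ z₁, b ∈ z₂
        subst hz₁ hP₂ hz₂ hQ₂
        have hAM : Commute (T J [a]) (T J m) :=
          comm_TB hJ (fun e he => hJ _ _ (hPind e (by simp [he])))
        have hBQ : Commute (T J [b]) (T J Q₁) :=
          comm_TB hJ (fun e he => hJ _ _ (hQind e he))
        have hBZ₃ : Commute (T J [b]) (T J z₃) :=
          comm_TB hJ (fun e he => hzi b (by simp) e he)
        refine ⟨P₁ ++ m ++ [b], [a] ++ Q₁ ++ m₂, z₃, z₄, ?_, hv, ?_, ?_, ?_⟩
        · rw [hu]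
          simp only [T_append, List.append_assoc, mul_assoc]
          rw [hAM.left_comm, ← hBQ.left_comm, hAB.left_comm]
        · rw [T_append, ← hTP]
          simp only [T_append, List.append_assoc, mul_assoc]
          rw [hBZ₃.eq]
        · rw [hya, T_append, ← hTQ]
          simp only [T_append, List.append_assoc, mul_assoc]
        · intro e he f hf
          rcases List.mem_append.mp he with he | he
          · rcases List.mem_append.mp he with he | he
            · obtain rfl : e = a := by simpa using he
              exact hJ _ _ (hPind f (by simp [hf]))
            · exact hzi e (by simp [he]) f hf
          · exact hzi e (by simp [he]) f hf
      · -- a ∈ z₁, b ∈ z₄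
        subst hz₁ hP₂ hQ₁ hz₄
        have hAM : Commute (T J [a]) (T J m) :=
          comm_TB hJ (fun e he => hJ _ _ (hPind e (by simp [he])))
        have hBM₂ : Commute (T J [b]) (T J m₂) :=
          comm_TB hJ (fun e he => hJ _ _ (hQind e (by simp [he])))
        refine ⟨P₁ ++ m, [a] ++ z₂, z₃ ++ [b], m₂ ++ Q₂, ?_, ?_, ?_, ?_, ?_⟩
        · rw [hu]
          simp only [T_append, List.append_assoc, mul_assoc]
          rw [hAM.left_comm]
        · rw [hv]
          simp only [T_append, List.append_assoc, mul_assoc]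
          rw [← hBM₂.left_comm]
        · rw [T_append, ← hTP]
          simp only [T_append, List.append_assoc, mul_assoc]
        · rw [hya, T_append, ← hTQ]
          simp only [T_append, List.append_assoc, mul_assoc]
        · intro e he f hf
          have hf' : f ∈ z₃ ∨ f = b := by
            rcases List.mem_append.mp hf with hf | hf
            · exact .inl hf
            · exact .inr (by simpa using hf)
          have he' : e = a ∨ e ∈ z₂ := by
            rcases List.mem_append.mp he with he | he
            · exact .inl (by simpa using he)
            · exact .inr he
          rcases he' with rfl | he'
          · rcases hf' with hf' | rfl
            · exact hJ _ _ (hPind f (by simp [hf']))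
            · exact hab
          · rcases hf' with hf' | rfl
            · exact hzi e he' f hf'
            · exact hQind e (by simp [he'])
      · -- a ∈ z₃, b ∈ z₂
        subst hP₁ hz₃ hz₂ hQ₂
        have hBQ : Commute (T J [b]) (T J Q₁) :=
          comm_TB hJ (fun e he => hJ _ _ (hQind e he))
        have hAP₂ : Commute (T J [a]) (T J P₂) :=
          comm_TB hJ (fun e he => hJ _ _ (hPind e he))
        have hBM : Commute (T J [b]) (T J m) :=
          comm_TB hJ (fun e he => hzi b (by simp) e (by simp [he]))
        have hBP₂ : Commute (T J [b]) (T J P₂) :=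
          comm_TB hJ (fun e he => hzi b (by simp) e (by simp [he]))
        have hAQ : Commute (T J [a]) (T J Q₁) :=
          comm_TB hJ (fun e he => hJ _ _ (hzi e (by simp [he]) a (by simp)))
        have hAM₂ : Commute (T J [a]) (T J m₂) :=
          comm_TB hJ (fun e he => hJ _ _ (hzi e (by simp [he]) a (by simp)))
        refine ⟨z₁ ++ [b], Q₁ ++ m₂, m ++ P₂, [a] ++ z₄, ?_, ?_, ?_, ?_, ?_⟩
        · rw [hu]
          simp only [T_append, List.append_assoc, mul_assoc]
          rw [← hBQ.left_comm]
        · rw [hv]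
          simp only [T_append, List.append_assoc, mul_assoc]
          rw [hAP₂.left_comm]
        · rw [T_append, ← hTP]
          simp only [T_append, List.append_assoc, mul_assoc]
          rw [← hBP₂.eq, ← hBM.left_comm]
        · rw [hya, T_append, ← hTQ]
          simp only [T_append, List.append_assoc, mul_assoc]
          rw [hAQ.left_comm, hAM₂.left_comm]
        · intro e he f hf
          simp only [List.mem_append] at he hf
          have he' : e ∈ Q₁ ++ [b] ++ m₂ := by
            rcases he with he | he <;> simp [he]
          have hf' : f ∈ m ++ [a] ++ P₂ := by
            rcases hf with hf | hf <;> simp [hf]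
          exact hzi e he' f hf'
      · -- a ∈ z₃, b ∈ z₄
        subst hP₁ hz₃ hQ₁ hz₄
        have hAP₂ : Commute (T J [a]) (T J P₂) :=
          comm_TB hJ (fun e he => hJ _ _ (hPind e he))
        have hBM₂ : Commute (T J [b]) (T J m₂) :=
          comm_TB hJ (fun e he => hJ _ _ (hQind e (by simp [he])))
        have hAZ₂ : Commute (T J [a]) (T J z₂) :=
          comm_TB hJ (fun e he => hJ _ _ (hzi e he a (by simp)))
        refine ⟨z₁, z₂, m ++ P₂ ++ [b], [a] ++ m₂ ++ Q₂, hu, ?_, ?_, ?_, ?_⟩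
        · rw [hv]
          simp only [T_append, List.append_assoc, mul_assoc]
          rw [hAP₂.left_comm, ← hBM₂.left_comm, hAB.left_comm]
        · rw [T_append, ← hTP]
          simp only [T_append, List.append_assoc, mul_assoc]
        · rw [hya, T_append, ← hTQ]
          simp only [T_append, List.append_assoc, mul_assoc]
          rw [hAZ₂.left_comm]
        · intro e he f hf
          rcases List.mem_append.mp hf with hf | hf
          · rcases List.mem_append.mp hf with hf | hf
            · exact hzi e he f (by simp [hf])
            · exact hzi e he f (by simp [hf])
          · obtain rfl : f = b := by simpa using hf
            exact hQind e (by simp [he])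
    · -- swap inside y
      obtain ⟨z₁, z₂, z₃, z₄, hu, hv, hx', hy', hzi⟩ :=
        ih (x := x) (y := m ++ a :: b :: l₂) (by rw [hlm]; simp)
      refine ⟨z₁, z₂, z₃, z₄, hu, hv, hx', ?_, hzi⟩
      rw [hym, ← hy']
      exact (T_swap₂ hJ hab m l₂).symm

section GG
omit hJ

variable {A : Type} {I : A → A → Prop}

/-- formal inverse of a word, as a list -/
def LInv (l : List (A ⊕ A)) : List (A ⊕ A) := (l.reverse.map Sum.swap)

omit hJ in
theorem LInv_append (u v : List (A ⊕ A)) : LInv (u ++ v) = LInv v ++ LInv u := by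
  simp [LInv]

omit hJ in
theorem LInv_LInv (l : List (A ⊕ A)) : LInv (LInv l) = l := by
  simp [LInv, List.map_reverse, Function.comp_def]

omit hJ in
theorem mem_LInv {e : A ⊕ A} {l : List (A ⊕ A)} : e ∈ LInv l ↔ Sum.swap e ∈ l := by
  constructor
  · intro h
    simp only [LInv, List.mem_map, List.mem_reverse] at h
    obtain ⟨x, hx, rfl⟩ := h
    simpa using hx
  · intro h
    simp only [LInv, List.mem_map, List.mem_reverse]
    exact ⟨Sum.swap e, h, by simp⟩

omit hJ in
theorem J_swap_left {x y : A ⊕ A} : extI A I (Sum.swap x) y ↔ extI A I x y := by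
  cases x <;> rfl

omit hJ in
theorem J_swap_right {x y : A ⊕ A} : extI A I x (Sum.swap y) ↔ extI A I x y := by
  cases y <;> cases x <;> rfl

omit hJ in
theorem hJ2 (hsym : ∀ a b, I a b → I b a) :
    ∀ x y : A ⊕ A, extI A I x y → extI A I y x := fun _ _ h => hsym _ _ h

omit hJ in
theorem hJi2 (hirr : ∀ a, ¬ I a a) : ∀ x : A ⊕ A, ¬ extI A I x x := fun _ h => hirr _ h

omit hJ in
theorem hJis2 (hirr : ∀ a, ¬ I a a) : ∀ x : A ⊕ A, ¬ extI A I x (Sum.swap x) :=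
  fun x h => hirr _ (J_swap_right.mp h)

/-- irreducibility, at the level of words -/
def Irr (I : A → A → Prop) (w : List (A ⊕ A)) : Prop :=
  ¬ ∃ (x y : List (A ⊕ A)) (c : A ⊕ A),
      T (extI A I) w = T (extI A I) (x ++ [c, Sum.swap c] ++ y)

omit hJ in
theorem Irr_congr {w w' : List (A ⊕ A)} (h : T (extI A I) w = T (extI A I) w')
    (hw : Irr I w) : Irr I w' := by
  intro ⟨x, y, c, hc⟩
  exact hw ⟨x, y, c, h.trans hc⟩

omit hJ in
theorem isIRR_iff (w : List (A ⊕ A)) :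
    IsIRR A I (T (extI A I) w) ↔ Irr I w := by
  constructor
  · intro h ⟨x, y, c, hc⟩
    refine h ⟨T (extI A I) x, T (extI A I) y, c, ?_⟩
    rw [hc, T_append, T_append]
    rfl
  · intro h ⟨u, v, c, hc⟩
    obtain ⟨wu, rfl⟩ := Con.mk'_surjective u
    obtain ⟨wv, rfl⟩ := Con.mk'_surjective v
    refine h ⟨FreeMonoid.toList wu, FreeMonoid.toList wv, c, ?_⟩
    rw [hc, T_append, T_append]
    rfl

omit hJ in
theorem Irr_factor_left (hsym : ∀ a b, I a b → I b a) {x y : List (A ⊕ A)}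
    (h : Irr I (x ++ y)) : Irr I x := by
  intro ⟨m, m', c, hc⟩
  refine h ⟨m, m' ++ y, c, ?_⟩
  have := T_congr (hJ2 hsym) (x := []) (y := y) hc
  simpa using this

omit hJ in
theorem Irr_factor_right (hsym : ∀ a b, I a b → I b a) {x y : List (A ⊕ A)}
    (h : Irr I (x ++ y)) : Irr I y := by
  intro ⟨m, m', c, hc⟩
  refine h ⟨x ++ m, m', c, ?_⟩
  have := T_congr (hJ2 hsym) (x := x) (y := ([] : List (A ⊕ A))) hc
  simpa using this

omit hJ in
theorem step_LInv (hsym : ∀ a b, I a b → I b a) {u v : List (A ⊕ A)}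
    (h : Step (extI A I) u v) : Step (extI A I) (LInv u) (LInv v) := by
  obtain ⟨l₁, l₂, a, b, hab, rfl, rfl⟩ := h
  refine ⟨LInv l₂, LInv l₁, Sum.swap b, Sum.swap a, ?_, by simp [LInv], by simp [LInv]⟩
  rw [J_swap_left, J_swap_right]
  exact hJ2 hsym _ _ hab

omit hJ in
theorem T_LInv_congr (hsym : ∀ a b, I a b → I b a) {u v : List (A ⊕ A)}
    (h : T (extI A I) u = T (extI A I) v) :
    T (extI A I) (LInv u) = T (extI A I) (LInv v) := by
  rw [T_eq_iff (hJ2 hsym)] at h ⊢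
  exact Relation.ReflTransGen.lift LInv (fun _ _ hs => step_LInv hsym hs) _ _ h

omit hJ in
theorem keyA (hsym : ∀ a b, I a b → I b a) (hirr : ∀ a, ¬ I a a)
    {ws wt : List (A ⊕ A)} (hs : Irr I ws) (ht : Irr I wt)
    (hred : ¬ Irr I (ws ++ wt)) :
    ∃ (a : A ⊕ A) (ws' wt' : List (A ⊕ A)),
      T (extI A I) ws = T (extI A I) (ws' ++ [a]) ∧
      T (extI A I) wt = T (extI A I) ([Sum.swap a] ++ wt') := by
  have hJ' := hJ2 (I := I) hsym
  obtain ⟨x, y, c, hc⟩ := not_not.mp hred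
  have hc' : T (extI A I) (ws ++ wt) = T (extI A I) ((x ++ [c]) ++ ([Sum.swap c] ++ y)) := by
    simpa [List.append_assoc] using hc
  obtain ⟨z₁, z₂, z₃, z₄, hu, hv, hx', hy', hzi⟩ := levi hJ' hc'
  obtain ⟨P₁, P₂, hPeq, hPind, hTP⟩ := extract_right hJ' hx'.symm
  obtain ⟨Q₁, Q₂, hQeq, hQind, hTQ⟩ := extract_left hJ' hy'.symm
  rcases append_split₁ hPeq with ⟨m, hz₁, hP₂⟩ | ⟨m, hP₁, hz₃⟩ <;>
    rcases append_split₁ hQeq with ⟨m₂, hz₂, hQ₂⟩ | ⟨m₂, hQ₁, hz₄⟩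
  · -- c ∈ z₁ (in s), swap c ∈ z₂ (in s) : contradicts Irr s
    subst hz₁ hP₂ hz₂ hQ₂
    exfalso
    have hCM : Commute (T (extI A I) [c]) (T (extI A I) m) :=
      comm_TB hJ' (fun e he => hJ' _ _ (hPind e (by simp [he])))
    have hCQ : Commute (T (extI A I) [c]) (T (extI A I) Q₁) :=
      comm_TB hJ' (fun e he => hJ' _ _ (J_swap_right.mp (hQind e he)))
    refine hs ⟨P₁ ++ m ++ Q₁, m₂, c, ?_⟩
    have hl : (P₁ ++ m ++ Q₁) ++ [c, Sum.swap c] ++ m₂ =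
        P₁ ++ (m ++ (Q₁ ++ ([c] ++ ([Sum.swap c] ++ m₂)))) := by simp
    rw [hl, hu]
    simp only [T_append, List.append_assoc, mul_assoc]
    rw [hCM.left_comm, hCQ.left_comm]
  · -- c ∈ z₁ (in s), swap c ∈ z₄ (in t) : the good case
    subst hz₁ hP₂ hQ₁ hz₄
    have hCM : Commute (T (extI A I) [c]) (T (extI A I) m) :=
      comm_TB hJ' (fun e he => hJ' _ _ (hPind e (by simp [he])))
    have hCZ₂ : Commute (T (extI A I) [c]) (T (extI A I) z₂) :=
      comm_TB hJ' (fun e he => hJ' _ _ (J_swap_right.mp (hQind e (by simp [he]))))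
    have hC'M₂ : Commute (T (extI A I) [Sum.swap c]) (T (extI A I) m₂) :=
      comm_TB hJ' (fun e he => hJ' _ _ (hQind e (by simp [he])))
    have hC'Z₃ : Commute (T (extI A I) [Sum.swap c]) (T (extI A I) z₃) :=
      comm_TB hJ' (fun e he => hJ' _ _ (J_swap_right.mpr (hPind e (by simp [he]))))
    refine ⟨c, P₁ ++ m ++ z₂, z₃ ++ m₂ ++ Q₂, ?_, ?_⟩
    · rw [hu]
      simp only [T_append, List.append_assoc, mul_assoc]
      rw [hCM.left_comm, hCZ₂.eq]
    · rw [hv]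
      simp only [T_append, List.append_assoc, mul_assoc]
      rw [← hC'M₂.left_comm, ← hC'Z₃.left_comm]
  · -- c ∈ z₃, swap c ∈ z₂ : impossible by independence
    subst hP₁ hz₃ hz₂ hQ₂
    exact absurd (J_swap_left.mp (hzi (Sum.swap c) (by simp) c (by simp))) (hJi2 hirr c)
  · -- c ∈ z₃ (in t), swap c ∈ z₄ (in t) : contradicts Irr t
    subst hP₁ hz₃ hQ₁ hz₄
    exfalso
    have hCP₂ : Commute (T (extI A I) [c]) (T (extI A I) P₂) :=
      comm_TB hJ' (fun e he => hJ' _ _ (hPind e he))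
    have hCM₂ : Commute (T (extI A I) [c]) (T (extI A I) m₂) :=
      comm_TB hJ' (fun e he => hJ' _ _ (J_swap_right.mp (hQind e (by simp [he]))))
    refine ht ⟨m ++ P₂ ++ m₂, Q₂, c, ?_⟩
    have hl : (m ++ P₂ ++ m₂) ++ [c, Sum.swap c] ++ Q₂ =
        m ++ (P₂ ++ (m₂ ++ ([c] ++ ([Sum.swap c] ++ Q₂)))) := by simp
    rw [hl, hv]
    simp only [T_append, List.append_assoc, mul_assoc]
    rw [hCP₂.left_comm, hCM₂.left_comm]

omit hJ in
theorem LInv_nil : LInv ([] : List (A ⊕ A)) = [] := rfl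

omit hJ in
theorem exists_fact (hsym : ∀ a b, I a b → I b a) (hirr : ∀ a, ¬ I a a) :
    ∀ (n : ℕ) (ws wt : List (A ⊕ A)), ws.length = n → Irr I ws → Irr I wt →
    ∃ wu wp wv : List (A ⊕ A),
      T (extI A I) ws = T (extI A I) (wu ++ wp) ∧
      T (extI A I) wt = T (extI A I) (LInv wp ++ wv) ∧ Irr I (wu ++ wv) := by
  intro n
  induction n using Nat.strong_induction_on with
  | _ n ih =>
    intro ws wt hlen hs ht
    by_cases hred : Irr I (ws ++ wt)
    · exact ⟨ws, [], wt, by simp, by simp [LInv_nil], hred⟩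
    · obtain ⟨a, ws', wt', hs', ht'⟩ := keyA hsym hirr hs ht hred
      have hlen' : ws'.length < n := by
        have := T_length (hJ2 hsym) hs'
        simp at this
        omega
      have hI1 : Irr I (ws' ++ [a]) := Irr_congr hs' hs
      have hs'' : Irr I ws' := Irr_factor_left hsym hI1
      have hI2 : Irr I ([Sum.swap a] ++ wt') := Irr_congr ht' ht
      have ht'' : Irr I wt' := Irr_factor_right hsym hI2
      obtain ⟨wu, wp, wv, h1, h2, h3⟩ := ih ws'.length hlen' ws' wt' rfl hs'' ht''
      refine ⟨wu, wp ++ [a], wv, ?_, ?_, h3⟩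
      · rw [hs', T_append, h1]
        simp only [T_append, List.append_assoc, mul_assoc]
      · have hL : LInv (wp ++ [a]) = [Sum.swap a] ++ LInv wp := by simp [LInv]
        rw [ht', hL, T_append, h2]
        simp only [T_append, List.append_assoc, mul_assoc]

omit hJ in
theorem uniq (hsym : ∀ a b, I a b → I b a) (hirr : ∀ a, ¬ I a a) :
    ∀ (n : ℕ) (ws wt wu₁ wp₁ wv₁ wu₂ wp₂ wv₂ : List (A ⊕ A)), wp₂.length = n →
    Irr I ws → Irr I wt →
    T (extI A I) ws = T (extI A I) (wu₁ ++ wp₁) →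
    T (extI A I) wt = T (extI A I) (LInv wp₁ ++ wv₁) → Irr I (wu₁ ++ wv₁) →
    T (extI A I) ws = T (extI A I) (wu₂ ++ wp₂) →
    T (extI A I) wt = T (extI A I) (LInv wp₂ ++ wv₂) → Irr I (wu₂ ++ wv₂) →
    T (extI A I) wu₁ = T (extI A I) wu₂ ∧ T (extI A I) wp₁ = T (extI A I) wp₂ ∧
      T (extI A I) wv₁ = T (extI A I) wv₂ := by
  have hJ' := hJ2 (I := I) hsym
  have hJi' := hJi2 (I := I) hirr
  intro n
  induction n using Nat.strong_induction_on with
  | _ n ih =>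
  intro ws wt wu₁ wp₁ wv₁ wu₂ wp₂ wv₂ hlen hs ht h1s h1t h1i h2s h2t h2i
  rcases List.eq_nil_or_concat wp₂ with rfl | ⟨p₂', a, rfl⟩
  · -- base case : wp₂ = []
    rcases List.eq_nil_or_concat wp₁ with rfl | ⟨q, b, rfl⟩
    · refine ⟨?_, rfl, ?_⟩
      · exact (by simpa using h1s.symm : T (extI A I) wu₁ = _).trans (by simpa using h2s)
      · exact (by simpa [LInv_nil] using h1t.symm : T (extI A I) wv₁ = _).trans
          (by simpa [LInv_nil] using h2t)
    · exfalso
      simp only [List.concat_eq_append] at h1s h1t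
      refine h2i ⟨wu₁ ++ q, LInv q ++ wv₁, b, ?_⟩
      have k1 : T (extI A I) wv₂ = T (extI A I) wt := by simpa [LInv_nil] using h2t.symm
      have k2 : T (extI A I) wu₂ = T (extI A I) ws := by simpa using h2s.symm
      have k3 : LInv (q ++ [b]) = [Sum.swap b] ++ LInv q := by simp [LInv]
      calc T (extI A I) (wu₂ ++ wv₂) = T (extI A I) ws * T (extI A I) wt := by
            rw [T_append, k2, k1]
        _ = T (extI A I) (wu₁ ++ (q ++ [b])) * T (extI A I) (([Sum.swap b] ++ LInv q) ++ wv₁) := by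
            rw [h1s, h1t, k3]
        _ = T (extI A I) ((wu₁ ++ q) ++ [b, Sum.swap b] ++ (LInv q ++ wv₁)) := by
            have hl : (wu₁ ++ q) ++ [b, Sum.swap b] ++ (LInv q ++ wv₁) =
                wu₁ ++ (q ++ ([b] ++ ([Sum.swap b] ++ (LInv q ++ wv₁)))) := by simp
            rw [hl, ← T_append]
            simp only [T_append, List.append_assoc, mul_assoc]
  · -- inductive step : wp₂ = p₂' ++ [a]
    simp only [List.concat_eq_append] at hlen h2s h2t ⊢
    have e2 : LInv (p₂' ++ [a]) = [Sum.swap a] ++ LInv p₂' := by simp [LInv]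
    have hT : T (extI A I) (LInv wp₁ ++ wv₁) =
        T (extI A I) (Sum.swap a :: (LInv p₂' ++ wv₂)) := by
      have hll : (([Sum.swap a] ++ LInv p₂') ++ wv₂ : List (A ⊕ A)) =
          Sum.swap a :: (LInv p₂' ++ wv₂) := by simp
      rw [← h1t, h2t, e2, hll]
    obtain ⟨W₁, W₂, hWeq, hWind, hWT⟩ := extract_left hJ' hT
    rcases append_split₁ hWeq with ⟨m, hLp, hW₂⟩ | ⟨m, hW₁, hv₁⟩
    · -- good case : swap a occurs inside LInv wp₁
      subst hW₂
      have hwp₁ : wp₁ = LInv m ++ ([a] ++ LInv W₁) := by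
        have h0 := congrArg LInv hLp
        rw [LInv_LInv] at h0
        rw [h0]
        simp [LInv, Function.comp_def]
      have hWind' : ∀ e ∈ LInv W₁, extI A I a e := by
        intro e he
        have hf := mem_LInv.mp he
        have := hWind _ hf
        rw [J_swap_left, J_swap_right] at this
        exact hJ' _ _ this
      have hAW : Commute (T (extI A I) [a]) (T (extI A I) (LInv W₁)) := comm_TB hJ' hWind'
      have hTp₁ : T (extI A I) wp₁ = T (extI A I) ((LInv m ++ LInv W₁) ++ [a]) := by
        rw [hwp₁]
        simp only [T_append, List.append_assoc, mul_assoc]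
        rw [hAW.eq]
      have hs' : T (extI A I) (wu₁ ++ (LInv m ++ LInv W₁)) = T (extI A I) (wu₂ ++ p₂') := by
        apply T_cancel_concat hJ' hJi' (a := a)
        calc T (extI A I) ((wu₁ ++ (LInv m ++ LInv W₁)) ++ [a])
            = T (extI A I) wu₁ * T (extI A I) ((LInv m ++ LInv W₁) ++ [a]) := by
              simp only [T_append, List.append_assoc, mul_assoc]
          _ = T (extI A I) wu₁ * T (extI A I) wp₁ := by rw [hTp₁]
          _ = T (extI A I) (wu₁ ++ wp₁) := (T_append _ _).symm
          _ = T (extI A I) ws := h1s.symm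
          _ = T (extI A I) (wu₂ ++ (p₂' ++ [a])) := h2s
          _ = T (extI A I) ((wu₂ ++ p₂') ++ [a]) := by rw [List.append_assoc]
      have hLq : LInv (LInv m ++ LInv W₁) = W₁ ++ m := by
        rw [LInv_append, LInv_LInv, LInv_LInv]
      have hA'W : Commute (T (extI A I) [Sum.swap a]) (T (extI A I) W₁) :=
        comm_TB hJ' (fun e he => hJ' _ _ (hWind e he))
      have ht1 : T (extI A I) (LInv wp₁ ++ wv₁) =
          T (extI A I) ([Sum.swap a] ++ ((W₁ ++ m) ++ wv₁)) := by
        rw [hLp]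
        simp only [T_append, List.append_assoc, mul_assoc]
        rw [← hA'W.left_comm]
      have ht' : T (extI A I) (LInv (LInv m ++ LInv W₁) ++ wv₁) =
          T (extI A I) (LInv p₂' ++ wv₂) := by
        apply T_cancel_cons hJ' hJi' (a := Sum.swap a)
        have l1 : (Sum.swap a :: (LInv (LInv m ++ LInv W₁) ++ wv₁) : List (A ⊕ A)) =
            [Sum.swap a] ++ ((W₁ ++ m) ++ wv₁) := by rw [hLq]; rfl
        have l2 : (Sum.swap a :: (LInv p₂' ++ wv₂) : List (A ⊕ A)) =
            ([Sum.swap a] ++ LInv p₂') ++ wv₂ := by simp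
        rw [l1, ← ht1, ← h1t, l2, ← e2, ← h2t]
      have hx1 : T (extI A I) ws = T (extI A I) ((wu₂ ++ p₂') ++ [a]) :=
        h2s.trans (by rw [List.append_assoc])
      have hs'' : Irr I (wu₂ ++ p₂') := Irr_factor_left hsym (Irr_congr hx1 hs)
      have hx2 : T (extI A I) wt = T (extI A I) ([Sum.swap a] ++ (LInv p₂' ++ wv₂)) := by
        rw [h2t, e2, List.append_assoc]
      have ht'' : Irr I (LInv p₂' ++ wv₂) := Irr_factor_right hsym (Irr_congr hx2 ht)
      have hlen' : p₂'.length < n := by simp at hlen; omega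
      obtain ⟨hu, hq', hv'⟩ := ih p₂'.length hlen' (wu₂ ++ p₂') (LInv p₂' ++ wv₂)
        wu₁ (LInv m ++ LInv W₁) wv₁ wu₂ p₂' wv₂ rfl hs'' ht'' hs'.symm ht'.symm h1i rfl rfl h2i
      refine ⟨hu, ?_, hv'⟩
      rw [hTp₁, T_append (LInv m ++ LInv W₁) [a], T_append p₂' [a], hq']
    · -- bad case : swap a occurs inside wv₁
      subst hW₁ hv₁
      exfalso
      have hS : T (extI A I) (wu₁ ++ wp₁) = T (extI A I) ((wu₂ ++ p₂') ++ [a]) :=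
        h1s.symm.trans (h2s.trans (by rw [List.append_assoc]))
      obtain ⟨R₁, R₂, hReq, hRind, hRT⟩ := extract_right hJ' hS
      rcases append_split₁ hReq with ⟨k, hu₁, hR₂⟩ | ⟨k, hR₁, hp₁⟩
      · -- a ∈ wu₁ : contradicts Irr (wu₁ ++ wv₁)
        subst hu₁ hR₂
        have hAK : Commute (T (extI A I) [a]) (T (extI A I) k) :=
          comm_TB hJ' (fun e he => hJ' _ _ (hRind e (by simp [he])))
        have hAM : Commute (T (extI A I) [a]) (T (extI A I) m) := by
          refine comm_TB hJ' (fun e he => ?_)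
          have := hWind e (by simp [he])
          rw [J_swap_right] at this
          exact hJ' _ _ this
        refine h1i ⟨R₁ ++ k ++ m, W₂, a, ?_⟩
        have hl : (R₁ ++ k ++ m) ++ [a, Sum.swap a] ++ W₂ =
            R₁ ++ (k ++ (m ++ ([a] ++ ([Sum.swap a] ++ W₂)))) := by simp
        rw [hl]
        simp only [T_append, List.append_assoc, mul_assoc]
        rw [hAK.left_comm, hAM.left_comm]
      · -- a ∈ wp₁ : contradicts independence of LInv wp₁ from swap a
        have hmem : Sum.swap a ∈ LInv wp₁ := by
          rw [hp₁]
          exact mem_LInv.mpr (by simp)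
        have := hWind (Sum.swap a) (by simp [hmem])
        rw [J_swap_left] at this
        exact hJis2 hirr a this

omit hJ in
theorem trace_le_gg {x y : FreeMonoid (A ⊕ A)}
    (h : traceCon (A ⊕ A) (extI A I) x y) : ggCon A I x y := by
  refine Con.conGen_le.mpr (fun x y hr => ?_) h
  exact ConGen.Rel.of _ _ (Or.inl hr)

omit hJ in
theorem gg_cancel (wp : List (A ⊕ A)) :
    ggCon A I (FreeMonoid.ofList (wp ++ LInv wp)) 1 := by
  induction wp with
  | nil => exact (ggCon A I).refl 1
  | cons a wp' ih =>
    have hl : ((a :: wp') ++ LInv (a :: wp') : List (A ⊕ A)) =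
        [a] ++ ((wp' ++ LInv wp') ++ [Sum.swap a]) := by simp [LInv]
    rw [hl, FreeMonoid.ofList_append, FreeMonoid.ofList_append]
    have h1 : ggCon A I (FreeMonoid.ofList [a] * (FreeMonoid.ofList (wp' ++ LInv wp') *
        FreeMonoid.ofList [Sum.swap a]))
        (FreeMonoid.ofList [a] * (1 * FreeMonoid.ofList [Sum.swap a])) :=
      (ggCon A I).mul ((ggCon A I).refl _) ((ggCon A I).mul ih ((ggCon A I).refl _))
    have h2 : ggCon A I (FreeMonoid.ofList [a] * (1 * FreeMonoid.ofList [Sum.swap a])) 1 := by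
      rw [one_mul]
      exact ConGen.Rel.of _ _ (Or.inr ⟨a, by simp [FreeMonoid.ofList_singleton], rfl⟩)
    exact (ggCon A I).trans h1 h2

end GG



end IrrNF

open IrrNF in
/-- For irreducible traces s, t there are unique factorizations s = u p,
t = p⁻¹ v with u v irreducible; u v is then the normal form of s t. -/
theorem irr_product_normal_form (A : Type) [Fintype A] (I : A → A → Prop)
    (hirr : ∀ a, ¬ I a a) (hsym : ∀ a b, I a b → I b a)
    (ws wt : FreeMonoid (A ⊕ A))
    (hs : IsIRR A I (trc (A ⊕ A) (extI A I) ws))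
    (ht : IsIRR A I (trc (A ⊕ A) (extI A I) wt)) :
    ∃ upv : GTrace A I × GTrace A I × GTrace A I,
      (trc (A ⊕ A) (extI A I) ws = upv.1 * upv.2.1 ∧
        (∃ wp : FreeMonoid (A ⊕ A), upv.2.1 = trc (A ⊕ A) (extI A I) wp ∧
          trc (A ⊕ A) (extI A I) wt = trc (A ⊕ A) (extI A I) (wordInv A wp) * upv.2.2) ∧
        IsIRR A I (upv.1 * upv.2.2)) ∧
      (∀ y : GTrace A I × GTrace A I × GTrace A I,
        (trc (A ⊕ A) (extI A I) ws = y.1 * y.2.1 ∧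
          (∃ wp : FreeMonoid (A ⊕ A), y.2.1 = trc (A ⊕ A) (extI A I) wp ∧
            trc (A ⊕ A) (extI A I) wt = trc (A ⊕ A) (extI A I) (wordInv A wp) * y.2.2) ∧
          IsIRR A I (y.1 * y.2.2)) → y = upv) ∧
      (∀ wu wv : FreeMonoid (A ⊕ A),
        upv.1 = trc (A ⊕ A) (extI A I) wu → upv.2.2 = trc (A ⊕ A) (extI A I) wv →
        ggCon A I (ws * wt) (wu * wv)) := by
  have hs' : Irr I (FreeMonoid.toList ws) := (isIRR_iff _).mp hs
  have ht' : Irr I (FreeMonoid.toList wt) := (isIRR_iff _).mp ht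
  obtain ⟨wu, wp, wv, h1, h2, h3⟩ :=
    exists_fact hsym hirr (FreeMonoid.toList ws).length
      (FreeMonoid.toList ws) (FreeMonoid.toList wt) rfl hs' ht'
  refine ⟨(T (extI A I) wu, T (extI A I) wp, T (extI A I) wv),
    ⟨?_, ⟨FreeMonoid.ofList wp, rfl, ?_⟩, ?_⟩, ?_, ?_⟩
  · show T (extI A I) (FreeMonoid.toList ws) = _
    rw [h1, T_append]
  · show T (extI A I) (FreeMonoid.toList wt) = T (extI A I) (LInv wp) * _
    rw [h2, T_append]
  · show IsIRR A I (T (extI A I) wu * T (extI A I) wv)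
    rw [← T_append]
    exact (isIRR_iff _).mpr h3
  · rintro ⟨y1, yp, y2⟩ ⟨hy1, ⟨wp₀, hyp, hyt⟩, hy3⟩
    obtain ⟨u0, hu0⟩ := Con.mk'_surjective y1
    obtain ⟨v0, hv0⟩ := Con.mk'_surjective y2
    simp only at hy1 hyp hyt hy3
    have h1s : T (extI A I) (FreeMonoid.toList ws) =
        T (extI A I) (FreeMonoid.toList u0 ++ FreeMonoid.toList wp₀) := by
      show trc (A ⊕ A) (extI A I) ws = _
      rw [hy1, ← hu0, hyp]
      show (traceCon (A ⊕ A) (extI A I)).mk' u0 * (traceCon (A ⊕ A) (extI A I)).mk' wp₀ = _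
      rw [← map_mul]
      rfl
    have h1t : T (extI A I) (FreeMonoid.toList wt) =
        T (extI A I) (LInv (FreeMonoid.toList wp₀) ++ FreeMonoid.toList v0) := by
      show trc (A ⊕ A) (extI A I) wt = _
      rw [hyt, ← hv0]
      show (traceCon (A ⊕ A) (extI A I)).mk' (wordInv A wp₀) *
        (traceCon (A ⊕ A) (extI A I)).mk' v0 = _
      rw [← map_mul]
      rfl
    have h1i : Irr I (FreeMonoid.toList u0 ++ FreeMonoid.toList v0) := by
      apply (isIRR_iff _).mp
      have h := hy3
      rw [← hu0, ← hv0] at h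
      show IsIRR A I ((traceCon (A ⊕ A) (extI A I)).mk' (FreeMonoid.ofList
        (FreeMonoid.toList u0 ++ FreeMonoid.toList v0)))
      rw [show (FreeMonoid.ofList (FreeMonoid.toList u0 ++ FreeMonoid.toList v0)) = u0 * v0
        from rfl]
      rw [map_mul]
      exact h
    obtain ⟨e1, e2, e3⟩ := uniq hsym hirr wp.length (FreeMonoid.toList ws)
      (FreeMonoid.toList wt) (FreeMonoid.toList u0) (FreeMonoid.toList wp₀)
      (FreeMonoid.toList v0) wu wp wv rfl hs' ht' h1s h1t h1i h1 h2 h3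
    have g1 : y1 = T (extI A I) wu := hu0.symm.trans e1
    have g2 : yp = T (extI A I) wp := hyp.trans e2
    have g3 : y2 = T (extI A I) wv := hv0.symm.trans e3
    simp [g1, g2, g3]
  · intro wu' wv' hwu hwv
    simp only at hwu hwv
    have htrace : T (extI A I) (FreeMonoid.toList ws ++ FreeMonoid.toList wt) =
        T (extI A I) ((FreeMonoid.toList wu' ++ wp) ++ (LInv wp ++ FreeMonoid.toList wv')) := by
      calc T (extI A I) (FreeMonoid.toList ws ++ FreeMonoid.toList wt)
          = T (extI A I) (FreeMonoid.toList ws) * T (extI A I) (FreeMonoid.toList wt) :=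
            T_append _ _
        _ = (T (extI A I) wu * T (extI A I) wp) *
            (T (extI A I) (LInv wp) * T (extI A I) wv) := by
            rw [h1, h2, T_append, T_append]
        _ = (T (extI A I) (FreeMonoid.toList wu') * T (extI A I) wp) *
            (T (extI A I) (LInv wp) * T (extI A I) (FreeMonoid.toList wv')) := by
            have hwu' : T (extI A I) wu = T (extI A I) (FreeMonoid.toList wu') := hwu
            have hwv' : T (extI A I) wv = T (extI A I) (FreeMonoid.toList wv') := hwv
            rw [← hwu', ← hwv']
        _ = _ := by rw [← T_append, ← T_append, ← T_append]
    have hcon1 : ggCon A I (ws * wt)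
        (FreeMonoid.ofList ((FreeMonoid.toList wu' ++ wp) ++
          (LInv wp ++ FreeMonoid.toList wv'))) :=
      trace_le_gg (T_eq_traceCon htrace)
    have hcon2 : ggCon A I
        (FreeMonoid.ofList ((FreeMonoid.toList wu' ++ wp) ++
          (LInv wp ++ FreeMonoid.toList wv'))) (wu' * wv') := by
      have hstep := (ggCon A I).mul ((ggCon A I).refl (FreeMonoid.ofList (FreeMonoid.toList wu')))
        ((ggCon A I).mul (gg_cancel (I := I) wp)
          ((ggCon A I).refl (FreeMonoid.ofList (FreeMonoid.toList wv'))))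
      have hl : (FreeMonoid.ofList ((FreeMonoid.toList wu' ++ wp) ++
          (LInv wp ++ FreeMonoid.toList wv'))) =
          FreeMonoid.ofList (FreeMonoid.toList wu') * (FreeMonoid.ofList (wp ++ LInv wp) *
            FreeMonoid.ofList (FreeMonoid.toList wv')) := by
        rw [← FreeMonoid.ofList_append, ← FreeMonoid.ofList_append]
        congr 1
        simp
      rw [hl]
      have hr : FreeMonoid.ofList (FreeMonoid.toList wu') *
          (1 * FreeMonoid.ofList (FreeMonoid.toList wv')) = wu' * wv' := by
        rw [one_mul, FreeMonoid.ofList_toList, FreeMonoid.ofList_toList]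
      rw [← hr]
      exact hstep
    exact (ggCon A I).trans hcon1 hcon2
end

section
/- For every trace t ∈ M(A^{±1},I), the rewriting process that removes factors aa^{-1} (a ∈ A^{±1}) as long as possible is terminating and confluent; hence every trace has a unique irreducible normal form, and the map sending each element of the graph group G(A,I) to its irreducible representative is a bijection between G(A,I) and IRR(A^{±1},I). -/
/-- One rewriting step: remove a factor a a⁻¹ from a trace. -/
def RW (A : Type) (I : A → A → Prop) (t t' : GTrace A I) : Prop :=
  ∃ (u v : GTrace A I) (a : A ⊕ A),
    t = u * trc (A ⊕ A) (extI A I)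
          (FreeMonoid.of a * FreeMonoid.of (Sum.swap a)) * v ∧
    t' = u * v

namespace TraceNF

def ctx {M : Type*} [Monoid M] (r : M → M → Prop) (u v : M) : Prop :=
  ∃ x y u₀ v₀, r u₀ v₀ ∧ u = x * u₀ * y ∧ v = x * v₀ * y

theorem eqvGen_ctx_mul_left {M : Type*} [Monoid M] {r : M → M → Prop} {a b : M} (c : M)
    (h : Relation.EqvGen (ctx r) a b) : Relation.EqvGen (ctx r) (a * c) (b * c) := by
  induction h with
  | rel u v huv =>
    obtain ⟨x, y, u₀, v₀, hr, hu, hv⟩ := huv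
    exact Relation.EqvGen.rel _ _ ⟨x, y * c, u₀, v₀, hr, by rw [hu]; group, by rw [hv]; group⟩
  | refl u => exact Relation.EqvGen.refl _
  | symm u v _ ih => exact ih.symm _ _
  | trans u v w _ _ ih₁ ih₂ => exact ih₁.trans _ _ _ ih₂

theorem eqvGen_ctx_mul_right {M : Type*} [Monoid M] {r : M → M → Prop} {a b : M} (c : M)
    (h : Relation.EqvGen (ctx r) a b) : Relation.EqvGen (ctx r) (c * a) (c * b) := by
  induction h with
  | rel u v huv =>
    obtain ⟨x, y, u₀, v₀, hr, hu, hv⟩ := huv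
    exact Relation.EqvGen.rel _ _ ⟨c * x, y, u₀, v₀, hr, by rw [hu]; group, by rw [hv]; group⟩
  | refl u => exact Relation.EqvGen.refl _
  | symm u v _ ih => exact ih.symm _ _
  | trans u v w _ _ ih₁ ih₂ => exact ih₁.trans _ _ _ ih₂

theorem conGen_iff_eqvGen_ctx {M : Type*} [Monoid M] (r : M → M → Prop) (u v : M) :
    conGen r u v ↔ Relation.EqvGen (ctx r) u v := by
  constructor
  · intro h
    induction h with
    | of x y hr => exact Relation.EqvGen.rel _ _ ⟨1, 1, x, y, hr, by group, by group⟩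
    | refl x => exact Relation.EqvGen.refl _
    | symm _ ih => exact ih.symm _ _
    | trans _ _ ih₁ ih₂ => exact ih₁.trans _ _ _ ih₂
    | mul _ _ ih₁ ih₂ =>
      exact (eqvGen_ctx_mul_left _ ih₁).trans _ _ _ (eqvGen_ctx_mul_right _ ih₂)
  · intro h
    induction h with
    | rel a b hab =>
      obtain ⟨x, y, u₀, v₀, hr, ha, hb⟩ := hab
      rw [ha, hb]
      exact ((conGen r).refl x).mul (ConGen.Rel.of _ _ hr) |>.mul ((conGen r).refl y)
    | refl a => exact (conGen r).refl a
    | symm a b _ ih => exact (conGen r).symm ih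
    | trans a b c _ _ ih₁ ih₂ => exact (conGen r).trans ih₁ ih₂

end TraceNF

section HR
variable {β : Type} (K : β → β → Prop) (sw : β → β)

def hasRedexG (w : List β) : Prop :=
  ∃ (x : List β) (e : β) (m y : List β),
    w = x ++ e :: (m ++ sw e :: y) ∧ ∀ b ∈ m, K e b

theorem hasRedexG_cons {w : List β} (a : β) (h : hasRedexG K sw w) :
    hasRedexG K sw (a :: w) := by
  obtain ⟨x, e, m, y, rfl, hm⟩ := h
  exact ⟨a :: x, e, m, y, rfl, hm⟩

theorem hasRedexG_swap
    (hKirr : ∀ a, ¬ K a a) (hKsym : ∀ a b, K a b → K b a)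
    (hKswl : ∀ a b, K (sw a) b ↔ K a b) (hKswr : ∀ a b, K a (sw b) ↔ K a b)
    {c d : β} (hJ : K c d) (x y : List β)
    (h : hasRedexG K sw (x ++ c :: d :: y)) : hasRedexG K sw (x ++ d :: c :: y) := by
  induction x with
  | nil =>
    obtain ⟨X, e, m, Y, hw, hm⟩ := h
    simp only [List.nil_append] at hw ⊢
    cases X with
    | nil =>
      simp only [List.nil_append, List.cons.injEq] at hw
      obtain ⟨rfl, hw⟩ := hw
      cases m with
      | nil =>
        simp only [List.nil_append, List.cons.injEq] at hw
        obtain ⟨rfl, rfl⟩ := hw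
        exact absurd ((hKswr c c).mp hJ) (hKirr c)
      | cons f m' =>
        simp only [List.cons_append, List.cons.injEq] at hw
        obtain ⟨rfl, rfl⟩ := hw
        exact ⟨[d], c, m', Y, by simp, fun b hb => hm b (List.mem_cons_of_mem _ hb)⟩
    | cons f X' =>
      simp only [List.cons_append, List.cons.injEq] at hw
      obtain ⟨rfl, hw⟩ := hw
      cases X' with
      | nil =>
        simp only [List.nil_append, List.cons.injEq] at hw
        obtain ⟨rfl, rfl⟩ := hw
        refine ⟨[], d, c :: m, Y, by simp, ?_⟩
        intro b hb
        rcases List.mem_cons.mp hb with rfl | hb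
        · exact hKsym _ _ hJ
        · exact hm b hb
      | cons g X'' =>
        simp only [List.cons_append, List.cons.injEq] at hw
        obtain ⟨rfl, rfl⟩ := hw
        exact ⟨d :: c :: X'', e, m, Y, by simp, hm⟩
  | cons a x' ih =>
    obtain ⟨X, e, m, Y, hw, hm⟩ := h
    cases X with
    | cons f X' =>
      simp only [List.cons_append, List.cons.injEq] at hw
      obtain ⟨rfl, hw⟩ := hw
      exact hasRedexG_cons K sw a (ih ⟨X', e, m, Y, hw, hm⟩)
    | nil =>
      simp only [List.nil_append, List.cons_append, List.cons.injEq] at hw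
      obtain ⟨rfl, hw⟩ := hw
      rcases List.append_eq_append_iff.mp hw with ⟨k, hk1, hk2⟩ | ⟨k, hk1, hk2⟩
      · -- m = x' ++ k ∧ c :: d :: y = k ++ sw a :: Y
        cases k with
        | nil =>
          simp only [List.nil_append, List.cons.injEq] at hk2
          obtain ⟨rfl, rfl⟩ := hk2
          simp only [List.append_nil] at hk1
          subst hk1
          refine ⟨[], a, m ++ [d], y, by simp, ?_⟩
          intro b hb
          rcases List.mem_append.mp hb with hb | hb
          · exact hm b hb
          · rw [List.mem_singleton.mp hb]
            exact (hKswl a d).mp hJ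
        | cons f k' =>
          simp only [List.cons_append, List.cons.injEq] at hk2
          obtain ⟨rfl, hk2⟩ := hk2
          cases k' with
          | nil =>
            simp only [List.nil_append, List.cons.injEq] at hk2
            obtain ⟨rfl, rfl⟩ := hk2
            subst hk1
            refine ⟨[], a, x', c :: y, by simp, ?_⟩
            intro b hb
            exact hm b (List.mem_append.mpr (Or.inl hb))
          | cons g k'' =>
            simp only [List.cons_append, List.cons.injEq] at hk2
            obtain ⟨rfl, hk2⟩ := hk2
            subst hk1
            subst hk2
            refine ⟨[], a, x' ++ d :: c :: k'', Y, by simp, ?_⟩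
            intro b hb
            apply hm
            rcases List.mem_append.mp hb with hb | hb
            · exact List.mem_append.mpr (Or.inl hb)
            · rcases List.mem_cons.mp hb with rfl | hb
              · exact List.mem_append.mpr (Or.inr (by simp))
              · rcases List.mem_cons.mp hb with rfl | hb
                · exact List.mem_append.mpr (Or.inr (by simp))
                · exact List.mem_append.mpr (Or.inr (by simp [hb]))
      · -- x' = m ++ k ∧ sw a :: Y = k ++ c :: d :: y
        cases k with
        | nil =>
          simp only [List.nil_append, List.cons.injEq] at hk2
          obtain ⟨hc, rfl⟩ := hk2
          simp only [List.append_nil] at hk1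
          subst hk1
          rw [← hc]
          refine ⟨[], a, x' ++ [d], y, by simp, ?_⟩
          intro b hb
          rcases List.mem_append.mp hb with hb | hb
          · exact hm b hb
          · rw [List.mem_singleton.mp hb]
            rw [← hc] at hJ
            exact (hKswl a d).mp hJ
        | cons f k' =>
          simp only [List.cons_append, List.cons.injEq] at hk2
          obtain ⟨rfl, rfl⟩ := hk2
          subst hk1
          exact ⟨[], a, m, k' ++ d :: c :: y, by simp, hm⟩

end HR

namespace TraceNF

open FreeMonoid Relation

section Main

variable {A : Type} {I : A → A → Prop}

local notation "L" => (A ⊕ A)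
local notation "J" => extI A I


/- ### facts about J -/

theorem J_swap_left (a b : L) : extI A I (Sum.swap a) b ↔ extI A I a b := by
  cases a <;> exact Iff.rfl

theorem J_swap_right (a b : L) : extI A I a (Sum.swap b) ↔ extI A I a b := by
  cases b <;> exact Iff.rfl

theorem J_irr (hirr : ∀ a, ¬ I a a) (a : L) : ¬ extI A I a a := hirr _

theorem J_symm (hsym : ∀ a b, I a b → I b a) {a b : L} (h : extI A I a b) : extI A I b a := hsym _ _ h

theorem J_ne (hirr : ∀ a, ¬ I a a) {a b : L} (h : extI A I a b) : a ≠ b := by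
  rintro rfl; exact J_irr hirr a h

theorem J_ne_swap (hirr : ∀ a, ¬ I a a) {a b : L} (h : extI A I a b) : b ≠ Sum.swap a := by
  rintro rfl; exact J_irr hirr a ((J_swap_right a a).mp h)

/- ### words and traces -/

/-- The trace of a word given as a list. -/
def T (A : Type) (I : A → A → Prop) (w : List (A ⊕ A)) : GTrace A I :=
  trc (A ⊕ A) (extI A I) (FreeMonoid.ofList w)

theorem T_append (x y : List L) : T A I (x ++ y) = T A I x * T A I y := by
  unfold T trc; rw [FreeMonoid.ofList_append, map_mul]

theorem T_eq_iff (w w' : List L) :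
    T A I w = T A I w' ↔ traceCon (A ⊕ A) (extI A I) (ofList w) (ofList w') :=
  Con.eq _

/-- single swap of adjacent independent letters -/
def SW (w w' : List L) : Prop :=
  ∃ (x y : List L) (c d : L), extI A I c d ∧ w = x ++ c :: d :: y ∧ w' = x ++ d :: c :: y

theorem SW_iff_ctx (w w' : List L) :
    SW (I := I) w w' ↔ ctx (traceRel (A ⊕ A) (extI A I)) (ofList w) (ofList w') := by
  constructor
  · rintro ⟨x, y, c, d, hJ, rfl, rfl⟩
    refine ⟨ofList x, ofList y, _, _, ⟨c, d, hJ, rfl, rfl⟩, ?_, ?_⟩ <;>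
      simp [FreeMonoid.ofList_append, FreeMonoid.ofList_cons, mul_assoc]
  · rintro ⟨x, y, u₀, v₀, ⟨c, d, hJ, rfl, rfl⟩, hu, hv⟩
    refine ⟨x.toList, y.toList, c, d, hJ, ?_, ?_⟩
    · have := congrArg FreeMonoid.toList hu
      simpa [FreeMonoid.toList_mul] using this
    · have := congrArg FreeMonoid.toList hv
      simpa [FreeMonoid.toList_mul] using this

theorem T_eq_iff_eqvGen (w w' : List L) :
    T A I w = T A I w' ↔ Relation.EqvGen (SW (I := I)) w w' := by
  rw [T_eq_iff, traceCon, conGen_iff_eqvGen_ctx]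
  constructor
  · intro h
    have : ∀ (u v : FreeMonoid L), Relation.EqvGen (ctx (traceRel (A ⊕ A) (extI A I))) u v →
        Relation.EqvGen (SW (I := I)) u.toList v.toList := by
      intro u v h
      induction h with
      | rel a b hab => exact Relation.EqvGen.rel _ _ ((SW_iff_ctx _ _).mpr hab)
      | refl a => exact Relation.EqvGen.refl _
      | symm a b _ ih => exact ih.symm _ _
      | trans a b c _ _ ih₁ ih₂ => exact ih₁.trans _ _ _ ih₂
    exact this _ _ h
  · intro h
    induction h with
    | rel a b hab => exact Relation.EqvGen.rel _ _ ((SW_iff_ctx _ _).mp hab)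
    | refl a => exact Relation.EqvGen.refl _
    | symm a b _ ih => exact ih.symm _ _
    | trans a b c _ _ ih₁ ih₂ => exact ih₁.trans _ _ _ ih₂

theorem SW_symm (hsym : ∀ a b, I a b → I b a) {w w' : List L} (h : SW (I := I) w w') : SW (I := I) w' w := by
  obtain ⟨x, y, c, d, hJ, rfl, rfl⟩ := h
  exact ⟨x, y, d, c, J_symm hsym hJ, rfl, rfl⟩

/-- basic: commuting two adjacent independent letters -/
theorem T_swap {c d : L} (hJ : extI A I c d) (x y : List L) :
    T A I (x ++ c :: d :: y) = T A I (x ++ d :: c :: y) :=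
  (T_eq_iff_eqvGen _ _).mpr (Relation.EqvGen.rel _ _ ⟨x, y, c, d, hJ, rfl, rfl⟩)

/-- letter moving left past an independent block -/
theorem T_move (hsym : ∀ a b, I a b → I b a) {a : L} (p : List L) (hp : ∀ b ∈ p, extI A I a b) (x q : List L) :
    T A I (x ++ p ++ a :: q) = T A I (x ++ a :: p ++ q) := by
  induction p generalizing x with
  | nil => simp
  | cons b p ih =>
    have h1 : x ++ (b :: p) ++ a :: q = (x ++ [b]) ++ p ++ a :: q := by simp
    have h2 : (x ++ [b]) ++ a :: p ++ q = x ++ b :: a :: (p ++ q) := by simp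
    rw [h1, ih (fun b hb => hp b (List.mem_cons_of_mem _ hb)) (x ++ [b]), h2,
       T_swap (J_symm hsym (hp b List.mem_cons_self)) x (p ++ q)]
    simp

/- ### the graph-group congruence as an EqvGen -/

/-- single step of the graph group congruence -/
def GS (w w' : List L) : Prop :=
  SW (I := I) w w' ∨ ∃ (x : List L) (a : L) (y : List L),
    w = x ++ a :: Sum.swap a :: y ∧ w' = x ++ y

theorem GS_iff_ctx (w w' : List L) :
    GS (I := I) w w' ↔ ctx (fun x y => traceRel (A ⊕ A) (extI A I) x y ∨
      ∃ a : A ⊕ A, x = FreeMonoid.of a * FreeMonoid.of (Sum.swap a) ∧ y = 1)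
      (ofList w) (ofList w') := by
  constructor
  · rintro (⟨x, y, c, d, hJ, rfl, rfl⟩ | ⟨x, a, y, rfl, rfl⟩)
    · exact ⟨ofList x, ofList y, _, _, Or.inl ⟨c, d, hJ, rfl, rfl⟩,
        by simp [FreeMonoid.ofList_append, FreeMonoid.ofList_cons, mul_assoc],
        by simp [FreeMonoid.ofList_append, FreeMonoid.ofList_cons, mul_assoc]⟩
    · exact ⟨ofList x, ofList y, _, _, Or.inr ⟨a, rfl, rfl⟩,
        by simp [FreeMonoid.ofList_append, FreeMonoid.ofList_cons, mul_assoc],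
        by simp [FreeMonoid.ofList_append, FreeMonoid.ofList_cons, mul_assoc]⟩
  · rintro ⟨x, y, u₀, v₀, ⟨c, d, hJ, rfl, rfl⟩ | ⟨a, rfl, rfl⟩, hu, hv⟩
    · refine Or.inl ⟨x.toList, y.toList, c, d, hJ, ?_, ?_⟩
      · have := congrArg FreeMonoid.toList hu
        simpa [FreeMonoid.toList_mul] using this
      · have := congrArg FreeMonoid.toList hv
        simpa [FreeMonoid.toList_mul] using this
    · refine Or.inr ⟨x.toList, a, y.toList, ?_, ?_⟩
      · have := congrArg FreeMonoid.toList hu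
        simpa [FreeMonoid.toList_mul] using this
      · have := congrArg FreeMonoid.toList hv
        simpa [FreeMonoid.toList_mul] using this

theorem gg_eq_iff_eqvGen (w w' : List L) :
    (ggCon A I).mk' (ofList w) = (ggCon A I).mk' (ofList w') ↔
      Relation.EqvGen (GS (I := I)) w w' := by
  rw [show ((ggCon A I).mk' (ofList w) = (ggCon A I).mk' (ofList w')) ↔
      (ggCon A I) (ofList w) (ofList w') from Con.eq _, ggCon, conGen_iff_eqvGen_ctx]
  constructor
  · intro h
    have : ∀ (u v : FreeMonoid L), Relation.EqvGen (ctx (fun x y => traceRel (A ⊕ A) (extI A I) x y ∨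
      ∃ a : A ⊕ A, x = FreeMonoid.of a * FreeMonoid.of (Sum.swap a) ∧ y = 1)) u v →
        Relation.EqvGen (GS (I := I)) u.toList v.toList := by
      intro u v h
      induction h with
      | rel a b hab => exact Relation.EqvGen.rel _ _ ((GS_iff_ctx _ _).mpr hab)
      | refl a => exact Relation.EqvGen.refl _
      | symm a b _ ih => exact ih.symm _ _
      | trans a b c _ _ ih₁ ih₂ => exact ih₁.trans _ _ _ ih₂
    exact this _ _ h
  · intro h
    induction h with
    | rel a b hab => exact Relation.EqvGen.rel _ _ ((GS_iff_ctx _ _).mp hab)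
    | refl a => exact Relation.EqvGen.refl _
    | symm a b _ ih => exact ih.symm _ _
    | trans a b c _ _ ih₁ ih₂ => exact ih₁.trans _ _ _ ih₂

theorem gg_of_T {w w' : List L} (h : T A I w = T A I w') :
    (ggCon A I).mk' (ofList w) = (ggCon A I).mk' (ofList w') := by
  rw [gg_eq_iff_eqvGen]
  exact Relation.EqvGen.mono (fun a b hab => Or.inl hab) _ _ ((T_eq_iff_eqvGen w w').mp h)

theorem gg_cancel (x : List L) (a : L) (y : List L) :
    (ggCon A I).mk' (ofList (x ++ a :: Sum.swap a :: y)) = (ggCon A I).mk' (ofList (x ++ y)) :=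
  (gg_eq_iff_eqvGen _ _).mpr (Relation.EqvGen.rel _ _ (Or.inr ⟨x, a, y, rfl, rfl⟩))

/- ### the cancellation scan -/

open Classical in
/-- look for the first cancellable occurrence of `swap a` -/
noncomputable def scan (A : Type) (I : A → A → Prop) (a : A ⊕ A) :
    List (A ⊕ A) → Option (List (A ⊕ A) × List (A ⊕ A))
  | [] => none
  | b :: v =>
    if b = Sum.swap a then some ([], v)
    else if extI A I a b then Option.map (fun pq => (b :: pq.1, pq.2)) (scan A I a v)
    else none

open Classical in
theorem scan_cons (a b : L) (v : List L) :
    scan A I a (b :: v) = if b = Sum.swap a then some ([], v)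
      else if extI A I a b then Option.map (fun pq => (b :: pq.1, pq.2)) (scan A I a v)
      else none := by
  rw [scan]

theorem scan_some_iff (hirr : ∀ a, ¬ I a a) (a : L) (v p q : List L) :
    scan A I a v = some (p, q) ↔ v = p ++ Sum.swap a :: q ∧ ∀ b ∈ p, extI A I a b := by
  constructor
  · intro h
    induction v generalizing p q with
    | nil => rw [scan] at h; exact absurd h (by simp)
    | cons b v ih =>
      rw [scan_cons] at h
      split_ifs at h with h1 h2
      · simp only [Option.some.injEq, Prod.mk.injEq] at h
        obtain ⟨rfl, rfl⟩ := h
        subst h1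
        simp
      · obtain ⟨⟨p', q'⟩, hs, hpq⟩ := Option.map_eq_some_iff.mp h
        simp only [Prod.mk.injEq] at hpq
        obtain ⟨rfl, rfl⟩ := hpq
        obtain ⟨hv, hp'⟩ := ih p' q' hs
        subst hv
        refine ⟨by simp, ?_⟩
        intro c hc
        rcases List.mem_cons.mp hc with rfl | hc
        · exact h2
        · exact hp' c hc
  · rintro ⟨rfl, hp⟩
    induction p with
    | nil =>
      rw [List.nil_append, scan_cons, if_pos rfl]
    | cons b p ih =>
      have hb : extI A I a b := hp b List.mem_cons_self
      rw [List.cons_append, scan_cons, if_neg (J_ne_swap hirr hb), if_pos hb,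
        ih (fun c hc => hp c (List.mem_cons_of_mem _ hc))]
      rfl

theorem scan_none_iff (hirr : ∀ a, ¬ I a a) (a : L) (v : List L) :
    scan A I a v = none ↔
      ¬ ∃ p q, v = p ++ Sum.swap a :: q ∧ ∀ b ∈ p, extI A I a b := by
  constructor
  · rintro h ⟨p, q, hv, hp⟩
    rw [(scan_some_iff hirr a v p q).mpr ⟨hv, hp⟩] at h
    exact absurd h (by simp)
  · intro h
    cases hs : scan A I a v with
    | none => rfl
    | some pq =>
      obtain ⟨hv, hp⟩ := (scan_some_iff hirr a v pq.1 pq.2).mp (by rw [hs])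
      exact absurd ⟨pq.1, pq.2, hv, hp⟩ h

/- ### insertion and the normal form -/

noncomputable def insw (A : Type) (I : A → A → Prop) (a : A ⊕ A) (v : List (A ⊕ A)) :
    List (A ⊕ A) :=
  match scan A I a v with
  | some (p, q) => p ++ q
  | none => a :: v

noncomputable def nfw (A : Type) (I : A → A → Prop) : List (A ⊕ A) → List (A ⊕ A) :=
  List.foldr (insw A I) []

theorem insw_of_some {a : L} {v p q : List L} (h : scan A I a v = some (p, q)) :
    insw A I a v = p ++ q := by unfold insw; rw [h]

theorem insw_of_none {a : L} {v : List L} (h : scan A I a v = none) :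
    insw A I a v = a :: v := by unfold insw; rw [h]

theorem insw_of_decomp (hirr : ∀ a, ¬ I a a) {a : L} {p q : List L}
    (hp : ∀ b ∈ p, extI A I a b) :
    insw A I a (p ++ Sum.swap a :: q) = p ++ q :=
  insw_of_some ((scan_some_iff hirr a _ p q).mpr ⟨rfl, hp⟩)

theorem nfw_nil : nfw A I [] = [] := rfl

theorem nfw_cons (a : L) (w : List L) : nfw A I (a :: w) = insw A I a (nfw A I w) := rfl

theorem nfw_append (x y : List L) :
    nfw A I (x ++ y) = List.foldr (insw A I) (nfw A I y) x := List.foldr_append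

/- ### commutation lemmas for insw -/

theorem swap_inj {a b : L} (h : Sum.swap a = Sum.swap b) : a = b := by
  have := congrArg Sum.swap h
  simpa using this

theorem insw_swap_cons (a : L) (v : List L) :
    insw A I a (Sum.swap a :: v) = v := by
  have := insw_of_some (A := A) (I := I) (a := a) (v := Sum.swap a :: v) (p := []) (q := v)
    (by rw [scan_cons, if_pos rfl])
  simpa using this

theorem T_insw_cons (hirr : ∀ a, ¬ I a a) {a b : L} (hab : extI A I a b) (v : List L) :
    T A I (insw A I a (b :: v)) = T A I [b] * T A I (insw A I a v) := by
  have hb : b ≠ Sum.swap a := J_ne_swap hirr hab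
  cases hs : scan A I a v with
  | none =>
    rw [insw_of_none hs, insw_of_none (by rw [scan_cons, if_neg hb, if_pos hab, hs]; rfl)]
    have := T_swap (I := I) hab [] v
    simpa using this.trans (by rw [show ([] : List L) ++ b :: a :: v = [b] ++ (a :: v) by rfl, T_append])
  | some pq =>
    rw [insw_of_some hs, insw_of_some (p := b :: pq.1) (q := pq.2)
      (by rw [scan_cons, if_neg hb, if_pos hab, hs]; rfl)]
    rw [show (b :: pq.1) ++ pq.2 = [b] ++ (pq.1 ++ pq.2) by simp, T_append]

theorem Mstep (hirr : ∀ a, ¬ I a a) (hsym : ∀ a b, I a b → I b a)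
    (a : L) {c d : L} (hJ : extI A I c d) (x y : List L) :
    T A I (insw A I a (x ++ c :: d :: y)) = T A I (insw A I a (x ++ d :: c :: y)) := by
  induction x with
  | nil =>
    simp only [List.nil_append]
    by_cases hc : c = Sum.swap a
    · subst hc
      have had : extI A I a d := (J_swap_left (I := I) a d).mp hJ
      have hd : d ≠ Sum.swap a := J_ne_swap hirr had
      rw [insw_swap_cons, insw_of_some (p := [d]) (q := y)
        (by rw [scan_cons, if_neg hd, if_pos had, scan_cons, if_pos rfl]; rfl)]
      simp
    · by_cases hd : d = Sum.swap a
      · subst hd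
        have hac : extI A I a c := J_symm hsym ((J_swap_right (I := I) c a).mp hJ)
        have hc' : c ≠ Sum.swap a := J_ne_swap hirr hac
        rw [insw_swap_cons, insw_of_some (p := [c]) (q := y)
          (by rw [scan_cons, if_neg hc', if_pos hac, scan_cons, if_pos rfl]; rfl)]
        simp
      · by_cases hac : extI A I a c <;> by_cases had : extI A I a d
        · cases hs : scan A I a y with
          | none =>
            rw [insw_of_none (by rw [scan_cons, if_neg hc, if_pos hac,
                  scan_cons, if_neg hd, if_pos had, hs]; rfl),
              insw_of_none (by rw [scan_cons, if_neg hd, if_pos had,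
                  scan_cons, if_neg hc, if_pos hac, hs]; rfl)]
            simpa using T_swap (I := I) hJ [a] y
          | some pq =>
            rw [insw_of_some (p := c :: d :: pq.1) (q := pq.2)
                (by rw [scan_cons, if_neg hc, if_pos hac,
                  scan_cons, if_neg hd, if_pos had, hs]; rfl),
              insw_of_some (p := d :: c :: pq.1) (q := pq.2)
                (by rw [scan_cons, if_neg hd, if_pos had,
                  scan_cons, if_neg hc, if_pos hac, hs]; rfl)]
            simpa using T_swap (I := I) hJ [] (pq.1 ++ pq.2)
        · rw [insw_of_none (by rw [scan_cons, if_neg hc, if_pos hac,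
                scan_cons, if_neg hd, if_neg had]; rfl),
            insw_of_none (by rw [scan_cons, if_neg hd, if_neg had]),
            show ∀ z : List L, a :: z = [a] ++ z from fun _ => rfl]
          exact T_swap (I := I) hJ [a] y
        · rw [insw_of_none (by rw [scan_cons, if_neg hc, if_neg hac]),
            insw_of_none (by rw [scan_cons, if_neg hd, if_pos had,
                scan_cons, if_neg hc, if_neg hac]; rfl),
            show ∀ z : List L, a :: z = [a] ++ z from fun _ => rfl]
          exact T_swap (I := I) hJ [a] y
        · rw [insw_of_none (by rw [scan_cons, if_neg hc, if_neg hac]),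
            insw_of_none (by rw [scan_cons, if_neg hd, if_neg had]),
            show ∀ z : List L, a :: z = [a] ++ z from fun _ => rfl]
          exact T_swap (I := I) hJ [a] y
  | cons b x ih =>
    simp only [List.cons_append]
    by_cases hb : b = Sum.swap a
    · subst hb
      rw [insw_swap_cons, insw_swap_cons]
      exact T_swap (I := I) hJ x y
    · by_cases hab : extI A I a b
      · rw [T_insw_cons hirr hab, T_insw_cons hirr hab, ih]
      · rw [insw_of_none (by rw [scan_cons, if_neg hb, if_neg hab]),
          insw_of_none (by rw [scan_cons, if_neg hb, if_neg hab]),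
          show a :: b :: (x ++ c :: d :: y) = ([a, b] ++ x) ++ c :: d :: y by simp,
          show a :: b :: (x ++ d :: c :: y) = ([a, b] ++ x) ++ d :: c :: y by simp]
        exact T_swap (I := I) hJ ([a, b] ++ x) y

theorem T_insw_congr (hirr : ∀ a, ¬ I a a) (hsym : ∀ a b, I a b → I b a)
    (a : L) {v v' : List L} (h : T A I v = T A I v') :
    T A I (insw A I a v) = T A I (insw A I a v') := by
  have h' := (T_eq_iff_eqvGen v v').mp h
  clear h
  induction h' with
  | rel u w huw =>
    obtain ⟨x, y, c, d, hJ, rfl, rfl⟩ := huw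
    exact Mstep hirr hsym a hJ x y
  | refl u => rfl
  | symm u w _ ih => exact ih.symm
  | trans u w z _ _ ih₁ ih₂ => exact ih₁.trans ih₂

theorem T_foldr_congr (hirr : ∀ a, ¬ I a a) (hsym : ∀ a b, I a b → I b a)
    (x : List L) {v v' : List L} (h : T A I v = T A I v') :
    T A I (List.foldr (insw A I) v x) = T A I (List.foldr (insw A I) v' x) := by
  induction x with
  | nil => exact h
  | cons b x ih => exact T_insw_congr hirr hsym b ih

/- ### the diamond for two insertions -/

theorem comm_core (hirr : ∀ a, ¬ I a a) (hsym : ∀ a b, I a b → I b a)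
    {c d : L} (hJ : extI A I c d) (p m s : List L)
    (hpc : ∀ b ∈ p, extI A I c b) (hpmd : ∀ b ∈ p ++ m, extI A I d b) :
    insw A I c (insw A I d (p ++ Sum.swap c :: (m ++ Sum.swap d :: s))) = p ++ (m ++ s) ∧
    insw A I d (insw A I c (p ++ Sum.swap c :: (m ++ Sum.swap d :: s))) = (p ++ m) ++ s := by
  constructor
  · have h1 : insw A I d (p ++ Sum.swap c :: (m ++ Sum.swap d :: s)) =
        (p ++ Sum.swap c :: m) ++ s := by
      rw [show p ++ Sum.swap c :: (m ++ Sum.swap d :: s) =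
          (p ++ Sum.swap c :: m) ++ Sum.swap d :: s by simp]
      apply insw_of_decomp hirr
      intro b hb
      rcases List.mem_append.mp hb with hb | hb
      · exact hpmd b (List.mem_append.mpr (Or.inl hb))
      · rcases List.mem_cons.mp hb with rfl | hb
        · exact (J_swap_right (I := I) d c).mpr (J_symm hsym hJ)
        · exact hpmd b (List.mem_append.mpr (Or.inr hb))
    rw [h1, show (p ++ Sum.swap c :: m) ++ s = p ++ Sum.swap c :: (m ++ s) by simp]
    exact insw_of_decomp hirr hpc
  · have h1 : insw A I c (p ++ Sum.swap c :: (m ++ Sum.swap d :: s)) =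
        (p ++ m) ++ Sum.swap d :: s := by
      rw [insw_of_decomp hirr hpc]; simp
    rw [h1]
    exact insw_of_decomp hirr hpmd

theorem comm_insw (hirr : ∀ a, ¬ I a a) (hsym : ∀ a b, I a b → I b a)
    {c d : L} (hJ : extI A I c d) (v : List L) :
    T A I (insw A I c (insw A I d v)) = T A I (insw A I d (insw A I c v)) := by
  have key : ∀ (c d : L), extI A I c d → ∀ p q : List L,
      scan A I c v = some (p, q) → scan A I d v = none →
      insw A I c (insw A I d v) = d :: (p ++ q) ∧
      insw A I d (insw A I c v) = d :: (p ++ q) := by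
    intro c d hJ p q hsc hsd
    obtain ⟨hv, hpc⟩ := (scan_some_iff hirr c v p q).mp hsc
    have hdc : d ≠ Sum.swap c := J_ne_swap hirr hJ
    constructor
    · rw [insw_of_none hsd]
      have := insw_of_some (p := d :: p) (q := q)
        (by rw [scan_cons, if_neg hdc, if_pos hJ, hsc]; rfl)
      simpa using this
    · rw [insw_of_some hsc, insw_of_none]
      rw [scan_none_iff hirr]
      rintro ⟨r, t, hrt, hr⟩
      rw [scan_none_iff hirr] at hsd
      apply hsd
      rcases List.append_eq_append_iff.mp hrt with ⟨k, hk1, hk2⟩ | ⟨k, hk1, hk2⟩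
      · -- r = p ++ k, q = k ++ swap d :: t
        refine ⟨p ++ Sum.swap c :: k, t, by rw [hv, hk2]; simp, ?_⟩
        intro b hb
        rcases List.mem_append.mp hb with hb | hb
        · exact hr b (by rw [hk1]; exact List.mem_append.mpr (Or.inl hb))
        · rcases List.mem_cons.mp hb with rfl | hb
          · exact (J_swap_right (I := I) d c).mpr (J_symm hsym hJ)
          · exact hr b (by rw [hk1]; exact List.mem_append.mpr (Or.inr hb))
      · -- p = r ++ k, swap d :: t = k ++ q
        cases k with
        | nil =>
          simp only [List.nil_append] at hk2
          refine ⟨p ++ [Sum.swap c], t, by rw [hv, ← hk2]; simp, ?_⟩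
          intro b hb
          rcases List.mem_append.mp hb with hb | hb
          · exact hr b (by rw [hk1] at hb; simpa using hb)
          · rcases List.mem_cons.mp hb with rfl | hb
            · exact (J_swap_right (I := I) d c).mpr (J_symm hsym hJ)
            · simp at hb
        | cons e k =>
          obtain ⟨rfl, hk2'⟩ : Sum.swap d = e ∧ t = k ++ q := by
            simp only [List.cons_append, List.cons.injEq] at hk2
            exact hk2
          refine ⟨r, k ++ Sum.swap c :: q, by rw [hv, hk1]; simp, hr⟩
  cases hsc : scan A I c v with
  | none =>
    cases hsd : scan A I d v with
    | none =>
      have hdc : d ≠ Sum.swap c := J_ne_swap hirr hJ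
      have hcd : c ≠ Sum.swap d := J_ne_swap hirr (J_symm hsym hJ)
      rw [insw_of_none hsd, insw_of_none hsc,
        insw_of_none (by rw [scan_cons, if_neg hdc, if_pos hJ, hsc]; rfl),
        insw_of_none (by rw [scan_cons, if_neg hcd, if_pos (J_symm hsym hJ), hsd]; rfl)]
      simpa using T_swap (I := I) hJ [] v
    | some pq =>
      obtain ⟨h1, h2⟩ := key d c (J_symm hsym hJ) pq.1 pq.2 (by rw [hsd]) hsc
      rw [h1, h2]
  | some pq =>
    cases hsd : scan A I d v with
    | none =>
      obtain ⟨h1, h2⟩ := key c d hJ pq.1 pq.2 (by rw [hsc]) hsd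
      rw [h1, h2]
    | some pq' =>
      obtain ⟨hv, hpc⟩ := (scan_some_iff hirr c v pq.1 pq.2).mp (by rw [hsc])
      obtain ⟨hv', hpd⟩ := (scan_some_iff hirr d v pq'.1 pq'.2).mp (by rw [hsd])
      have hne : Sum.swap c ≠ Sum.swap d := fun h => J_ne hirr hJ (swap_inj h)
      have heq : pq'.1 ++ Sum.swap d :: pq'.2 = pq.1 ++ Sum.swap c :: pq.2 := hv'.symm.trans hv
      rcases List.append_eq_append_iff.mp heq.symm with ⟨k, hk1, hk2⟩ | ⟨k, hk1, hk2⟩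
      · -- pq'.1 = pq.1 ++ k ∧ swap c :: pq.2 = k ++ swap d :: pq'.2
        cases k with
        | nil =>
          simp only [List.nil_append] at hk2
          exact absurd (by injection hk2) hne
        | cons e m =>
          obtain ⟨rfl, hk2'⟩ : Sum.swap c = e ∧ pq.2 = m ++ Sum.swap d :: pq'.2 := by
            simp only [List.cons_append, List.cons.injEq] at hk2
            exact hk2
          have hV : v = pq.1 ++ Sum.swap c :: (m ++ Sum.swap d :: pq'.2) := by
            rw [hv, hk2']
          obtain ⟨e1, e2⟩ := comm_core hirr hsym hJ pq.1 m pq'.2 hpc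
            (by intro b hb
                apply hpd
                rw [hk1]
                rcases List.mem_append.mp hb with hb | hb
                · exact List.mem_append.mpr (Or.inl hb)
                · exact List.mem_append.mpr (Or.inr (List.mem_cons_of_mem _ hb)))
          rw [hV, e1, e2, List.append_assoc]
      · -- pq.1 = pq'.1 ++ k ∧ swap d :: pq'.2 = k ++ swap c :: pq.2
        cases k with
        | nil =>
          simp only [List.nil_append] at hk2
          exact absurd (by injection hk2) hne.symm
        | cons e m =>
          obtain ⟨rfl, hk2'⟩ : Sum.swap d = e ∧ pq'.2 = m ++ Sum.swap c :: pq.2 := by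
            simp only [List.cons_append, List.cons.injEq] at hk2
            exact hk2
          have hV : v = pq'.1 ++ Sum.swap d :: (m ++ Sum.swap c :: pq.2) := by
            rw [hv', hk2']
          obtain ⟨e1, e2⟩ := comm_core hirr hsym (J_symm hsym hJ) pq'.1 m pq.2 hpd
            (by intro b hb
                apply hpc
                rw [hk1]
                rcases List.mem_append.mp hb with hb | hb
                · exact List.mem_append.mpr (Or.inl hb)
                · exact List.mem_append.mpr (Or.inr (List.mem_cons_of_mem _ hb)))
          rw [hV, e1, e2, List.append_assoc]

/- ### redexes -/

/-- a trace factor a·a⁻¹ visible in the word -/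
def hasRedex (w : List (A ⊕ A)) : Prop := hasRedexG (extI A I) Sum.swap w

theorem hasRedex_invariant (hirr : ∀ a, ¬ I a a) (hsym : ∀ a b, I a b → I b a)
    {w w' : List L} (h : T A I w = T A I w') (hR : hasRedex (I := I) w) :
    hasRedex (I := I) w' := by
  have key : ∀ u v : List L, Relation.EqvGen (SW (I := I)) u v →
      (hasRedex (I := I) u ↔ hasRedex (I := I) v) := by
    intro u v h
    induction h with
    | rel u v huv =>
      obtain ⟨x, y, c, d, hJ, rfl, rfl⟩ := huv
      constructor
      · exact hasRedexG_swap _ _ (J_irr hirr) (fun _ _ h => J_symm hsym h)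
          (J_swap_left (I := I)) (J_swap_right (I := I)) hJ x y
      · exact hasRedexG_swap _ _ (J_irr hirr) (fun _ _ h => J_symm hsym h)
          (J_swap_left (I := I)) (J_swap_right (I := I)) (J_symm hsym hJ) x y
    | refl u => exact Iff.rfl
    | symm u v _ ih => exact ih.symm
    | trans u v z _ _ ih₁ ih₂ => exact ih₁.trans ih₂
  exact (key w w' ((T_eq_iff_eqvGen w w').mp h)).mp hR

/- ### invariance of the normal form -/

theorem T_nfw_congr (hirr : ∀ a, ¬ I a a) (hsym : ∀ a b, I a b → I b a)
    {w w' : List L} (h : T A I w = T A I w') :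
    T A I (nfw A I w) = T A I (nfw A I w') := by
  have h' := (T_eq_iff_eqvGen w w').mp h
  clear h
  induction h' with
  | rel u v huv =>
    obtain ⟨x, y, c, d, hJ, rfl, rfl⟩ := huv
    rw [nfw_append, nfw_append]
    exact T_foldr_congr hirr hsym x (comm_insw hirr hsym hJ (nfw A I y))
  | refl u => rfl
  | symm u v _ ih => exact ih.symm
  | trans u v z _ _ ih₁ ih₂ => exact ih₁.trans ih₂

theorem T_cons (a : L) (z : List L) : T A I (a :: z) = T A I [a] * T A I z := by
  rw [show a :: z = [a] ++ z from rfl, T_append]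

theorem nfw_noRedex (hirr : ∀ a, ¬ I a a) (hsym : ∀ a b, I a b → I b a) (w : List L) :
    ¬ hasRedex (I := I) (nfw A I w) := by
  induction w with
  | nil =>
    rintro ⟨x, e, m, y, hw, -⟩
    exact absurd hw.symm (by simp [nfw_nil])
  | cons a w ih =>
    rw [nfw_cons]
    cases hs : scan A I a (nfw A I w) with
    | none =>
      rw [insw_of_none hs]
      rintro ⟨X, e, m, Y, hw, hm⟩
      cases X with
      | nil =>
        simp only [List.nil_append, List.cons.injEq] at hw
        obtain ⟨rfl, hw⟩ := hw
        rw [scan_none_iff hirr] at hs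
        exact hs ⟨m, Y, hw, hm⟩
      | cons f X' =>
        simp only [List.cons_append, List.cons.injEq] at hw
        exact ih ⟨X', e, m, Y, hw.2, hm⟩
    | some pq =>
      obtain ⟨hv, hp⟩ := (scan_some_iff hirr a _ pq.1 pq.2).mp (by rw [hs])
      rw [insw_of_some hs]
      intro hR
      apply ih
      refine hasRedex_invariant hirr hsym (w := Sum.swap a :: (pq.1 ++ pq.2)) ?_
        (hasRedexG_cons _ _ _ hR)
      rw [hv]
      have hp' : ∀ b ∈ pq.1, extI A I (Sum.swap a) b :=
        fun b hb => (J_swap_left (I := I) a b).mpr (hp b hb)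
      have := T_move hsym pq.1 hp' [] pq.2
      simpa using this.symm

theorem T_nfw_cancel (hirr : ∀ a, ¬ I a a) (hsym : ∀ a b, I a b → I b a)
    (x y : List L) (a : L) :
    T A I (nfw A I (x ++ a :: Sum.swap a :: y)) = T A I (nfw A I (x ++ y)) := by
  rw [nfw_append, nfw_append]
  apply T_foldr_congr hirr hsym x
  rw [show nfw A I (a :: Sum.swap a :: y) =
      insw A I a (insw A I (Sum.swap a) (nfw A I y)) from rfl]
  cases hs : scan A I (Sum.swap a) (nfw A I y) with
  | none =>
    rw [insw_of_none hs, insw_swap_cons]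
  | some pq =>
    obtain ⟨hv, hp⟩ := (scan_some_iff hirr (Sum.swap a) _ pq.1 pq.2).mp (by rw [hs])
    rw [Sum.swap_swap] at hv
    have hp' : ∀ b ∈ pq.1, extI A I a b :=
      fun b hb => (J_swap_left (I := I) a b).mp (hp b hb)
    rw [insw_of_some hs]
    have hnone : scan A I a (pq.1 ++ pq.2) = none := by
      rw [scan_none_iff hirr]
      rintro ⟨r, s, hrs, hr⟩
      apply nfw_noRedex hirr hsym y
      rcases List.append_eq_append_iff.mp hrs with ⟨k, hk1, hk2⟩ | ⟨k, hk1, hk2⟩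
      · -- r = pq.1 ++ k ∧ pq.2 = k ++ swap a :: s
        refine ⟨pq.1, a, k, s, by rw [hv, hk2], ?_⟩
        intro b hb
        exact hr b (by rw [hk1]; exact List.mem_append.mpr (Or.inr hb))
      · -- pq.1 = r ++ k ∧ swap a :: s = k ++ pq.2
        cases k with
        | nil =>
          simp only [List.nil_append] at hk2
          refine ⟨pq.1, a, [], s, by rw [hv, ← hk2]; simp, by simp⟩
        | cons f k' =>
          simp only [List.cons_append, List.cons.injEq] at hk2
          obtain ⟨rfl, -⟩ := hk2
          exfalso
          have : extI A I a (Sum.swap a) := hp' _ (by rw [hk1]; simp)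
          exact J_irr hirr a ((J_swap_right (I := I) a a).mp this)
    rw [insw_of_none hnone, hv]
    have := T_move hsym pq.1 hp' [] pq.2
    simpa using this.symm

/- ### irreducibility -/

theorem isIRR_iff (hirr : ∀ a, ¬ I a a) (hsym : ∀ a b, I a b → I b a) (w : List L) :
    IsIRR A I (T A I w) ↔ ¬ hasRedex (I := I) w := by
  constructor
  · intro hI hR
    obtain ⟨X, e, m, Y, rfl, hm⟩ := hR
    apply hI
    refine ⟨T A I (X ++ m), T A I Y, e, ?_⟩
    have h1 : T A I ((X ++ m) ++ e :: (Sum.swap e :: Y)) =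
        T A I (X ++ e :: (m ++ Sum.swap e :: Y)) := by
      have := T_move hsym m hm X (Sum.swap e :: Y)
      simpa using this
    rw [← h1, show (X ++ m) ++ e :: (Sum.swap e :: Y) =
        ((X ++ m) ++ [e, Sum.swap e]) ++ Y by simp, T_append, T_append]
    rfl
  · rintro hR ⟨u, v, e, ht⟩
    obtain ⟨wu, rfl⟩ := Con.mk'_surjective (c := traceCon (A ⊕ A) (extI A I)) u
    obtain ⟨wv, rfl⟩ := Con.mk'_surjective (c := traceCon (A ⊕ A) (extI A I)) v
    apply hR
    have h2 : T A I (wu.toList ++ e :: Sum.swap e :: wv.toList) =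
        (traceCon (A ⊕ A) (extI A I)).mk' wu *
          trc (A ⊕ A) (extI A I) (FreeMonoid.of e * FreeMonoid.of (Sum.swap e)) *
          (traceCon (A ⊕ A) (extI A I)).mk' wv := by
      unfold T trc
      rw [show wu.toList ++ e :: Sum.swap e :: wv.toList =
          (wu.toList ++ [e, Sum.swap e]) ++ wv.toList by simp,
        FreeMonoid.ofList_append, FreeMonoid.ofList_append, map_mul, map_mul,
        FreeMonoid.ofList_toList, FreeMonoid.ofList_toList]
      rfl
    refine hasRedex_invariant hirr hsym (ht.trans h2.symm).symm ?_
    exact ⟨wu.toList, e, [], wv.toList, rfl, by simp⟩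

theorem T_nfw_of_noRedex (hirr : ∀ a, ¬ I a a) (hsym : ∀ a b, I a b → I b a)
    {w : List L} (h : ¬ hasRedex (I := I) w) : T A I (nfw A I w) = T A I w := by
  induction w with
  | nil => rfl
  | cons a w ih =>
    have hw : ¬ hasRedex (I := I) w := fun hR => h (hasRedexG_cons _ _ a hR)
    rw [nfw_cons]
    cases hs : scan A I a (nfw A I w) with
    | none =>
      rw [insw_of_none hs, T_cons a (nfw A I w), ih hw, ← T_cons a w]
    | some pq =>
      exfalso
      obtain ⟨hv, hp⟩ := (scan_some_iff hirr a _ pq.1 pq.2).mp (by rw [hs])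
      apply h
      refine hasRedex_invariant hirr hsym (w := a :: nfw A I w) ?_
        ⟨[], a, pq.1, pq.2, by rw [hv]; rfl, hp⟩
      rw [T_cons a (nfw A I w), ih hw, ← T_cons a w]

/- ### length -/

theorem SW_length {w w' : List L} (h : SW (I := I) w w') : w.length = w'.length := by
  obtain ⟨x, y, c, d, -, rfl, rfl⟩ := h
  simp

theorem T_toList (u : FreeMonoid (A ⊕ A)) :
    T A I u.toList = (traceCon (A ⊕ A) (extI A I)).mk' u := by
  unfold T trc
  rw [FreeMonoid.ofList_toList]

theorem T_len_congr {w w' : List L} (h : T A I w = T A I w') : w.length = w'.length := by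
  have h' := (T_eq_iff_eqvGen _ _).mp h
  clear h
  induction h' with
  | rel a b hab => exact SW_length hab
  | refl a => rfl
  | symm a b _ ih => exact ih.symm
  | trans a b c _ _ ih₁ ih₂ => exact ih₁.trans ih₂

def tlen (t : GTrace A I) : ℕ :=
  Con.liftOn t (fun u => u.toList.length) (by
    intro u v h
    exact T_len_congr (by rw [T_toList, T_toList]; exact (Con.eq _).mpr h))

theorem tlen_T (w : List L) : tlen (T A I w) = w.length := rfl

/- ### rewriting steps -/

theorem T_redex (wu wv : List L) (e : L) :
    T A I (wu ++ e :: Sum.swap e :: wv) =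
      T A I wu * trc (A ⊕ A) (extI A I) (FreeMonoid.of e * FreeMonoid.of (Sum.swap e)) *
        T A I wv := by
  rw [show wu ++ e :: Sum.swap e :: wv = (wu ++ [e, Sum.swap e]) ++ wv by simp,
    T_append, T_append]
  rfl

theorem RW_of (wu wv : List L) (e : L) :
    RW A I (T A I (wu ++ e :: Sum.swap e :: wv)) (T A I (wu ++ wv)) :=
  ⟨T A I wu, T A I wv, e, T_redex wu wv e, (T_append wu wv).symm⟩

theorem RW_dest {t t' : GTrace A I} (h : RW A I t t') :
    ∃ (wu wv : List L) (e : L),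
      t = T A I (wu ++ e :: Sum.swap e :: wv) ∧ t' = T A I (wu ++ wv) := by
  obtain ⟨u, v, e, rfl, rfl⟩ := h
  obtain ⟨wu, rfl⟩ := Con.mk'_surjective (c := traceCon (A ⊕ A) (extI A I)) u
  obtain ⟨wv, rfl⟩ := Con.mk'_surjective (c := traceCon (A ⊕ A) (extI A I)) v
  refine ⟨wu.toList, wv.toList, e, ?_, ?_⟩
  · rw [T_redex, T_toList, T_toList]
  · rw [T_append, T_toList, T_toList]

theorem tlen_RW {t t' : GTrace A I} (h : RW A I t t') : tlen t' < tlen t := by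
  obtain ⟨wu, wv, e, rfl, rfl⟩ := RW_dest h
  rw [tlen_T, tlen_T]
  simp only [List.length_append, List.length_cons]
  omega

theorem RW_wf : WellFounded (fun x y : GTrace A I => RW A I y x) :=
  Subrelation.wf (fun {x y} h => tlen_RW h) (InvImage.wf tlen Nat.lt_wfRel.wf)

/- ### the normal form map -/

noncomputable def NF (hirr : ∀ a, ¬ I a a) (hsym : ∀ a b, I a b → I b a)
    (t : GTrace A I) : GTrace A I :=
  Con.liftOn t (fun u => T A I (nfw A I u.toList)) (by
    intro u v h
    apply T_nfw_congr hirr hsym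
    rw [T_toList, T_toList]; exact (Con.eq _).mpr h)

theorem NF_T (hirr : ∀ a, ¬ I a a) (hsym : ∀ a b, I a b → I b a) (w : List L) :
    NF hirr hsym (T A I w) = T A I (nfw A I w) := rfl

theorem NF_RW (hirr : ∀ a, ¬ I a a) (hsym : ∀ a b, I a b → I b a)
    {t t' : GTrace A I} (h : RW A I t t') : NF hirr hsym t = NF hirr hsym t' := by
  obtain ⟨wu, wv, e, rfl, rfl⟩ := RW_dest h
  rw [NF_T, NF_T]
  exact T_nfw_cancel hirr hsym wu wv e

theorem NF_RTG (hirr : ∀ a, ¬ I a a) (hsym : ∀ a b, I a b → I b a)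
    {t t' : GTrace A I} (h : Relation.ReflTransGen (RW A I) t t') :
    NF hirr hsym t = NF hirr hsym t' := by
  induction h with
  | refl => rfl
  | tail _ hstep ih => exact ih.trans (NF_RW hirr hsym hstep)

theorem NF_IRR (hirr : ∀ a, ¬ I a a) (hsym : ∀ a b, I a b → I b a) (t : GTrace A I) :
    IsIRR A I (NF hirr hsym t) := by
  obtain ⟨u, rfl⟩ := Con.mk'_surjective (c := traceCon (A ⊕ A) (extI A I)) t
  rw [← T_toList, NF_T]
  exact (isIRR_iff hirr hsym _).mpr (nfw_noRedex hirr hsym u.toList)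

theorem NF_fix (hirr : ∀ a, ¬ I a a) (hsym : ∀ a b, I a b → I b a)
    {t : GTrace A I} (h : IsIRR A I t) : NF hirr hsym t = t := by
  obtain ⟨u, rfl⟩ := Con.mk'_surjective (c := traceCon (A ⊕ A) (extI A I)) t
  rw [← T_toList, NF_T]
  exact T_nfw_of_noRedex hirr hsym ((isIRR_iff hirr hsym _).mp (by rwa [T_toList]))

theorem toNF (hirr : ∀ a, ¬ I a a) (hsym : ∀ a b, I a b → I b a) (t : GTrace A I) :
    Relation.ReflTransGen (RW A I) t (NF hirr hsym t) := by
  obtain ⟨u, rfl⟩ := Con.mk'_surjective (c := traceCon (A ⊕ A) (extI A I)) t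
  rw [← T_toList]
  generalize u.toList = w
  suffices H : ∀ (n : ℕ) (w : List L), w.length = n →
      Relation.ReflTransGen (RW A I) (T A I w) (NF hirr hsym (T A I w)) from H _ w rfl
  intro n
  induction n using Nat.strong_induction_on with
  | _ n ih =>
    intro w hw
    by_cases hR : hasRedex (I := I) w
    · obtain ⟨X, e, m, Y, rfl, hm⟩ := hR
      have h1 : T A I ((X ++ m) ++ e :: Sum.swap e :: Y) =
          T A I (X ++ e :: (m ++ Sum.swap e :: Y)) := by
        simpa using T_move hsym m hm X (Sum.swap e :: Y)
      have step : RW A I (T A I (X ++ e :: (m ++ Sum.swap e :: Y)))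
          (T A I ((X ++ m) ++ Y)) := by
        rw [← h1]
        exact RW_of (X ++ m) Y e
      have hlen : ((X ++ m) ++ Y).length < n := by
        subst hw; simp
      have tail := ih _ hlen ((X ++ m) ++ Y) rfl
      refine Relation.ReflTransGen.head step ?_
      rwa [← NF_RW hirr hsym step] at tail
    · rw [show NF hirr hsym (T A I w) = T A I w from
        (NF_T hirr hsym w).trans (T_nfw_of_noRedex hirr hsym hR)]

/- ### graph group side -/

theorem gg_nfw (hirr : ∀ a, ¬ I a a) (hsym : ∀ a b, I a b → I b a) (w : List L) :
    (ggCon A I).mk' (ofList w) = (ggCon A I).mk' (ofList (nfw A I w)) := by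
  induction w with
  | nil => rfl
  | cons a w ih =>
    have step1 : (ggCon A I).mk' (ofList (a :: w)) =
        (ggCon A I).mk' (ofList (a :: nfw A I w)) := by
      rw [FreeMonoid.ofList_cons, FreeMonoid.ofList_cons, map_mul, map_mul, ih]
    rw [step1, nfw_cons]
    cases hs : scan A I a (nfw A I w) with
    | none => rw [insw_of_none hs]
    | some pq =>
      obtain ⟨hv, hp⟩ := (scan_some_iff hirr a _ pq.1 pq.2).mp (by rw [hs])
      rw [insw_of_some hs]
      have hmove : T A I (a :: nfw A I w) = T A I (pq.1 ++ a :: Sum.swap a :: pq.2) := by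
        rw [hv]
        have := T_move hsym pq.1 hp [] (Sum.swap a :: pq.2)
        simpa using this.symm
      calc (ggCon A I).mk' (ofList (a :: nfw A I w))
          = (ggCon A I).mk' (ofList (pq.1 ++ a :: Sum.swap a :: pq.2)) := gg_of_T hmove
        _ = (ggCon A I).mk' (ofList (pq.1 ++ pq.2)) := gg_cancel pq.1 a pq.2

theorem gg_nfw_congr (hirr : ∀ a, ¬ I a a) (hsym : ∀ a b, I a b → I b a)
    {w w' : List L} (h : (ggCon A I).mk' (ofList w) = (ggCon A I).mk' (ofList w')) :
    T A I (nfw A I w) = T A I (nfw A I w') := by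
  have h' := (gg_eq_iff_eqvGen w w').mp h
  clear h
  induction h' with
  | rel u v huv =>
    rcases huv with hSW | ⟨x, e, y, rfl, rfl⟩
    · obtain ⟨x, y, c, d, hJ, rfl, rfl⟩ := hSW
      exact T_nfw_congr hirr hsym (T_swap hJ x y)
    · exact T_nfw_cancel hirr hsym x y e
  | refl u => rfl
  | symm u v _ ih => exact ih.symm
  | trans u v z _ _ ih₁ ih₂ => exact ih₁.trans ih₂

end Main
end TraceNF

namespace TraceNF
section Main2
variable {A : Type} {I : A → A → Prop}

theorem trc_eq_T (w : FreeMonoid (A ⊕ A)) :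
    trc (A ⊕ A) (extI A I) w = T A I w.toList := by
  unfold T
  rw [FreeMonoid.ofList_toList]

end Main2
end TraceNF

/-- The rewriting removing factors a a⁻¹ is terminating and confluent; every
trace has a unique irreducible normal form, and elements of the graph group
are in bijection with irreducible traces. -/
theorem rewriting_confluent_normal_forms (A : Type) [Fintype A] (I : A → A → Prop)
    (hirr : ∀ a, ¬ I a a) (hsym : ∀ a b, I a b → I b a) :
    WellFounded (fun x y : GTrace A I => RW A I y x) ∧
    (∀ t a b : GTrace A I, Relation.ReflTransGen (RW A I) t a →
      Relation.ReflTransGen (RW A I) t b →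
      ∃ c, Relation.ReflTransGen (RW A I) a c ∧ Relation.ReflTransGen (RW A I) b c) ∧
    (∀ t : GTrace A I, ∃! nf : GTrace A I,
      Relation.ReflTransGen (RW A I) t nf ∧ IsIRR A I nf) ∧
    (∀ g : (ggCon A I).Quotient, ∃! t : GTrace A I, IsIRR A I t ∧
      ∃ w : FreeMonoid (A ⊕ A), t = trc (A ⊕ A) (extI A I) w ∧ g = (ggCon A I).mk' w) := by
  refine ⟨TraceNF.RW_wf, ?_, ?_, ?_⟩
  · intro t a b hta htb
    refine ⟨TraceNF.NF hirr hsym t, ?_, ?_⟩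
    · rw [TraceNF.NF_RTG hirr hsym hta]
      exact TraceNF.toNF hirr hsym a
    · rw [TraceNF.NF_RTG hirr hsym htb]
      exact TraceNF.toNF hirr hsym b
  · intro t
    refine ⟨TraceNF.NF hirr hsym t,
      ⟨TraceNF.toNF hirr hsym t, TraceNF.NF_IRR hirr hsym t⟩, ?_⟩
    rintro y ⟨hy, hyI⟩
    calc y = TraceNF.NF hirr hsym y := (TraceNF.NF_fix hirr hsym hyI).symm
      _ = TraceNF.NF hirr hsym t := (TraceNF.NF_RTG hirr hsym hy).symm
  · intro g
    obtain ⟨u, rfl⟩ := Con.mk'_surjective g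
    refine ⟨TraceNF.T A I (TraceNF.nfw A I u.toList),
      ⟨(TraceNF.isIRR_iff hirr hsym _).mpr (TraceNF.nfw_noRedex hirr hsym u.toList),
        FreeMonoid.ofList (TraceNF.nfw A I u.toList), rfl, ?_⟩, ?_⟩
    · have := TraceNF.gg_nfw hirr hsym u.toList
      rwa [FreeMonoid.ofList_toList] at this
    · rintro t' ⟨hI', w', rfl, hg⟩
      have hcon : (ggCon A I).mk' (FreeMonoid.ofList u.toList) =
          (ggCon A I).mk' (FreeMonoid.ofList w'.toList) := by
        rw [FreeMonoid.ofList_toList, FreeMonoid.ofList_toList]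
        exact hg
      have h1 := TraceNF.gg_nfw_congr hirr hsym hcon
      have h2 : TraceNF.T A I (TraceNF.nfw A I w'.toList) = TraceNF.T A I w'.toList :=
        TraceNF.T_nfw_of_noRedex hirr hsym ((TraceNF.isIRR_iff hirr hsym _).mp
          (by rw [TraceNF.T_toList]; exact (by rwa [TraceNF.trc_eq_T, TraceNF.T_toList] at hI')))
      rw [TraceNF.trc_eq_T, ← h2, h1]
end

section
/- For every cyclically reduced irreducible trace w ∈ IRR(A^{±1},I) and every n ∈ ℕ, the power w^n is irreducible. -/
/-- A cyclically reduced trace: not of the form a v a⁻¹. -/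
def CycReduced (A : Type) (I : A → A → Prop) (t : GTrace A I) : Prop :=
  ¬ ∃ (a : A ⊕ A) (v : GTrace A I),
      t = trc (A ⊕ A) (extI A I) (FreeMonoid.of a) * v *
            trc (A ⊕ A) (extI A I) (FreeMonoid.of (Sum.swap a))

-- ######## auxiliary development ########

section ListAux
variable {α : Type}

lemma get_mid (u v : List α) (x y : α) (k : ℕ)
    (hk : k < (u ++ x :: y :: v).length) :
    (u ++ x :: y :: v)[k]'hk =
      if h : k < u.length then u[k]'h
      else if h2 : k = u.length then x
      else if h3 : k = u.length + 1 then y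
      else v[k - (u.length + 2)]'(by simp at hk; omega) := by
  by_cases h : k < u.length
  · rw [List.getElem_append_left h]; simp [h]
  · push_neg at h
    rw [List.getElem_append_right h]
    rcases Nat.lt_trichotomy k u.length with h1 | h1 | h1
    · omega
    · subst h1; simp
    · by_cases h2 : k = u.length + 1
      · subst h2; simp
      · have hd : k - u.length = k - (u.length + 2) + 1 + 1 := by omega
        simp only [hd, List.getElem_cons_succ]
        simp [h1.ne', h2, Nat.not_lt.mpr h]

def lpow : ℕ → List α → List α
  | 0, _ => []
  | n + 1, y => y ++ lpow n y

lemma lpow_length (n : ℕ) (y : List α) : (lpow n y).length = n * y.length := by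
  induction n with
  | zero => simp [lpow]
  | succ n ih => simp [lpow, ih]; ring

lemma lpow_getElem (n : ℕ) (y : List α) (k : ℕ) (hk : k < (lpow n y).length)
    (hk2 : k % y.length < y.length) :
    (lpow n y)[k]'hk = y[k % y.length]'hk2 := by
  induction n generalizing k with
  | zero => simp [lpow] at hk
  | succ n ih =>
    by_cases h : k < y.length
    · have h2 : k % y.length = k := Nat.mod_eq_of_lt h
      simp only [lpow]
      rw [List.getElem_append_left h]
      simp only [h2]
    · push_neg at h
      simp only [lpow]
      rw [List.getElem_append_right h]
      have h3 : k % y.length = (k - y.length) % y.length := Nat.mod_eq_sub_mod h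
      rw [ih (k - y.length) (by simp [lpow, lpow_length] at hk ⊢; omega) (by omega)]
      simp only [h3]

lemma ofList_lpow (n : ℕ) (y : List α) :
    FreeMonoid.ofList (lpow n y) = (FreeMonoid.ofList y) ^ n := by
  induction n with
  | zero => simp [lpow]
  | succ n ih => rw [lpow, FreeMonoid.ofList_append, ih, pow_succ']

lemma exists_split (l : List α) (i j : ℕ) (hij : i < j) (hj : j < l.length) :
    ∃ p m s : List α,
      l = p ++ (l[i]'(hij.trans hj)) :: m ++ (l[j]'hj) :: s ∧
      (∀ d ∈ p, ∃ (k : ℕ) (hk : k < i), d = l[k]'(by omega)) ∧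
      (∀ d ∈ m, ∃ (k : ℕ) (hk1 : i < k) (hk2 : k < j), d = l[k]'(hk2.trans hj)) ∧
      (∀ d ∈ s, ∃ (k : ℕ) (hk1 : j < k) (hk2 : k < l.length), d = l[k]'hk2) := by
  refine ⟨l.take i, (l.drop (i+1)).take (j - (i+1)), l.drop (j+1), ?_, ?_, ?_, ?_⟩
  · have h1 : l = l.take i ++ l.drop i := (List.take_append_drop i l).symm
    have h2 : l.drop i = (l[i]'(hij.trans hj)) :: l.drop (i+1) :=
      List.drop_eq_getElem_cons _
    have h3 : l.drop (i+1) = (l.drop (i+1)).take (j - (i+1)) ++ (l.drop (i+1)).drop (j - (i+1)) :=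
      (List.take_append_drop _ _).symm
    have h4 : (l.drop (i+1)).drop (j - (i+1)) = l.drop j := by
      rw [List.drop_drop]; congr 1; omega
    have h5 : l.drop j = (l[j]'hj) :: l.drop (j+1) := List.drop_eq_getElem_cons _
    conv_lhs => rw [h1, h2, h3, h4, h5]
    simp
  · intro d hd
    rw [List.mem_iff_getElem] at hd
    obtain ⟨k, hk, he⟩ := hd
    have hk' : k < i := by simp at hk; omega
    refine ⟨k, hk', ?_⟩
    rw [← he]
    simp [List.getElem_take]
  · intro d hd
    rw [List.mem_iff_getElem] at hd
    obtain ⟨k, hk, he⟩ := hd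
    have hkd : k < j - (i+1) ∧ i + 1 + k < l.length := by simp at hk; omega
    refine ⟨i + 1 + k, by omega, by omega, ?_⟩
    rw [← he]
    simp [List.getElem_take, List.getElem_drop]
  · intro d hd
    rw [List.mem_iff_getElem] at hd
    obtain ⟨k, hk, he⟩ := hd
    have hkd : j + 1 + k < l.length := by simp at hk; omega
    refine ⟨j + 1 + k, by omega, hkd, ?_⟩
    rw [← he]
    simp [List.getElem_drop]

end ListAux

namespace CRP

variable {A : Type} {I : A → A → Prop}

lemma extI_symm (hsym : ∀ a b, I a b → I b a) {c d : A ⊕ A} (h : extI A I c d) :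
    extI A I d c := hsym _ _ h

lemma extI_swap_left (c d : A ⊕ A) : extI A I (Sum.swap c) d ↔ extI A I c d := by
  cases c <;> exact Iff.rfl

lemma extI_swap_right (c d : A ⊕ A) : extI A I d (Sum.swap c) ↔ extI A I d c := by
  cases c <;> exact Iff.rfl

lemma not_extI_self (hirr : ∀ a, ¬ I a a) (c : A ⊕ A) : ¬ extI A I c c := by
  cases c <;> exact hirr _

lemma not_extI_swap_left (hirr : ∀ a, ¬ I a a) (c : A ⊕ A) : ¬ extI A I (Sum.swap c) c :=
  fun h => not_extI_self hirr c ((extI_swap_left c c).mp h)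

lemma swap_ne (c : A ⊕ A) : Sum.swap c ≠ c := by cases c <;> simp

/-- One swap of adjacent independent letters. -/
def Step (A : Type) (I : A → A → Prop) (z z' : List (A ⊕ A)) : Prop :=
  ∃ (u v : List (A ⊕ A)) (a b : A ⊕ A),
    extI A I a b ∧ z = u ++ a :: b :: v ∧ z' = u ++ b :: a :: v

/-- Chains of swaps. -/
def Chain (A : Type) (I : A → A → Prop) : List (A ⊕ A) → List (A ⊕ A) → Prop :=
  Relation.EqvGen (Step A I)

lemma step_symm (hsym : ∀ a b, I a b → I b a) {z z' : List (A ⊕ A)} (h : Step A I z z') :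
    Step A I z' z := by
  obtain ⟨u, v, a, b, hI, rfl, rfl⟩ := h
  exact ⟨u, v, b, a, extI_symm hsym hI, rfl, rfl⟩

lemma chain_refl (z : List (A ⊕ A)) : Chain A I z z := Relation.EqvGen.refl z

lemma chain_symm {z z' : List (A ⊕ A)} (h : Chain A I z z') : Chain A I z' z :=
  Relation.EqvGen.symm _ _ h

lemma chain_trans {x y z : List (A ⊕ A)} (h : Chain A I x y) (h' : Chain A I y z) :
    Chain A I x z := Relation.EqvGen.trans _ _ _ h h'

lemma step_append_right {z z' : List (A ⊕ A)} (t : List (A ⊕ A)) (h : Step A I z z') :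
    Step A I (z ++ t) (z' ++ t) := by
  obtain ⟨u, v, a, b, hI, rfl, rfl⟩ := h
  exact ⟨u, v ++ t, a, b, hI, by simp, by simp⟩

lemma step_append_left {z z' : List (A ⊕ A)} (t : List (A ⊕ A)) (h : Step A I z z') :
    Step A I (t ++ z) (t ++ z') := by
  obtain ⟨u, v, a, b, hI, rfl, rfl⟩ := h
  exact ⟨t ++ u, v, a, b, hI, by simp, by simp⟩

lemma chain_append_right {z z' : List (A ⊕ A)} (h : Chain A I z z') (t : List (A ⊕ A)) :
    Chain A I (z ++ t) (z' ++ t) := by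
  induction h with
  | rel x y hxy => exact Relation.EqvGen.rel _ _ (step_append_right t hxy)
  | refl x => exact chain_refl _
  | symm x y _ ih => exact chain_symm ih
  | trans x y z _ _ ih1 ih2 => exact chain_trans ih1 ih2

lemma chain_append_left {z z' : List (A ⊕ A)} (h : Chain A I z z') (t : List (A ⊕ A)) :
    Chain A I (t ++ z) (t ++ z') := by
  induction h with
  | rel x y hxy => exact Relation.EqvGen.rel _ _ (step_append_left t hxy)
  | refl x => exact chain_refl _
  | symm x y _ ih => exact chain_symm ih
  | trans x y z _ _ ih1 ih2 => exact chain_trans ih1 ih2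

lemma chain_mul {x y z t : List (A ⊕ A)} (h : Chain A I x y) (h' : Chain A I z t) :
    Chain A I (x ++ z) (y ++ t) :=
  chain_trans (chain_append_right h z) (chain_append_left h' y)

lemma traceCon_of_step {z z' : List (A ⊕ A)} (h : Step A I z z') :
    traceCon (A ⊕ A) (extI A I) (FreeMonoid.ofList z) (FreeMonoid.ofList z') := by
  obtain ⟨u, v, a, b, hI, rfl, rfl⟩ := h
  have base : traceCon (A ⊕ A) (extI A I) (FreeMonoid.of a * FreeMonoid.of b)
      (FreeMonoid.of b * FreeMonoid.of a) :=
    ConGen.Rel.of _ _ ⟨a, b, hI, rfl, rfl⟩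
  have h1 : FreeMonoid.ofList (u ++ a :: b :: v) =
      FreeMonoid.ofList u * ((FreeMonoid.of a * FreeMonoid.of b) * FreeMonoid.ofList v) := by
    simp [FreeMonoid.ofList_append, FreeMonoid.ofList_cons, mul_assoc]
  have h2 : FreeMonoid.ofList (u ++ b :: a :: v) =
      FreeMonoid.ofList u * ((FreeMonoid.of b * FreeMonoid.of a) * FreeMonoid.ofList v) := by
    simp [FreeMonoid.ofList_append, FreeMonoid.ofList_cons, mul_assoc]
  rw [h1, h2]
  exact (traceCon _ _).mul ((traceCon _ _).refl _)
    ((traceCon _ _).mul base ((traceCon _ _).refl _))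

lemma traceCon_of_chain {z z' : List (A ⊕ A)} (h : Chain A I z z') :
    traceCon (A ⊕ A) (extI A I) (FreeMonoid.ofList z) (FreeMonoid.ofList z') := by
  induction h with
  | rel x y hxy => exact traceCon_of_step hxy
  | refl x => exact (traceCon _ _).refl _
  | symm x y _ ih => exact (traceCon _ _).symm ih
  | trans x y z _ _ ih1 ih2 => exact (traceCon _ _).trans ih1 ih2

/-- The congruence whose relation is `Chain`. -/
def chainCon (A : Type) (I : A → A → Prop) : Con (FreeMonoid (A ⊕ A)) where
  r x y := Chain A I (FreeMonoid.toList x) (FreeMonoid.toList y)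
  iseqv := ⟨fun _ => chain_refl _, chain_symm, chain_trans⟩
  mul' {a b c d} h h' := by
    simpa [FreeMonoid.toList_mul] using chain_mul h h'

lemma chain_of_traceCon {x y : FreeMonoid (A ⊕ A)}
    (h : traceCon (A ⊕ A) (extI A I) x y) :
    Chain A I (FreeMonoid.toList x) (FreeMonoid.toList y) := by
  have hle : traceCon (A ⊕ A) (extI A I) ≤ chainCon A I := by
    apply Con.conGen_le.mpr
    rintro x y ⟨a, b, hI, rfl, rfl⟩
    exact Relation.EqvGen.rel _ _ ⟨[], [], a, b, hI, rfl, rfl⟩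
  exact hle h

lemma trc_eq_iff {p q : FreeMonoid (A ⊕ A)} :
    trc (A ⊕ A) (extI A I) p = trc (A ⊕ A) (extI A I) q ↔
      traceCon (A ⊕ A) (extI A I) p q := Con.eq _

/-- Between any occurrence of a letter `c` and a later occurrence of `c⁻¹` there is a letter
dependent on `c`. -/
def NoRed (A : Type) (I : A → A → Prop) (l : List (A ⊕ A)) : Prop :=
  ∀ (i j : ℕ) (hij : i < j) (hj : j < l.length),
    l[j]'hj = Sum.swap (l[i]'(hij.trans hj)) →
    ∃ (k : ℕ) (h1 : i < k) (h2 : k < j),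
      ¬ extI A I (l[k]'(h2.trans hj)) (l[i]'(hij.trans hj))

lemma nored_step (hirr : ∀ a, ¬ I a a) (hsym : ∀ a b, I a b → I b a)
    {z z' : List (A ⊕ A)} (hs : Step A I z z') (hNR : NoRed A I z) : NoRed A I z' := by
  obtain ⟨u, v, a, b, hI, rfl, rfl⟩ := hs
  set m := u.length with hm
  have hL : (u ++ b :: a :: v).length = (u ++ a :: b :: v).length := by simp
  have hlen1 : (u ++ a :: b :: v).length = m + v.length + 2 := by simp [hm]; omega
  have hza : ∀ (h : m < (u ++ a :: b :: v).length), (u ++ a :: b :: v)[m]'h = a := by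
    intro h; rw [get_mid]; simp [hm]
  have hzb : ∀ (h : m + 1 < (u ++ a :: b :: v).length), (u ++ a :: b :: v)[m+1]'h = b := by
    intro h; rw [get_mid]; simp [hm]
  have hz'b : ∀ (h : m < (u ++ b :: a :: v).length), (u ++ b :: a :: v)[m]'h = b := by
    intro h; rw [get_mid]; simp [hm]
  have hz'a : ∀ (h : m + 1 < (u ++ b :: a :: v).length), (u ++ b :: a :: v)[m+1]'h = a := by
    intro h; rw [get_mid]; simp [hm]
  have heq : ∀ (k : ℕ) (hk : k < (u ++ b :: a :: v).length), k ≠ m → k ≠ m + 1 →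
      (u ++ b :: a :: v)[k]'hk = (u ++ a :: b :: v)[k]'(by rw [← hL]; exact hk) := by
    intro k hk h1 h2
    rw [get_mid, get_mid]
    rw [hm] at h1 h2
    by_cases hlt : k < u.length <;> simp [hlt, h1, h2]
  intro i j hij hj hlet
  by_cases hi_m : i = m
  · subst hi_m
    by_cases hj_m1 : j = m + 1
    · subst hj_m1
      rw [hz'a hj, hz'b (by omega)] at hlet
      exact absurd hI (by rw [hlet]; exact not_extI_swap_left hirr b)
    · -- i = m, j ≥ m + 2
      have hj2 : m + 2 ≤ j := by omega
      have hjz : j < (u ++ a :: b :: v).length := by omega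
      have hlet' : (u ++ a :: b :: v)[j]'hjz =
          Sum.swap ((u ++ a :: b :: v)[m+1]'(by omega)) := by
        rw [hzb, ← heq j hj (by omega) (by omega), hlet, hz'b]
      obtain ⟨k, hk1, hk2, hdep⟩ := hNR (m+1) j (by omega) hjz hlet'
      refine ⟨k, by omega, hk2, ?_⟩
      rw [heq k (by omega) (by omega) (by omega), hz'b]
      rw [hzb (by omega)] at hdep
      exact hdep
  · by_cases hi_m1 : i = m + 1
    · subst hi_m1
      have hj2 : m + 2 ≤ j := by omega
      have hjz : j < (u ++ a :: b :: v).length := by omega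
      have hlet' : (u ++ a :: b :: v)[j]'hjz =
          Sum.swap ((u ++ a :: b :: v)[m]'(by omega)) := by
        rw [hza, ← heq j hj (by omega) (by omega), hlet, hz'a]
      obtain ⟨k, hk1, hk2, hdep⟩ := hNR m j (by omega) hjz hlet'
      rw [hza (by omega)] at hdep
      have hkm1 : k ≠ m + 1 := by
        intro h; subst h
        rw [hzb (by omega)] at hdep
        exact hdep (extI_symm hsym hI)
      refine ⟨k, by omega, hk2, ?_⟩
      rw [heq k (by omega) (by omega) hkm1, hz'a]
      exact hdep
    · -- i ∉ {m, m+1}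
      have hiz : (u ++ b :: a :: v)[i]'(hij.trans hj) =
          (u ++ a :: b :: v)[i]'(by omega) := heq i _ hi_m hi_m1
      by_cases hj_m : j = m
      · subst hj_m
        have him : i < m := by omega
        have hlet' : (u ++ a :: b :: v)[m+1]'(by omega) =
            Sum.swap ((u ++ a :: b :: v)[i]'(by omega)) := by
          rw [hzb, ← hiz, ← hlet, hz'b]
        obtain ⟨k, hk1, hk2, hdep⟩ := hNR i (m+1) (by omega) (by omega) hlet'
        rw [← hiz] at hdep
        have hbswap : b = Sum.swap ((u ++ b :: a :: v)[i]'(hij.trans hj)) := by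
          rw [← hlet, hz'b]
        have hkm : k ≠ m := by
          intro h; subst h
          rw [hza (by omega)] at hdep
          apply hdep
          have : extI A I a (Sum.swap ((u ++ b :: a :: v)[i]'(hij.trans hj))) := by
            rw [← hbswap]; exact hI
          rwa [extI_swap_right] at this
        refine ⟨k, hk1, by omega, ?_⟩
        rw [heq k (by omega) hkm (by omega)]
        exact hdep
      · by_cases hj_m1 : j = m + 1
        · subst hj_m1
          have him : i < m := by omega
          have hlet' : (u ++ a :: b :: v)[m]'(by omega) =
              Sum.swap ((u ++ a :: b :: v)[i]'(by omega)) := by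
            rw [hza, ← hiz, ← hlet, hz'a]
          obtain ⟨k, hk1, hk2, hdep⟩ := hNR i m (by omega) (by omega) hlet'
          rw [← hiz] at hdep
          refine ⟨k, hk1, by omega, ?_⟩
          rw [heq k (by omega) (by omega) (by omega)]
          exact hdep
        · -- j ∉ {m, m+1} as well
          have hjz : (u ++ b :: a :: v)[j]'hj =
              (u ++ a :: b :: v)[j]'(by omega) := heq j _ hj_m hj_m1
          have hlet' : (u ++ a :: b :: v)[j]'(by omega) =
              Sum.swap ((u ++ a :: b :: v)[i]'(by omega)) := by
            rw [← hiz, ← hjz]; exact hlet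
          obtain ⟨k, hk1, hk2, hdep⟩ := hNR i j hij (by omega) hlet'
          rw [← hiz] at hdep
          by_cases hk_m : k = m
          · subst hk_m
            have hj2 : m + 2 ≤ j := by omega
            refine ⟨m + 1, by omega, by omega, ?_⟩
            rw [hz'a (by omega)]
            rwa [hza (by omega)] at hdep
          · by_cases hk_m1 : k = m + 1
            · subst hk_m1
              have him : i < m := by omega
              refine ⟨m, by omega, by omega, ?_⟩
              rw [hz'b (by omega)]
              rwa [hzb (by omega)] at hdep
            · refine ⟨k, hk1, hk2, ?_⟩
              rw [heq k (by omega) hk_m hk_m1]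
              exact hdep

lemma nored_chain (hirr : ∀ a, ¬ I a a) (hsym : ∀ a b, I a b → I b a)
    {z z' : List (A ⊕ A)} (h : Chain A I z z') : NoRed A I z ↔ NoRed A I z' := by
  induction h with
  | rel x y hxy => exact ⟨nored_step hirr hsym hxy, nored_step hirr hsym (step_symm hsym hxy)⟩
  | refl x => exact Iff.rfl
  | symm x y _ ih => exact ih.symm
  | trans x y z _ _ ih1 ih2 => exact ih1.trans ih2

lemma not_nored_factor (l1 l2 : List (A ⊕ A)) (c : A ⊕ A) :
    ¬ NoRed A I (l1 ++ c :: Sum.swap c :: l2) := by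
  intro h
  have hlen : (l1 ++ c :: Sum.swap c :: l2).length = l1.length + l2.length + 2 := by
    simp; omega
  obtain ⟨k, hk1, hk2, _⟩ := h l1.length (l1.length + 1) (by omega) (by omega)
    (by rw [get_mid, get_mid]; simp)
  omega

lemma move_right {c : A ⊕ A} {m : List (A ⊕ A)} (h : ∀ d ∈ m, extI A I c d) :
    Chain A I (c :: m) (m ++ [c]) := by
  induction m with
  | nil => exact chain_refl _
  | cons d m ih =>
    have hstep : Chain A I (c :: d :: m) (d :: c :: m) :=
      Relation.EqvGen.rel _ _ ⟨[], m, c, d, h d (by simp), rfl, rfl⟩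
    exact chain_trans hstep (chain_append_left (ih fun e he => h e (by simp [he])) [d])

lemma move_left {c : A ⊕ A} {p : List (A ⊕ A)} (h : ∀ d ∈ p, extI A I d c) :
    Chain A I (p ++ [c]) (c :: p) := by
  induction p with
  | nil => exact chain_refl _
  | cons d p ih =>
    have hstep : Chain A I (d :: c :: p) (c :: d :: p) :=
      Relation.EqvGen.rel _ _ ⟨[], p, d, c, h d (by simp), rfl, rfl⟩
    exact chain_trans (chain_append_left (ih fun e he => h e (by simp [he])) [d]) hstep

end CRP

namespace CRP
variable {A : Type} {I : A → A → Prop}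

lemma nored_lpow (hirr : ∀ a, ¬ I a a) (y : List (A ⊕ A)) (hy : NoRed A I y)
    (hcyc : ∀ (c : A ⊕ A) (i0 j0 : ℕ) (hji : j0 < i0) (hi : i0 < y.length),
        y[i0]'hi = c → y[j0]'(hji.trans hi) = Sum.swap c →
        (∀ (k : ℕ) (hk : k < j0), extI A I (y[k]'(hk.trans (hji.trans hi))) c) →
        (∀ (k : ℕ) (hk1 : i0 < k) (hk2 : k < y.length), extI A I (y[k]'hk2) c) → False)
    (n : ℕ) : NoRed A I (lpow n y) := by
  intro i j hij hj hlet
  by_contra hcon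
  simp only [not_exists, not_not] at hcon
  -- basic setup
  have hLn : (lpow n y).length = n * y.length := lpow_length n y
  have hL0 : 0 < y.length := by
    rcases Nat.eq_zero_or_pos y.length with h | h
    · rw [hLn, h, Nat.mul_zero] at hj; omega
    · exact h
  have hget : ∀ (k : ℕ) (hk : k < (lpow n y).length) (r : ℕ) (hr : k % y.length = r)
      (hrL : r < y.length), (lpow n y)[k]'hk = y[r]'hrL := by
    intro k hk r hr hrL
    rw [lpow_getElem n y k hk (by omega)]
    simp only [hr]
  have hdmi := Nat.div_add_mod i y.length
  have hdmj := Nat.div_add_mod j y.length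
  have hiL := Nat.mod_lt i hL0
  have hjL := Nat.mod_lt j hL0
  have hst : i / y.length ≤ j / y.length := Nat.div_le_div_right hij.le
  obtain ⟨s, hs⟩ : ∃ s, i / y.length = s := ⟨_, rfl⟩
  obtain ⟨t, ht⟩ : ∃ t, j / y.length = t := ⟨_, rfl⟩
  obtain ⟨i0, hi0⟩ : ∃ r, i % y.length = r := ⟨_, rfl⟩
  obtain ⟨j0, hj0⟩ : ∃ r, j % y.length = r := ⟨_, rfl⟩
  rw [hs, hi0] at hdmi
  rw [ht, hj0] at hdmj
  rw [hi0] at hiL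
  rw [hj0] at hjL
  rw [hs, ht] at hst
  obtain ⟨M, hM⟩ : ∃ M, y.length * s = M := ⟨_, rfl⟩
  obtain ⟨N, hN⟩ : ∃ N, y.length * t = N := ⟨_, rfl⟩
  rw [hM] at hdmi
  rw [hN] at hdmj
  have hi0L : i0 < y.length := hiL
  have hj0L : j0 < y.length := hjL
  have hmodM : ∀ k0 : ℕ, (M + k0) % y.length = k0 % y.length := by
    intro k0; rw [← hM, Nat.mul_add_mod]
  have hmodM1 : ∀ k0 : ℕ, (M + y.length + k0) % y.length = k0 % y.length := by
    intro k0
    have h : M + y.length + k0 = y.length * (s + 1) + k0 := by rw [← hM]; ring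
    rw [h, Nat.mul_add_mod]
  have e_i : (lpow n y)[i]'(hij.trans hj) = y[i0]'hi0L := hget i _ i0 hi0 hi0L
  have e_j : (lpow n y)[j]'hj = y[j0]'hj0L := hget j _ j0 hj0 hj0L
  have hlet' : y[j0]'hj0L = Sum.swap (y[i0]'hi0L) := by rw [← e_j, ← e_i]; exact hlet
  rcases (by omega : t = s ∨ t = s + 1 ∨ s + 2 ≤ t) with hcase | hcase | hcase
  · -- same copy
    have hNM : N = M := by rw [← hN, ← hM, hcase]
    have hij0 : i0 < j0 := by omega
    obtain ⟨k0, hk01, hk02, hdep⟩ := hy i0 j0 hij0 hj0L hlet'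
    have hk0L : k0 < y.length := by omega
    have hb := hcon (M + k0) (by omega) (by omega)
    have e_k : (lpow n y)[M + k0]'(by omega) = y[k0]'hk0L :=
      hget _ (by omega) k0 (by rw [hmodM k0]; exact Nat.mod_eq_of_lt hk0L) hk0L
    rw [e_k, e_i] at hb
    exact hdep hb
  · -- adjacent copies
    have hNM : N = M + y.length := by rw [← hN, ← hM, hcase]; ring
    have hsuf : ∀ (k0 : ℕ) (hk1 : i0 < k0) (hk2 : k0 < y.length),
        extI A I (y[k0]'hk2) (y[i0]'hi0L) := by
      intro k0 hk1 hk2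
      have hb := hcon (M + k0) (by omega) (by omega)
      have e_k : (lpow n y)[M + k0]'(by omega) = y[k0]'hk2 :=
        hget _ (by omega) k0 (by rw [hmodM k0]; exact Nat.mod_eq_of_lt hk2) hk2
      rwa [e_k, e_i] at hb
    have hpre : ∀ (k0 : ℕ) (hk : k0 < j0),
        extI A I (y[k0]'(hk.trans hj0L)) (y[i0]'hi0L) := by
      intro k0 hk
      have hb := hcon (M + y.length + k0) (by omega) (by omega)
      have e_k : (lpow n y)[M + y.length + k0]'(by omega) = y[k0]'(hk.trans hj0L) :=
        hget _ (by omega) k0 (by rw [hmodM1 k0]; exact Nat.mod_eq_of_lt (by omega)) _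
      rwa [e_k, e_i] at hb
    rcases Nat.lt_trichotomy i0 j0 with h0 | h0 | h0
    · exact not_extI_swap_left hirr _ (by rw [← hlet']; exact hsuf j0 h0 hj0L)
    · subst h0
      exact swap_ne _ hlet'.symm
    · exact hcyc (y[i0]'hi0L) i0 j0 h0 hi0L rfl hlet' hpre hsuf
  · -- distant copies: a copy of the letter in between
    have h2L : M + 2 * y.length ≤ N := by
      rw [← hN, ← hM]
      calc y.length * s + 2 * y.length = y.length * (s + 2) := by ring
        _ ≤ y.length * t := Nat.mul_le_mul_left _ hcase
    have hb := hcon (M + y.length + i0) (by omega) (by omega)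
    have e_k : (lpow n y)[M + y.length + i0]'(by omega) = y[i0]'hi0L :=
      hget _ (by omega) i0 (by rw [hmodM1 i0]; exact Nat.mod_eq_of_lt hi0L) hi0L
    rw [e_k, e_i] at hb
    exact not_extI_self hirr _ hb

end CRP

namespace CRP
variable {A : Type} {I : A → A → Prop}

lemma trc_ofList_append (l1 l2 : List (A ⊕ A)) :
    trc (A ⊕ A) (extI A I) (FreeMonoid.ofList (l1 ++ l2)) =
      trc (A ⊕ A) (extI A I) (FreeMonoid.ofList l1) *
        trc (A ⊕ A) (extI A I) (FreeMonoid.ofList l2) := by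
  simp only [trc, FreeMonoid.ofList_append, map_mul]

lemma nored_of_irr (hsym : ∀ a b, I a b → I b a) {y : List (A ⊕ A)}
    (h1 : IsIRR A I (trc (A ⊕ A) (extI A I) (FreeMonoid.ofList y))) : NoRed A I y := by
  by_contra hcon
  unfold NoRed at hcon
  push_neg at hcon
  obtain ⟨i, j, hij, hj, hlet, hall⟩ := hcon
  obtain ⟨p, m, s, heq, hp, hm, hs⟩ := exists_split y i j hij hj
  obtain ⟨c, hc⟩ : ∃ c, y[i]'(hij.trans hj) = c := ⟨_, rfl⟩
  rw [hc] at hlet heq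
  rw [hlet] at heq
  have hmc : ∀ d ∈ m, extI A I c d := by
    intro d hd
    obtain ⟨k, hk1, hk2, rfl⟩ := hm d hd
    rw [← hc]
    exact extI_symm hsym (hall k hk1 hk2)
  have hchain : Chain A I y ((p ++ m) ++ c :: Sum.swap c :: s) := by
    have h0 : Chain A I (c :: m) (m ++ [c]) := move_right hmc
    have h2 := chain_append_left (chain_append_right h0 (Sum.swap c :: s)) p
    have e1 : y = p ++ ((c :: m) ++ (Sum.swap c :: s)) := heq.trans (by simp)
    have e2 : p ++ ((m ++ [c]) ++ (Sum.swap c :: s)) =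
        (p ++ m) ++ c :: Sum.swap c :: s := by simp
    rw [e1, ← e2]
    exact h2
  apply h1
  refine ⟨trc _ _ (FreeMonoid.ofList (p ++ m)), trc _ _ (FreeMonoid.ofList s), c, ?_⟩
  have hr : trc (A ⊕ A) (extI A I) (FreeMonoid.ofList (p ++ m)) *
      trc (A ⊕ A) (extI A I) (FreeMonoid.of c * FreeMonoid.of (Sum.swap c)) *
      trc (A ⊕ A) (extI A I) (FreeMonoid.ofList s) =
      trc (A ⊕ A) (extI A I) (FreeMonoid.ofList ((p ++ m) ++ c :: Sum.swap c :: s)) := by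
    simp only [trc, FreeMonoid.ofList_append, FreeMonoid.ofList_cons, map_mul, mul_assoc]
  rw [hr, trc_eq_iff]
  exact traceCon_of_chain hchain

end CRP

namespace CRP
variable {A : Type} {I : A → A → Prop}

lemma cyc_hyp (hsym : ∀ a b, I a b → I b a) {y : List (A ⊕ A)}
    (h2 : CycReduced A I (trc (A ⊕ A) (extI A I) (FreeMonoid.ofList y))) :
    ∀ (c : A ⊕ A) (i0 j0 : ℕ) (hji : j0 < i0) (hi : i0 < y.length),
      y[i0]'hi = c → y[j0]'(hji.trans hi) = Sum.swap c →
      (∀ (k : ℕ) (hk : k < j0), extI A I (y[k]'(hk.trans (hji.trans hi))) c) →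
      (∀ (k : ℕ) (hk1 : i0 < k) (hk2 : k < y.length), extI A I (y[k]'hk2) c) → False := by
  intro c i0 j0 hji hi hc hc' hpre hsuf
  obtain ⟨p, m, s, heq, hp, hm, hs⟩ := exists_split y j0 i0 hji hi
  rw [hc, hc'] at heq
  have hpc : ∀ d ∈ p, extI A I d (Sum.swap c) := by
    intro d hd; obtain ⟨k, hk, rfl⟩ := hp d hd
    rw [extI_swap_right]
    exact hpre k hk
  have hsc : ∀ d ∈ s, extI A I c d := by
    intro d hd; obtain ⟨k, hk1, hk2, rfl⟩ := hs d hd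
    exact extI_symm hsym (hsuf k hk1 hk2)
  have c1 : Chain A I (c :: s) (s ++ [c]) := move_right hsc
  have c2 : Chain A I (m ++ (c :: s)) (m ++ (s ++ [c])) := chain_append_left c1 m
  have c3 : Chain A I (p ++ [Sum.swap c]) (Sum.swap c :: p) := move_left hpc
  have c4 : Chain A I ((p ++ [Sum.swap c]) ++ (m ++ (c :: s)))
      ((Sum.swap c :: p) ++ (m ++ (s ++ [c]))) :=
    chain_trans (chain_append_right c3 _) (chain_append_left c2 _)
  have e1 : y = (p ++ [Sum.swap c]) ++ (m ++ (c :: s)) := heq.trans (by simp)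
  have hchain : Chain A I y ((Sum.swap c :: p) ++ (m ++ (s ++ [c]))) := by
    rw [e1]; exact c4
  apply h2
  refine ⟨Sum.swap c, trc _ _ (FreeMonoid.ofList (p ++ m ++ s)), ?_⟩
  rw [Sum.swap_swap]
  have hr : trc (A ⊕ A) (extI A I) (FreeMonoid.of (Sum.swap c)) *
      trc (A ⊕ A) (extI A I) (FreeMonoid.ofList (p ++ m ++ s)) *
      trc (A ⊕ A) (extI A I) (FreeMonoid.of c) =
      trc (A ⊕ A) (extI A I)
        (FreeMonoid.ofList ((Sum.swap c :: p) ++ (m ++ (s ++ [c])))) := by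
    simp only [trc, FreeMonoid.ofList_append, FreeMonoid.ofList_cons,
      FreeMonoid.ofList_singleton, FreeMonoid.ofList_nil, map_mul, map_one,
      mul_one, mul_assoc]
  rw [hr, trc_eq_iff]
  exact traceCon_of_chain hchain

end CRP


open CRP in
/-- Powers of a cyclically reduced irreducible trace are irreducible. -/
theorem cyclically_reduced_power_irreducible (A : Type) [Fintype A]
    (I : A → A → Prop) (hirr : ∀ a, ¬ I a a) (hsym : ∀ a b, I a b → I b a)
    (w : GTrace A I) (h1 : IsIRR A I w) (h2 : CycReduced A I w) (n : ℕ) :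
    IsIRR A I (w ^ n) := by
  rintro ⟨u, v, a, heq⟩
  obtain ⟨x, hx⟩ := Con.mk'_surjective w
  obtain ⟨xu, hxu⟩ := Con.mk'_surjective u
  obtain ⟨xv, hxv⟩ := Con.mk'_surjective v
  set y := FreeMonoid.toList x with hy_def
  have hw : trc (A ⊕ A) (extI A I) (FreeMonoid.ofList y) = w := by
    rw [hy_def, FreeMonoid.ofList_toList]; exact hx
  have hy : NoRed A I y := nored_of_irr hsym (by rw [hw]; exact h1)
  have hcyc := cyc_hyp hsym (y := y) (by rw [hw]; exact h2)
  have hmain : NoRed A I (lpow n y) := nored_lpow hirr y hy hcyc n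
  have hpow : trc (A ⊕ A) (extI A I) (FreeMonoid.ofList (lpow n y)) = w ^ n := by
    rw [ofList_lpow]
    calc trc (A ⊕ A) (extI A I) ((FreeMonoid.ofList y) ^ n)
        = (trc (A ⊕ A) (extI A I) (FreeMonoid.ofList y)) ^ n := map_pow _ _ n
      _ = w ^ n := by rw [hw]
  have heq2 : trc (A ⊕ A) (extI A I) (FreeMonoid.ofList (lpow n y)) =
      trc (A ⊕ A) (extI A I) (xu * (FreeMonoid.of a * FreeMonoid.of (Sum.swap a)) * xv) := by
    rw [hpow, heq, ← hxu, ← hxv]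
    simp only [trc, map_mul]
  have hcha := chain_of_traceCon (trc_eq_iff.mp heq2)
  have e : FreeMonoid.toList (xu * (FreeMonoid.of a * FreeMonoid.of (Sum.swap a)) * xv) =
      FreeMonoid.toList xu ++ a :: Sum.swap a :: FreeMonoid.toList xv := by
    simp [FreeMonoid.toList_mul, FreeMonoid.toList_of]
  have e0 : FreeMonoid.toList (FreeMonoid.ofList (lpow n y)) = lpow n y := rfl
  rw [e0, e] at hcha
  exact not_nored_factor _ _ a ((nored_chain hirr hsym hcha).mp hmain)
end

section
/- Every trace u ∈ M(A^{±1},I) admits unique traces p and w such that u = p w p^{-1} and w is cyclically reduced. -/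
/-! ### Auxiliary development: trace equivalence at the level of lists -/

namespace CRD

open Relation List

variable {α : Type}

/-- One commutation step on lists. -/
def CStep (J : α → α → Prop) (x y : List α) : Prop :=
  ∃ (l r : List α) (a b : α), J a b ∧ x = l ++ a :: b :: r ∧ y = l ++ b :: a :: r

/-- Trace equivalence of lists. -/
def CEq (J : α → α → Prop) : List α → List α → Prop := Relation.ReflTransGen (CStep J)

variable {J : α → α → Prop}

lemma CEq.refl (x : List α) : CEq J x x := ReflTransGen.refl

lemma CEq.trans {x y z : List α} (h : CEq J x y) (h' : CEq J y z) : CEq J x z :=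
  ReflTransGen.trans h h'

lemma cstep_symm (hsym : ∀ a b, J a b → J b a) {x y : List α}
    (h : CStep J x y) : CStep J y x := by
  obtain ⟨l, r, a, b, hab, rfl, rfl⟩ := h
  exact ⟨l, r, b, a, hsym _ _ hab, rfl, rfl⟩

lemma CEq.symm (hsym : ∀ a b, J a b → J b a) {x y : List α}
    (h : CEq J x y) : CEq J y x :=
  letI : Std.Symm (CStep J) := ⟨fun _ _ hs => cstep_symm hsym hs⟩
  (ReflTransGen.stdSymm (r := CStep J)).symm _ _ h

lemma ceq_single {l r : List α} {a b : α} (hab : J a b) :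
    CEq J (l ++ a :: b :: r) (l ++ b :: a :: r) :=
  ReflTransGen.single ⟨l, r, a, b, hab, rfl, rfl⟩

lemma cstep_append_left (u : List α) {x y : List α} (h : CStep J x y) :
    CStep J (u ++ x) (u ++ y) := by
  obtain ⟨l, r, a, b, hab, rfl, rfl⟩ := h
  exact ⟨u ++ l, r, a, b, hab, by simp, by simp⟩

lemma cstep_append_right (u : List α) {x y : List α} (h : CStep J x y) :
    CStep J (x ++ u) (y ++ u) := by
  obtain ⟨l, r, a, b, hab, rfl, rfl⟩ := h
  exact ⟨l, r ++ u, a, b, hab, by simp, by simp⟩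

lemma CEq.append_left (u : List α) {x y : List α} (h : CEq J x y) :
    CEq J (u ++ x) (u ++ y) :=
  ReflTransGen.lift (fun t => u ++ t) (fun _ _ hs => cstep_append_left u hs) _ _ h

lemma CEq.append_right (u : List α) {x y : List α} (h : CEq J x y) :
    CEq J (x ++ u) (y ++ u) :=
  ReflTransGen.lift (fun t => t ++ u) (fun _ _ hs => cstep_append_right u hs) _ _ h

lemma CEq.append {x y z w : List α} (h : CEq J x y) (h' : CEq J z w) :
    CEq J (x ++ z) (y ++ w) :=
  (h.append_right z).trans (h'.append_left y)

lemma CEq.cons (a : α) {x y : List α} (h : CEq J x y) : CEq J (a :: x) (a :: y) := by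
  simpa using h.append_left [a]

lemma cstep_length {x y : List α} (h : CStep J x y) : x.length = y.length := by
  obtain ⟨l, r, a, b, _, rfl, rfl⟩ := h; simp

lemma CEq.length {x y : List α} (h : CEq J x y) : x.length = y.length := by
  induction h with
  | refl => rfl
  | tail _ h2 ih => exact ih.trans (cstep_length h2)

lemma cstep_reverse (hsym : ∀ a b, J a b → J b a) {x y : List α} (h : CStep J x y) :
    CStep J x.reverse y.reverse := by
  obtain ⟨l, r, a, b, hab, rfl, rfl⟩ := h
  exact ⟨r.reverse, l.reverse, b, a, hsym _ _ hab, by simp, by simp⟩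

lemma CEq.reverse (hsym : ∀ a b, J a b → J b a) {x y : List α} (h : CEq J x y) :
    CEq J x.reverse y.reverse :=
  ReflTransGen.lift List.reverse (fun _ _ hs => cstep_reverse hsym hs) _ _ h

/-! ### The head predicate -/

/-- `HeadOk J c m` : some occurrence of `c` in `m` is preceded only by letters
independent of `c`; equivalently `c` can be commuted to the front. -/
def HeadOk (J : α → α → Prop) (c : α) : List α → Prop
  | [] => False
  | d :: m => d = c ∨ (J c d ∧ HeadOk J c m)

lemma headOk_cons_self (c : α) (m : List α) : HeadOk J c (c :: m) := Or.inl rfl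

lemma headOk_cons_elim {c d : α} {m : List α} (h : HeadOk J c (d :: m)) (hne : d ≠ c) :
    J c d ∧ HeadOk J c m := h.resolve_left hne

lemma headOk_append_left {c : α} {x : List α} (y : List α) (h : HeadOk J c x) :
    HeadOk J c (x ++ y) := by
  induction x with
  | nil => exact absurd h id
  | cons d x ih =>
    rcases h with h | ⟨h1, h2⟩
    · exact Or.inl h
    · exact Or.inr ⟨h1, ih h2⟩

lemma headOk_of_append_last {c e : α} {x : List α} (h : HeadOk J c (x ++ [e])) (hne : e ≠ c) :
    HeadOk J c x := by
  induction x with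
  | nil =>
    rcases h with h | ⟨_, h2⟩
    · exact absurd h hne
    · exact absurd h2 id
  | cons d x ih =>
    rcases h with h | ⟨h1, h2⟩
    · exact Or.inl h
    · exact Or.inr ⟨h1, ih h2⟩

lemma headOk_swap {a b c : α} (hab : J a b) :
    ∀ l r : List α, HeadOk J c (l ++ a :: b :: r) → HeadOk J c (l ++ b :: a :: r) := by
  intro l
  induction l with
  | nil =>
    intro r h
    rcases h with h | ⟨h1, h | ⟨h2, h3⟩⟩
    · subst h; exact Or.inr ⟨hab, Or.inl rfl⟩
    · subst h; exact Or.inl rfl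
    · exact Or.inr ⟨h2, Or.inr ⟨h1, h3⟩⟩
  | cons f l ih =>
    intro r h
    rcases h with h | ⟨h1, h2⟩
    · exact Or.inl h
    · exact Or.inr ⟨h1, ih r h2⟩

lemma headOk_cstep {c : α} {x y : List α} (h : CStep J x y) (hx : HeadOk J c x) :
    HeadOk J c y := by
  obtain ⟨l, r, a, b, hab, rfl, rfl⟩ := h
  exact headOk_swap hab l r hx

lemma headOk_ceq {c : α} {x y : List α} (h : CEq J x y) (hx : HeadOk J c x) :
    HeadOk J c y := by
  induction h with
  | refl => exact hx
  | tail _ h2 ih => exact headOk_cstep h2 ih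

lemma headOk_to_front (hsym : ∀ a b, J a b → J b a) {c : α} :
    ∀ {m : List α}, HeadOk J c m → ∃ m', CEq J m (c :: m') := by
  intro m
  induction m with
  | nil => exact fun h => absurd h id
  | cons d m ih =>
    intro h
    rcases h with h | ⟨h1, h2⟩
    · subst h; exact ⟨m, CEq.refl _⟩
    · obtain ⟨m', hm'⟩ := ih h2
      refine ⟨d :: m', (hm'.cons d).trans ?_⟩
      simpa using ceq_single (l := []) (r := m') (hsym _ _ h1)

/-! ### Deletion of the first occurrence and cancellation -/

/-- Delete the first occurrence of `c`. -/
def delF [DecidableEq α] (c : α) : List α → List α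
  | [] => []
  | d :: m => if d = c then m else d :: delF c m

lemma delF_cons [DecidableEq α] (c d : α) (m : List α) :
    delF c (d :: m) = if d = c then m else d :: delF c m := rfl

lemma delF_swap [DecidableEq α] (hirr : ∀ a, ¬ J a a) {a b : α} (hab : J a b) (c : α) :
    ∀ l r : List α, CEq J (delF c (l ++ a :: b :: r)) (delF c (l ++ b :: a :: r)) := by
  intro l
  induction l with
  | nil =>
    intro r
    simp only [List.nil_append]
    by_cases ha : a = c
    · subst ha
      have hb : ¬ b = a := fun h => hirr a (h ▸ hab)
      simp only [delF_cons, if_pos rfl, if_neg hb]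
      exact CEq.refl _
    · by_cases hb : b = c
      · subst hb
        simp only [delF_cons, if_pos rfl, if_neg ha]
        exact CEq.refl _
      · simp only [delF_cons, if_neg ha, if_neg hb]
        exact ceq_single (l := []) hab
  | cons f l ih =>
    intro r
    simp only [List.cons_append]
    rw [delF_cons, delF_cons]
    by_cases hf : f = c
    · rw [if_pos hf, if_pos hf]
      exact ceq_single hab
    · rw [if_neg hf, if_neg hf]
      exact (ih r).cons f

lemma delF_cstep [DecidableEq α] (hirr : ∀ a, ¬ J a a) {c : α} {x y : List α} (h : CStep J x y) :
    CEq J (delF c x) (delF c y) := by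
  obtain ⟨l, r, a, b, hab, rfl, rfl⟩ := h
  exact delF_swap hirr hab c l r

lemma delF_ceq [DecidableEq α] (hirr : ∀ a, ¬ J a a) {c : α} {x y : List α} (h : CEq J x y) :
    CEq J (delF c x) (delF c y) := by
  induction h with
  | refl => exact CEq.refl _
  | tail _ h2 ih => exact ih.trans (delF_cstep hirr h2)

lemma ceq_cancel_left (hirr : ∀ a, ¬ J a a) {c : α} {x y : List α}
    (h : CEq J (c :: x) (c :: y)) : CEq J x y := by
  classical
  have := delF_ceq hirr (c := c) h
  simpa [delF] using this

lemma ceq_cancel_right (hirr : ∀ a, ¬ J a a) (hsym : ∀ a b, J a b → J b a) {c : α}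
    {x y : List α} (h : CEq J (x ++ [c]) (y ++ [c])) : CEq J x y := by
  have hr := h.reverse hsym
  simp only [List.reverse_append, List.reverse_cons, List.reverse_nil, List.nil_append,
    List.singleton_append] at hr
  have := (ceq_cancel_left hirr hr).reverse hsym
  simpa using this

end CRD

/-! ### Bridge between `traceCon` and list-level trace equivalence -/

namespace CRD

open Relation

variable {α : Type} {J : α → α → Prop}

lemma traceCon_of_cstep {x y : List α} (h : CStep J x y) :
    traceCon α J (FreeMonoid.ofList x) (FreeMonoid.ofList y) := by
  obtain ⟨l, r, a, b, hab, rfl, rfl⟩ := h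
  have base : traceCon α J (FreeMonoid.of a * FreeMonoid.of b)
      (FreeMonoid.of b * FreeMonoid.of a) :=
    ConGen.Rel.of _ _ ⟨a, b, hab, rfl, rfl⟩
  have h1 := ((traceCon α J).refl (FreeMonoid.ofList l)).mul base
  have h2 := h1.mul ((traceCon α J).refl (FreeMonoid.ofList r))
  simp only [FreeMonoid.ofList_append, FreeMonoid.ofList_cons, mul_assoc] at h2 ⊢
  exact h2

lemma traceCon_of_ceq {x y : List α} (h : CEq J x y) :
    traceCon α J (FreeMonoid.ofList x) (FreeMonoid.ofList y) := by
  induction h with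
  | refl => exact (traceCon α J).refl _
  | tail _ h2 ih => exact (traceCon α J).trans ih (traceCon_of_cstep h2)

lemma ceq_of_traceCon (hsym : ∀ a b, J a b → J b a) {x y : FreeMonoid α}
    (h : traceCon α J x y) : CEq J (FreeMonoid.toList x) (FreeMonoid.toList y) := by
  let c : Con (FreeMonoid α) :=
    { r := fun u v => CEq J (FreeMonoid.toList u) (FreeMonoid.toList v)
      iseqv := ⟨fun _ => CEq.refl _, fun h => h.symm hsym, fun h h' => h.trans h'⟩
      mul' := fun h h' => by
        simpa [FreeMonoid.toList_mul] using h.append h' }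
  have hle : traceCon α J ≤ c := by
    apply Con.conGen_le.mpr
    intro u v huv
    obtain ⟨a, b, hab, rfl, rfl⟩ := huv
    show CEq J _ _
    simpa using ceq_single (l := []) (r := []) hab
  exact hle h

end CRD

/-! ### Specialization to the alphabet `A ⊕ A` -/

namespace CRD

open Relation

variable {A : Type} {I : A → A → Prop}

/-- Abbreviation for the trace of a list. -/
def t (A : Type) (I : A → A → Prop) (l : List (A ⊕ A)) : GTrace A I :=
  trc (A ⊕ A) (extI A I) (FreeMonoid.ofList l)

/-- List-level formal inverse. -/
def invL (l : List (A ⊕ A)) : List (A ⊕ A) := (l.reverse).map Sum.swap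

lemma invL_nil : invL ([] : List (A ⊕ A)) = [] := rfl

lemma invL_cons (a : A ⊕ A) (l : List (A ⊕ A)) :
    invL (a :: l) = invL l ++ [Sum.swap a] := by simp [invL]

lemma wordInv_ofList (l : List (A ⊕ A)) :
    wordInv A (FreeMonoid.ofList l) = FreeMonoid.ofList (invL l) := rfl

lemma Jsym (hsym : ∀ a b, I a b → I b a) :
    ∀ a b : A ⊕ A, extI A I a b → extI A I b a := fun _ _ h => hsym _ _ h

lemma Jirr (hirr : ∀ a, ¬ I a a) : ∀ a : A ⊕ A, ¬ extI A I a a := fun _ h => hirr _ h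

lemma elim_swap (a : A ⊕ A) : Sum.elim (@id A) id (Sum.swap a) = Sum.elim id id a := by
  cases a <;> rfl

lemma pi_ne_of_J (hirr : ∀ a, ¬ I a a) {a b : A ⊕ A} (h : extI A I a b) :
    Sum.elim (@id A) id a ≠ Sum.elim id id b := by
  intro he
  exact hirr _ (by simpa [extI, he] using h)

lemma swap_ne_self (a : A ⊕ A) : Sum.swap a ≠ a := by cases a <;> simp [Sum.swap]

lemma J_swap_left {a b : A ⊕ A} (h : extI A I a b) : extI A I (Sum.swap a) b := by
  simpa [extI, elim_swap] using h

lemma J_swap_right {a b : A ⊕ A} (h : extI A I a b) : extI A I a (Sum.swap b) := by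
  simpa [extI, elim_swap] using h

lemma t_eq_iff (hsym : ∀ a b, I a b → I b a) (u v : List (A ⊕ A)) :
    t A I u = t A I v ↔ CEq (extI A I) u v := by
  constructor
  · intro h
    have : traceCon (A ⊕ A) (extI A I) (FreeMonoid.ofList u) (FreeMonoid.ofList v) :=
      (Con.eq _).mp h
    simpa using ceq_of_traceCon (Jsym hsym) this
  · intro h
    exact (Con.eq _).mpr (traceCon_of_ceq h)

lemma t_append (u v : List (A ⊕ A)) : t A I (u ++ v) = t A I u * t A I v := by
  simp only [t, trc, FreeMonoid.ofList_append, map_mul]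

lemma t_nil : t A I ([] : List (A ⊕ A)) = 1 := by
  simp only [t, trc, FreeMonoid.ofList_nil, map_one]

lemma t_of (a : A ⊕ A) : trc (A ⊕ A) (extI A I) (FreeMonoid.of a) = t A I [a] := rfl

lemma t_surjective (X : GTrace A I) : ∃ l : List (A ⊕ A), X = t A I l := by
  obtain ⟨w, hw⟩ := Con.mk'_surjective (c := traceCon (A ⊕ A) (extI A I)) X
  exact ⟨FreeMonoid.toList w, by simp [t, trc, ← hw]⟩

end CRD

/-! ### The diamond lemma, existence, and uniqueness -/

namespace CRD

open Relation

variable {A : Type} {I : A → A → Prop}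

section Main

variable (hirr : ∀ a, ¬ I a a) (hsym : ∀ a b, I a b → I b a)

local notation "𝕁" => extI A I
local notation "σ" => Sum.swap

include hirr hsym

/-- The diamond lemma: two different peelings commute. -/
lemma diamond {a b : A ⊕ A} {x y : List (A ⊕ A)} (hab : a ≠ b)
    (h : CEq 𝕁 (a :: (x ++ [σ a])) (b :: (y ++ [σ b]))) :
    𝕁 a b ∧ ∃ z : List (A ⊕ A),
      CEq 𝕁 x (b :: (z ++ [σ b])) ∧ CEq 𝕁 y (a :: (z ++ [σ a])) := by
  have hJs := Jsym (A := A) (I := I) hsym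
  have hJi := Jirr (A := A) (I := I) hirr
  -- b is a head of the left-hand side
  have hhead : HeadOk 𝕁 b (a :: (x ++ [σ a])) :=
    headOk_ceq (h.symm hJs) (headOk_cons_self b _)
  obtain ⟨hJba, hhead'⟩ := headOk_cons_elim hhead hab
  have hJab : 𝕁 a b := hJs _ _ hJba
  -- π-distinctness facts
  have hpi : Sum.elim (@id A) id a ≠ Sum.elim id id b := pi_ne_of_J hirr hJab
  have hbsa : b ≠ σ a := by
    intro he
    apply hpi
    rw [he, elim_swap]
  have hsab : σ a ≠ b := fun he => hbsa he.symm
  have hsba : σ b ≠ a := by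
    intro he
    apply hpi
    rw [← he, elim_swap]
  have hsbsa : σ b ≠ σ a := by
    intro he
    apply hab
    have := congrArg Sum.swap he
    simpa using this.symm
  have hsbb : σ b ≠ b := swap_ne_self b
  -- b is a head of x
  have hheadx : HeadOk 𝕁 b x := headOk_of_append_last hhead' hsab
  obtain ⟨x1, hx1⟩ := headOk_to_front hJs hheadx
  -- σ b is a tail of x
  have htail : HeadOk 𝕁 (σ b) ((a :: (x ++ [σ a])).reverse) := by
    have h0 : HeadOk 𝕁 (σ b) ((b :: (y ++ [σ b])).reverse) := by
      simp only [List.reverse_cons, List.reverse_append, List.reverse_cons,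
        List.reverse_nil, List.nil_append, List.singleton_append]
      exact headOk_cons_self _ _
    exact headOk_ceq ((h.symm hJs).reverse hJs) h0
  have htail1 : HeadOk 𝕁 (σ b) (σ a :: (x.reverse ++ [a])) := by
    have : (a :: (x ++ [σ a])).reverse = σ a :: (x.reverse ++ [a]) := by simp
    rwa [this] at htail
  obtain ⟨-, htail2⟩ := headOk_cons_elim htail1 (fun he => hsbsa he.symm)
  have htailx : HeadOk 𝕁 (σ b) x.reverse := headOk_of_append_last htail2 (fun he => hsba he.symm)
  -- σ b is still a tail after commuting b to the front
  have htailx1 : HeadOk 𝕁 (σ b) x1.reverse := by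
    have h1 : HeadOk 𝕁 (σ b) ((b :: x1).reverse) :=
      headOk_ceq (hx1.reverse hJs) htailx
    have h2 : (b :: x1).reverse = x1.reverse ++ [b] := by simp
    rw [h2] at h1
    exact headOk_of_append_last h1 (fun he => hsbb he.symm)
  obtain ⟨z', hz'⟩ := headOk_to_front hJs htailx1
  -- x ≈ b :: z ++ [σ b] with z := z'.reverse
  have hx1z : CEq 𝕁 x1 (z'.reverse ++ [σ b]) := by
    have := hz'.reverse hJs
    simpa using this
  have hxz : CEq 𝕁 x (b :: (z'.reverse ++ [σ b])) := hx1.trans (hx1z.cons b)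
  refine ⟨hJab, z'.reverse, hxz, ?_⟩
  -- now identify y
  have key : CEq 𝕁 (a :: (x ++ [σ a])) (b :: ((a :: (z'.reverse ++ [σ a])) ++ [σ b])) := by
    have s1 : CEq 𝕁 (a :: (x ++ [σ a]))
        (a :: ((b :: (z'.reverse ++ [σ b])) ++ [σ a])) := by
      exact (hxz.append_right [σ a]).cons a
    have s2 : CEq 𝕁 (a :: ((b :: (z'.reverse ++ [σ b])) ++ [σ a]))
        (b :: ((a :: (z'.reverse ++ [σ b])) ++ [σ a])) := by
      have := ceq_single (J := extI A I) (l := []) (r := z'.reverse ++ [σ b] ++ [σ a]) hJab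
      simpa using this
    have s3 : CEq 𝕁 (b :: ((a :: (z'.reverse ++ [σ b])) ++ [σ a]))
        (b :: ((a :: (z'.reverse ++ [σ a])) ++ [σ b])) := by
      have hJsba : 𝕁 (σ b) (σ a) := J_swap_left (J_swap_right hJba)
      have := ceq_single (J := extI A I) (l := b :: a :: z'.reverse) (r := []) hJsba
      simpa using this
    exact (s1.trans s2).trans s3
  have hy : CEq 𝕁 (b :: (y ++ [σ b])) (b :: ((a :: (z'.reverse ++ [σ a])) ++ [σ b])) :=
    (h.symm hJs).trans key
  have hy1 : CEq 𝕁 (y ++ [σ b]) ((a :: (z'.reverse ++ [σ a])) ++ [σ b]) :=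
    ceq_cancel_left hJi hy
  exact ceq_cancel_right hJi hJs hy1

/-- Peeling off one letter exhibits a trace as non-cyclically-reduced. -/
lemma not_cycReduced_of_peel {x : List (A ⊕ A)} {b : A ⊕ A} {wq : List (A ⊕ A)}
    {w : GTrace A I}
    (hdec : t A I x = t A I (b :: wq) * w * t A I (invL (b :: wq))) :
    ¬ CycReduced A I (t A I x) := by
  intro hcyc
  apply hcyc
  refine ⟨b, t A I wq * w * t A I (invL wq), ?_⟩
  rw [t_of, t_of, hdec]
  have h1 : t A I (b :: wq) = t A I [b] * t A I wq := by
    simpa using t_append (A := A) (I := I) [b] wq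
  have h2 : t A I (invL (b :: wq)) = t A I (invL wq) * t A I [σ b] := by
    rw [invL_cons]; exact t_append _ _
  rw [h1, h2]
  simp [mul_assoc]

/-- Existence of the cyclically reduced decomposition. -/
lemma exist : ∀ (n : ℕ) (x : List (A ⊕ A)), x.length ≤ n →
    ∃ (wp : List (A ⊕ A)) (w : GTrace A I), CycReduced A I w ∧
      t A I x = t A I wp * w * t A I (invL wp) := by
  have hJs := Jsym (A := A) (I := I) hsym
  intro n
  induction n with
  | zero =>
    intro x hx
    by_cases h : CycReduced A I (t A I x)
    · exact ⟨[], t A I x, h, by simp [t_nil, invL_nil]⟩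
    · exfalso
      rw [CycReduced, not_not] at h
      obtain ⟨a, v, hv⟩ := h
      obtain ⟨y, rfl⟩ := t_surjective (A := A) (I := I) v
      have : t A I x = t A I ([a] ++ y ++ [σ a]) := by
        rw [t_append, t_append, ← t_of, ← t_of]; exact hv
      have hlen := ((t_eq_iff hsym _ _).mp this).length
      simp at hlen
      omega
  | succ n ih =>
    intro x hx
    by_cases h : CycReduced A I (t A I x)
    · exact ⟨[], t A I x, h, by simp [t_nil, invL_nil]⟩
    · rw [CycReduced, not_not] at h
      obtain ⟨a, v, hv⟩ := h
      obtain ⟨y, rfl⟩ := t_surjective (A := A) (I := I) v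
      have hxy : t A I x = t A I ([a] ++ y ++ [σ a]) := by
        rw [t_append, t_append, ← t_of, ← t_of]; exact hv
      have hlen := ((t_eq_iff hsym _ _).mp hxy).length
      simp at hlen
      have hylen : y.length ≤ n := by omega
      obtain ⟨wp, w, hcyc, hdec⟩ := ih y hylen
      refine ⟨a :: wp, w, hcyc, ?_⟩
      have h1 : t A I (a :: wp) = t A I [a] * t A I wp := by
        simpa using t_append (A := A) (I := I) [a] wp
      have h2 : t A I (invL (a :: wp)) = t A I (invL wp) * t A I [σ a] := by
        rw [invL_cons]; exact t_append _ _
      rw [hxy, t_append, t_append, hdec, h1, h2]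
      simp [mul_assoc]

/-- Uniqueness of the cyclically reduced decomposition. -/
lemma uniq : ∀ (n : ℕ) (x wp1 wp2 : List (A ⊕ A)) (w1 w2 : GTrace A I),
    x.length ≤ n → CycReduced A I w1 → CycReduced A I w2 →
    t A I x = t A I wp1 * w1 * t A I (invL wp1) →
    t A I x = t A I wp2 * w2 * t A I (invL wp2) →
    t A I wp1 = t A I wp2 ∧ w1 = w2 := by
  have hJs := Jsym (A := A) (I := I) hsym
  have hJi := Jirr (A := A) (I := I) hirr
  intro n
  induction n with
  | zero =>
    intro x wp1 wp2 w1 w2 hx hc1 hc2 hd1 hd2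
    cases wp1 with
    | nil =>
      simp only [invL_nil, t_nil, one_mul, mul_one] at hd1
      cases wp2 with
      | nil =>
        simp only [invL_nil, t_nil, one_mul, mul_one] at hd2
        exact ⟨rfl, hd1.symm.trans hd2⟩
      | cons b wq2 =>
        exfalso
        have hcx : CycReduced A I (t A I x) := by rw [hd1]; exact hc1
        exact not_cycReduced_of_peel hirr hsym hd2 hcx
    | cons a wq1 =>
      exfalso
      obtain ⟨x1, hx1⟩ := t_surjective (A := A) (I := I)
        (t A I wq1 * w1 * t A I (invL wq1))
      have e1 : t A I x = t A I (a :: (x1 ++ [σ a])) := by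
        have h1 : t A I (a :: wq1) = t A I [a] * t A I wq1 := by
          simpa using t_append (A := A) (I := I) [a] wq1
        have h2 : t A I (invL (a :: wq1)) = t A I (invL wq1) * t A I [σ a] := by
          rw [invL_cons]; exact t_append _ _
        have h3 : t A I (a :: (x1 ++ [σ a])) = t A I [a] * t A I x1 * t A I [σ a] := by
          rw [show a :: (x1 ++ [σ a]) = [a] ++ x1 ++ [σ a] by simp, t_append, t_append]
        rw [hd1, h1, h2, h3, ← hx1]
        simp [mul_assoc]
      have hlen := ((t_eq_iff hsym _ _).mp e1).length
      simp at hlen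
      omega
  | succ n ih =>
    intro x wp1 wp2 w1 w2 hx hc1 hc2 hd1 hd2
    cases wp1 with
    | nil =>
      simp only [invL_nil, t_nil, one_mul, mul_one] at hd1
      cases wp2 with
      | nil =>
        simp only [invL_nil, t_nil, one_mul, mul_one] at hd2
        exact ⟨rfl, hd1.symm.trans hd2⟩
      | cons b wq2 =>
        exfalso
        have hcx : CycReduced A I (t A I x) := by rw [hd1]; exact hc1
        exact not_cycReduced_of_peel hirr hsym hd2 hcx
    | cons a wq1 =>
      cases wp2 with
      | nil =>
        exfalso
        simp only [invL_nil, t_nil, one_mul, mul_one] at hd2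
        have hcx : CycReduced A I (t A I x) := by rw [hd2]; exact hc2
        exact not_cycReduced_of_peel hirr hsym hd1 hcx
      | cons b wq2 =>
        obtain ⟨x1, hx1⟩ := t_surjective (A := A) (I := I)
          (t A I wq1 * w1 * t A I (invL wq1))
        obtain ⟨y1, hy1⟩ := t_surjective (A := A) (I := I)
          (t A I wq2 * w2 * t A I (invL wq2))
        have tconsapp : ∀ (c : A ⊕ A) (l : List (A ⊕ A)),
            t A I (c :: l) = t A I [c] * t A I l := by
          intro c l; simpa using t_append (A := A) (I := I) [c] l
        have e1 : t A I x = t A I (a :: (x1 ++ [σ a])) := by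
          have h2 : t A I (invL (a :: wq1)) = t A I (invL wq1) * t A I [σ a] := by
            rw [invL_cons]; exact t_append _ _
          have h3 : t A I (a :: (x1 ++ [σ a])) = t A I [a] * t A I x1 * t A I [σ a] := by
            rw [show a :: (x1 ++ [σ a]) = [a] ++ x1 ++ [σ a] by simp, t_append, t_append]
          rw [hd1, tconsapp a wq1, h2, h3, ← hx1]
          simp [mul_assoc]
        have e2 : t A I x = t A I (b :: (y1 ++ [σ b])) := by
          have h2 : t A I (invL (b :: wq2)) = t A I (invL wq2) * t A I [σ b] := by
            rw [invL_cons]; exact t_append _ _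
          have h3 : t A I (b :: (y1 ++ [σ b])) = t A I [b] * t A I y1 * t A I [σ b] := by
            rw [show b :: (y1 ++ [σ b]) = [b] ++ y1 ++ [σ b] by simp, t_append, t_append]
          rw [hd2, tconsapp b wq2, h2, h3, ← hy1]
          simp [mul_assoc]
        have hceq : CEq 𝕁 (a :: (x1 ++ [σ a])) (b :: (y1 ++ [σ b])) :=
          (t_eq_iff hsym _ _).mp (e1.symm.trans e2)
        have hlx := ((t_eq_iff hsym _ _).mp e1).length
        have hly := ((t_eq_iff hsym _ _).mp e2).length
        simp at hlx hly
        by_cases hab : a = b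
        · subst hab
          have hc0 : CEq 𝕁 (x1 ++ [σ a]) (y1 ++ [σ a]) := ceq_cancel_left hJi hceq
          have hxy1 : CEq 𝕁 x1 y1 := ceq_cancel_right hJi hJs hc0
          have ht : t A I x1 = t A I y1 := (t_eq_iff hsym _ _).mpr hxy1
          obtain ⟨hw, he⟩ := ih x1 wq1 wq2 w1 w2 (by omega) hc1 hc2 hx1.symm
            (by rw [ht]; exact hy1.symm)
          refine ⟨?_, he⟩
          rw [tconsapp a wq1, hw]
          exact (tconsapp a wq2).symm
        · obtain ⟨hJab, z, hxz, hyz⟩ := diamond hirr hsym hab hceq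
          obtain ⟨s, w3, hc3, hdz⟩ := exist hirr hsym z.length z le_rfl
          have hx1d : t A I x1 = t A I (b :: s) * w3 * t A I (invL (b :: s)) := by
            have h0 : t A I x1 = t A I (b :: (z ++ [σ b])) := (t_eq_iff hsym _ _).mpr hxz
            rw [h0, show b :: (z ++ [σ b]) = [b] ++ z ++ [σ b] by simp, t_append, t_append,
              hdz, tconsapp b s, invL_cons, t_append]
            simp [mul_assoc]
          have hy1d : t A I y1 = t A I (a :: s) * w3 * t A I (invL (a :: s)) := by
            have h0 : t A I y1 = t A I (a :: (z ++ [σ a])) := (t_eq_iff hsym _ _).mpr hyz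
            rw [h0, show a :: (z ++ [σ a]) = [a] ++ z ++ [σ a] by simp, t_append, t_append,
              hdz, tconsapp a s, invL_cons, t_append]
            simp [mul_assoc]
          obtain ⟨hp1, hw1⟩ := ih x1 wq1 (b :: s) w1 w3 (by omega) hc1 hc3 hx1.symm hx1d
          obtain ⟨hp2, hw2⟩ := ih y1 wq2 (a :: s) w2 w3 (by omega) hc2 hc3 hy1.symm hy1d
          refine ⟨?_, by rw [hw1, hw2]⟩
          have swap1 : CEq 𝕁 (a :: b :: s) (b :: a :: s) := by
            simpa using ceq_single (J := extI A I) (l := []) (r := s) hJab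
          calc t A I (a :: wq1) = t A I [a] * t A I wq1 := tconsapp _ _
            _ = t A I [a] * t A I (b :: s) := by rw [hp1]
            _ = t A I (a :: b :: s) := (tconsapp _ _).symm
            _ = t A I (b :: a :: s) := (t_eq_iff hsym _ _).mpr swap1
            _ = t A I [b] * t A I (a :: s) := tconsapp _ _
            _ = t A I [b] * t A I wq2 := by rw [hp2]
            _ = t A I (b :: wq2) := (tconsapp _ _).symm

end Main

end CRD

/-- Every trace u factors uniquely as u = p w p⁻¹ with w cyclically reduced. -/
theorem cyclically_reduced_decomposition (A : Type) [Fintype A]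
    (I : A → A → Prop) (hirr : ∀ a, ¬ I a a) (hsym : ∀ a b, I a b → I b a)
    (u : GTrace A I) :
    ∃! pw : GTrace A I × GTrace A I,
      CycReduced A I pw.2 ∧
      ∃ wp : FreeMonoid (A ⊕ A), pw.1 = trc (A ⊕ A) (extI A I) wp ∧
        u = pw.1 * pw.2 * trc (A ⊕ A) (extI A I) (wordInv A wp) := by
  obtain ⟨x, hx⟩ := CRD.t_surjective (A := A) (I := I) u
  obtain ⟨wp, w, hcyc, hdec⟩ := CRD.exist hirr hsym x.length x le_rfl
  refine ⟨(CRD.t A I wp, w), ⟨hcyc, FreeMonoid.ofList wp, rfl, ?_⟩, ?_⟩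
  · rw [hx, hdec, CRD.wordInv_ofList]
    rfl
  · rintro ⟨p1, p2⟩ ⟨hc', wq, hq, he⟩
    have hq' : p1 = CRD.t A I (FreeMonoid.toList wq) := hq
    have hwinv : trc (A ⊕ A) (extI A I) (wordInv A wq) =
        CRD.t A I (CRD.invL (FreeMonoid.toList wq)) := rfl
    have he' : CRD.t A I x = CRD.t A I (FreeMonoid.toList wq) * p2 *
        CRD.t A I (CRD.invL (FreeMonoid.toList wq)) := by
      rw [← hx, he, hwinv, ← hq']
    obtain ⟨hp, hw⟩ := CRD.uniq hirr hsym x.length x (FreeMonoid.toList wq) wp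
      p2 w le_rfl hc' hcyc he' hdec
    rw [Prod.mk.injEq]
    exact ⟨hq'.trans hp, hw⟩
end

section
/- For the additive group ℤ, if the equation x₁·g₁ + x₂·g₂ + ... + x_k·g_k = g (with g₁,...,g_k, g ∈ ℤ) has a solution (x₁,...,x_k) ∈ ℕ^k, then it has a solution with x_i ≤ k·(max{|g₁|,...,|g_k|,|g|})³ for all i. -/
lemma knapsack_aux (k : ℕ) (g : Fin k → ℤ) (g₀ : ℤ) (x : Fin k → ℕ)
    (hx : ∑ t, (x t : ℤ) * g t = g₀)
    (hmin : ∀ y : Fin k → ℕ, (∑ t, (y t : ℤ) * g t = g₀) → ∑ t, x t ≤ ∑ t, y t)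
    (B : ℕ) (hB : ∀ t, (g t).natAbs ≤ B) (hB0 : g₀.natAbs ≤ B)
    (i : Fin k) (hgi : 0 < g i) (hxi : k * B ^ 3 < x i) : False := by
  classical
  have hk : 1 ≤ k := i.pos
  have hB1 : 1 ≤ B := by
    have h1 := hB i
    have h2 : (g i).natAbs ≠ 0 := Int.natAbs_ne_zero.mpr (by omega)
    omega
  have hgB : ∀ t, (g t : ℤ) ≤ B ∧ -(B : ℤ) ≤ g t := by
    intro t
    have h1 := hB t
    have h2 : |g t| ≤ (B : ℤ) := by
      rw [← Int.natCast_natAbs]; exact_mod_cast h1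
    constructor <;> [exact le_trans (le_abs_self _) h2;
      exact neg_le_of_abs_le h2]
  have hg0B : g₀ ≤ (B : ℤ) := by
    have : |g₀| ≤ (B : ℤ) := by rw [← Int.natCast_natAbs]; exact_mod_cast hB0
    exact le_trans (le_abs_self _) this
  -- step 1: find j with g j < 0 and B ≤ x j
  have hexj : ∃ j, g j < 0 ∧ B ≤ x j := by
    by_contra hcon
    push_neg at hcon
    -- each term with t ≠ i is ≥ -((B-1)*B)
    have hterm : ∀ t ∈ Finset.univ.erase i, -(((B : ℤ) - 1) * B) ≤ (x t : ℤ) * g t := by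
      intro t _
      rcases lt_or_ge (g t) 0 with hneg | hpos
      · have hxt : (x t : ℤ) ≤ (B : ℤ) - 1 := by
          have := hcon t hneg
          have : x t ≤ B - 1 := by omega
          have := (Nat.cast_le (α := ℤ)).2 this
          push_cast at this; omega
        have hgt : -(B : ℤ) ≤ g t := (hgB t).2
        have hx0 : (0 : ℤ) ≤ (x t : ℤ) := Int.natCast_nonneg _
        nlinarith
      · have hx0 : (0 : ℤ) ≤ (x t : ℤ) := Int.natCast_nonneg _
        nlinarith
    have hcard : ((Finset.univ.erase i).card : ℤ) = (k : ℤ) - 1 := by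
      rw [Finset.card_erase_of_mem (Finset.mem_univ i)]
      simp
      push_cast [Nat.cast_sub hk]
      ring
    have hsumlb : ((Finset.univ.erase i).card : ℤ) * (-(((B : ℤ) - 1) * B)) ≤
        ∑ t ∈ Finset.univ.erase i, (x t : ℤ) * g t := by
      have := Finset.card_nsmul_le_sum (Finset.univ.erase i)
        (fun t => (x t : ℤ) * g t) (-(((B : ℤ) - 1) * B)) hterm
      simpa [nsmul_eq_mul] using this
    rw [hcard] at hsumlb
    have hsplit : (x i : ℤ) * g i + ∑ t ∈ Finset.univ.erase i, (x t : ℤ) * g t = g₀ := by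
      rw [Finset.add_sum_erase Finset.univ (fun t => (x t : ℤ) * g t) (Finset.mem_univ i)]
      exact hx
    have hgi1 : (1 : ℤ) ≤ g i := hgi
    have hxiZ : (k : ℤ) * (B : ℤ) ^ 3 < (x i : ℤ) := by exact_mod_cast hxi
    have hx0 : (0 : ℤ) ≤ (x i : ℤ) := Int.natCast_nonneg _
    have hkZ : (1 : ℤ) ≤ (k : ℤ) := by exact_mod_cast hk
    have hBZ : (1 : ℤ) ≤ (B : ℤ) := by exact_mod_cast hB1
    have h1 : (x i : ℤ) ≤ (x i : ℤ) * g i := le_mul_of_one_le_right hx0 hgi1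
    have h2 : (x i : ℤ) * g i ≤ g₀ + ((k : ℤ) - 1) * (((B : ℤ) - 1) * B) := by linarith
    have hB0' : (0 : ℤ) ≤ (B : ℤ) := by linarith
    have hk0' : (0 : ℤ) ≤ (k : ℤ) := by linarith
    have e1 : (0 : ℤ) ≤ (k : ℤ) * B * B * ((B : ℤ) - 1) :=
      mul_nonneg (mul_nonneg (mul_nonneg hk0' hB0') hB0') (by linarith)
    have e2 : (0 : ℤ) ≤ ((k : ℤ) - 1) * B := mul_nonneg (by linarith) hB0'
    have e3 : (0 : ℤ) ≤ ((B : ℤ) - 1) * B := mul_nonneg (by linarith) hB0' 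
    have key : (k : ℤ) * (B : ℤ) ^ 3 =
        (B : ℤ) + ((k : ℤ) - 1) * (((B : ℤ) - 1) * B) +
          ((k : ℤ) * B * B * ((B : ℤ) - 1) + ((k : ℤ) - 1) * B + ((B : ℤ) - 1) * B) := by
      ring
    linarith
  obtain ⟨j, hgj, hxj⟩ := hexj
  have hij : i ≠ j := by intro h; rw [h] at hgi; omega
  set a := (g j).natAbs with ha
  set b := (g i).natAbs with hb
  have ha1 : 1 ≤ a := by
    have : g j ≠ 0 := by omega
    omega
  have haB : a ≤ B := hB j
  have hbB : b ≤ B := hB i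
  have hBle : B ≤ k * B ^ 3 := by
    calc B = 1 * B := (one_mul B).symm
    _ ≤ k * B ^ 3 := Nat.mul_le_mul hk (Nat.le_self_pow (by norm_num) B)
  have hai : a ≤ x i := by omega
  have hbj : b ≤ x j := by omega
  have haZ : (a : ℤ) = -g j := by
    show ((g j).natAbs : ℤ) = -g j
    rw [Int.natCast_natAbs, abs_of_neg hgj]
  have hbZ : (b : ℤ) = g i := by
    show ((g i).natAbs : ℤ) = g i
    rw [Int.natCast_natAbs, abs_of_pos hgi]
  set y : Fin k → ℕ := Function.update (Function.update x i (x i - a)) j (x j - b) with hy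
  have hyi : y i = x i - a := by
    rw [hy, Function.update_of_ne hij, Function.update_self]
  have hyj : y j = x j - b := by rw [hy, Function.update_self]
  have hyt : ∀ t, t ≠ i → t ≠ j → y t = x t := by
    intro t h1 h2
    rw [hy, Function.update_of_ne h2, Function.update_of_ne h1]
  -- difference of sums vanishes off {i, j}
  have hdiff : ∀ (f : Fin k → ℤ),
      ∑ t, ((y t : ℤ) - (x t : ℤ)) * f t =
        ((y i : ℤ) - x i) * f i + ((y j : ℤ) - x j) * f j := by
    intro f
    rw [← Finset.sum_subset (Finset.subset_univ ({i, j} : Finset (Fin k)))]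
    · rw [Finset.sum_pair hij]
    · intro t _ ht
      simp only [Finset.mem_insert, Finset.mem_singleton] at ht
      push_neg at ht
      rw [hyt t ht.1 ht.2]
      ring
  have hyiZ : (y i : ℤ) = (x i : ℤ) - a := by
    rw [hyi, Nat.cast_sub hai]
  have hyjZ : (y j : ℤ) = (x j : ℤ) - b := by
    rw [hyj, Nat.cast_sub hbj]
  have hsumy : ∑ t, (y t : ℤ) * g t = g₀ := by
    have h1 : ∑ t, (y t : ℤ) * g t - ∑ t, (x t : ℤ) * g t = 0 := by
      rw [← Finset.sum_sub_distrib]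
      have : ∀ t, (y t : ℤ) * g t - (x t : ℤ) * g t = ((y t : ℤ) - x t) * g t := by
        intro t; ring
      simp_rw [this]
      rw [hdiff g, hyiZ, hyjZ, haZ, hbZ]
      ring
    omega
  have hlt : ∑ t, y t < ∑ t, x t := by
    have h1 : (∑ t, (y t : ℤ)) - ∑ t, (x t : ℤ) = -(a : ℤ) - b := by
      rw [← Finset.sum_sub_distrib]
      have := hdiff 1
      simp only [Pi.one_apply, mul_one] at this
      rw [this, hyiZ, hyjZ]; ring
    have h2 : ((∑ t, y t : ℕ) : ℤ) < ((∑ t, x t : ℕ) : ℤ) := by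
      push_cast
      have haZ1 : (1 : ℤ) ≤ (a : ℤ) := by exact_mod_cast ha1
      have hbZ0 : (0 : ℤ) ≤ (b : ℤ) := Int.natCast_nonneg _
      omega
    exact_mod_cast h2
  exact absurd (hmin y hsumy) (by omega)

/-- If a knapsack instance over ℤ has a solution in ℕ^k, then it has one with
all entries bounded by k·(max of the absolute values of the inputs)³. -/
theorem integer_knapsack_small_solution (k : ℕ) (g : Fin k → ℤ) (g₀ : ℤ)
    (h : ∃ x : Fin k → ℕ, ∑ i, (x i : ℤ) * g i = g₀) :
    ∃ x : Fin k → ℕ, (∑ i, (x i : ℤ) * g i = g₀) ∧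
      ∀ i, x i ≤ k * ((Finset.univ.sup fun j => (g j).natAbs) ⊔ g₀.natAbs) ^ 3 := by
  classical
  set B := (Finset.univ.sup fun j => (g j).natAbs) ⊔ g₀.natAbs with hBdef
  have hB : ∀ t, (g t).natAbs ≤ B := by
    intro t
    rw [hBdef]
    exact le_trans (Finset.le_sup (f := fun j => (g j).natAbs) (Finset.mem_univ t)) le_sup_left
  have hB0 : g₀.natAbs ≤ B := le_sup_right
  have hP : ∃ n, ∃ x : Fin k → ℕ, (∑ t, (x t : ℤ) * g t = g₀) ∧ ∑ t, x t = n := by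
    obtain ⟨x, hx⟩ := h
    exact ⟨∑ t, x t, x, hx, rfl⟩
  obtain ⟨x, hx, hxn⟩ := Nat.find_spec hP
  have hmin : ∀ y : Fin k → ℕ, (∑ t, (y t : ℤ) * g t = g₀) → ∑ t, x t ≤ ∑ t, y t := by
    intro y hy
    rw [hxn]
    exact Nat.find_min' hP ⟨y, hy, rfl⟩
  refine ⟨x, hx, fun i => ?_⟩
  by_contra hlt
  push_neg at hlt
  rcases lt_trichotomy (g i) 0 with hneg | hzero | hpos
  · -- negate everything
    apply knapsack_aux k (fun t => -g t) (-g₀) x ?_ ?_ B ?_ ?_ i (by show (0 : ℤ) < -g i; omega) hlt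
    · simp only [mul_neg]
      rw [Finset.sum_neg_distrib, hx]
    · intro y hy
      apply hmin
      simp only [mul_neg] at hy
      rw [Finset.sum_neg_distrib] at hy
      linarith
    · intro t; simpa using hB t
    · simpa using hB0
  · -- g i = 0 : zero out x i
    set y : Fin k → ℕ := Function.update x i 0 with hy
    have hsumy : ∑ t, (y t : ℤ) * g t = g₀ := by
      rw [← hx]
      apply Finset.sum_congr rfl
      intro t _
      by_cases ht : t = i
      · subst ht; rw [hzero]; ring
      · rw [hy, Function.update_of_ne ht]
    have hylt : ∑ t, y t < ∑ t, x t := by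
      have h1 : ∑ t, y t = ∑ t ∈ Finset.univ.erase i, x t := by
        rw [hy, Finset.sum_update_of_mem (Finset.mem_univ i), Finset.erase_eq]
        simp
      have h2 : ∑ t ∈ Finset.univ.erase i, x t + x i = ∑ t, x t :=
        Finset.sum_erase_add _ _ (Finset.mem_univ i)
      omega
    exact absurd (hmin y hsumy) (by omega)
  · exact knapsack_aux k g g₀ x hx hmin B hB hB0 i hpos hlt
end
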